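/- arXiv:1808.06734 — 4 statements merged into one kernel-verified Lean document; each statement's English description precedes it below -/
import Mathlib

section
/- Let G_1 and G_2 be finite connected graphs such that acop(G_2) cops can win the fully active game on G_2 regardless of their initial positions. Then acop(G_1 □ G_2) ≤ acop(G_1) + acop(G_2). -/
open SimpleGraph

universe u v

variable {V : Type u}

/-- A configuration in the game of Cops and Robbers with `n` cops:
the positions of the cops together with the position of the robber. -/
abbrev CRConfig (V : Type u) (n : ℕ) : Type u := (Fin n → V) × V

/-- A strategy for `n` cops in the *fully active* game on `G`:
initial positions, together with a move function (which may depend on the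
full history of the play and on the current configuration) under which
every cop moves to an adjacent vertex on every turn. -/
structure ActiveCopStrategy (G : SimpleGraph V) (n : ℕ) where
  init : Fin n → V
  move : List (CRConfig V n) → CRConfig V n → Fin n → V
  move_adj : ∀ h c i, G.Adj (c.1 i) (move h c i)

/-- A strategy for the robber in the *fully active* game on `G`:
an initial position (chosen knowing the cops' initial positions),
together with a move function (which may depend on the full history and on
the current configuration, whose first component records the cops' newly
chosen positions) under which the robber moves to an adjacent vertex on
every turn. -/
structure ActiveRobberStrategy (G : SimpleGraph V) (n : ℕ) where
  init : (Fin n → V) → V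
  move : List (CRConfig V n) → CRConfig V n → V
  move_adj : ∀ h c, G.Adj c.2 (move h c)

/-- A strategy for `n` cops in the *passive* (classical) game on `G`:
on her turn, each cop either moves to an adjacent vertex or stays put. -/
structure PassiveCopStrategy (G : SimpleGraph V) (n : ℕ) where
  init : Fin n → V
  move : List (CRConfig V n) → CRConfig V n → Fin n → V
  move_adj : ∀ h c i, G.Adj (c.1 i) (move h c i) ∨ move h c i = c.1 i

/-- A strategy for the robber in the *passive* (classical) game on `G`:
on his turn the robber either moves to an adjacent vertex or stays put. -/
structure PassiveRobberStrategy (G : SimpleGraph V) (n : ℕ) where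
  init : (Fin n → V) → V
  move : List (CRConfig V n) → CRConfig V n → V
  move_adj : ∀ h c, G.Adj c.2 (move h c) ∨ move h c = c.2

/-- The play determined by (the data of) a cop strategy and a robber strategy:
`crPlay n cinit rinit cmove rmove t` is the pair consisting of the history of
configurations strictly before round `t` and the configuration after round `t`
(a round consists of a cop move followed by a robber move; round `0` is the
initial placement, cops first, then the robber). -/
def crPlay (n : ℕ) (cinit : Fin n → V) (rinit : (Fin n → V) → V)
    (cmove : List (CRConfig V n) → CRConfig V n → Fin n → V)
    (rmove : List (CRConfig V n) → CRConfig V n → V) :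
    ℕ → List (CRConfig V n) × CRConfig V n
  | 0 => ([], (cinit, rinit cinit))
  | t + 1 =>
      let p := crPlay n cinit rinit cmove rmove t
      let c' := cmove p.1 p.2
      (p.1 ++ [p.2], (c', rmove p.1 (c', p.2.2)))

/-- The cops capture the robber in the given play: at some point of the play
(either right after a robber move, or right after a cop move) some cop
occupies the robber's vertex. -/
def crCaptures (n : ℕ) (cinit : Fin n → V) (rinit : (Fin n → V) → V)
    (cmove : List (CRConfig V n) → CRConfig V n → Fin n → V)
    (rmove : List (CRConfig V n) → CRConfig V n → V) : Prop :=
  ∃ t : ℕ,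
    (∃ i, (crPlay n cinit rinit cmove rmove t).2.1 i
        = (crPlay n cinit rinit cmove rmove t).2.2) ∨
    (∃ i, cmove (crPlay n cinit rinit cmove rmove t).1
            (crPlay n cinit rinit cmove rmove t).2 i
        = (crPlay n cinit rinit cmove rmove t).2.2)

/-- In the fully active game, the given cop strategy captures the robber
playing the given strategy. -/
def ActiveCapture {G : SimpleGraph V} {n : ℕ} (cs : ActiveCopStrategy G n)
    (rs : ActiveRobberStrategy G n) : Prop :=
  crCaptures n cs.init rs.init cs.move rs.move

/-- In the passive game, the given cop strategy captures the robber
playing the given strategy. -/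
def PassiveCapture {G : SimpleGraph V} {n : ℕ} (cs : PassiveCopStrategy G n)
    (rs : PassiveRobberStrategy G n) : Prop :=
  crCaptures n cs.init rs.init cs.move rs.move

/-- `n` cops have a winning strategy in the fully active game on `G`. -/
def ActiveCopsWin (G : SimpleGraph V) (n : ℕ) : Prop :=
  ∃ cs : ActiveCopStrategy G n, ∀ rs : ActiveRobberStrategy G n, ActiveCapture cs rs

/-- `n` cops have a winning strategy in the passive (classical) game on `G`. -/
def PassiveCopsWin (G : SimpleGraph V) (n : ℕ) : Prop :=
  ∃ cs : PassiveCopStrategy G n, ∀ rs : PassiveRobberStrategy G n, PassiveCapture cs rs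

/-- The fully active cop number of `G`. -/
noncomputable def acop (G : SimpleGraph V) : ℕ := sInf {n | ActiveCopsWin G n}

/-- The (classical, passive) cop number of `G`. -/
noncomputable def copNumber (G : SimpleGraph V) : ℕ := sInf {n | PassiveCopsWin G n}
/-- `n` cops win the fully active game on `G` starting from the initial
positions `init`. -/
def ActiveCopsWinFrom (G : SimpleGraph V) (n : ℕ) (init : Fin n → V) : Prop :=
  ∃ cs : ActiveCopStrategy G n, cs.init = init ∧
    ∀ rs : ActiveRobberStrategy G n, ActiveCapture cs rs

namespace ACopAux

open SimpleGraph

noncomputable section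
open Classical

variable {α : Type u} {β : Type u}

/-- Every vertex has a neighbour. -/
def HasNbr (G : SimpleGraph α) : Prop := ∀ a, ∃ b, G.Adj a b

lemma hasNbr_of_connected_nontrivial (G : SimpleGraph α) (hc : G.Connected)
    (hn : Nontrivial α) : HasNbr G := by
  intro a
  obtain ⟨b, hb⟩ := exists_ne a
  obtain ⟨p, hp⟩ := (hc a b).exists_walk_length_eq_dist
  cases p with
  | nil => exact absurd rfl hb.symm
  | cons hadj q => exact ⟨_, hadj⟩

/-- A choice of neighbour. -/
def nbr (G : SimpleGraph α) (hG : HasNbr G) (a : α) : α := (hG a).choose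

lemma nbr_adj (G : SimpleGraph α) (hG : HasNbr G) (a : α) : G.Adj a (nbr G hG a) :=
  (hG a).choose_spec

lemma exists_adj_dist (G : SimpleGraph α) (hc : G.Connected) {c u : α} (h : c ≠ u) :
    ∃ x, G.Adj c x ∧ G.dist x u + 1 = G.dist c u := by
  obtain ⟨p, hp⟩ := (hc c u).exists_walk_length_eq_dist
  cases p with
  | nil => exact absurd rfl h
  | @cons _ x _ hadj q =>
      refine ⟨x, hadj, ?_⟩
      have h1 : G.dist x u ≤ q.length := SimpleGraph.dist_le q
      have h2 : G.dist c u ≤ 1 + G.dist x u := by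
        calc G.dist c u ≤ G.dist c x + G.dist x u := hc.dist_triangle
        _ ≤ 1 + G.dist x u := by
            have : G.dist c x ≤ 1 := by
              have := SimpleGraph.dist_le (SimpleGraph.Walk.cons hadj SimpleGraph.Walk.nil)
              simpa using this
            omega
      simp only [SimpleGraph.Walk.length_cons] at hp
      omega

/-- One chase step: move one step closer to `u` (or step off if already there). -/
def chaseStep (G : SimpleGraph α) (hc : G.Connected) (hG : HasNbr G) (c u : α) : α :=
  if h : c = u then nbr G hG c else (exists_adj_dist G hc h).choose

lemma chaseStep_adj (G : SimpleGraph α) (hc : G.Connected) (hG : HasNbr G) (c u : α) :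
    G.Adj c (chaseStep G hc hG c u) := by
  unfold chaseStep
  split
  · exact nbr_adj G hG c
  · exact (exists_adj_dist G hc (by assumption)).choose_spec.1

lemma chaseStep_dist (G : SimpleGraph α) (hc : G.Connected) (hG : HasNbr G) {c u : α}
    (h : c ≠ u) : G.dist (chaseStep G hc hG c u) u + 1 = G.dist c u := by
  unfold chaseStep
  rw [dif_neg h]
  exact (exists_adj_dist G hc h).choose_spec.2

lemma adj_dist_le_one (G : SimpleGraph α) {a b : α} (h : G.Adj a b) : G.dist a b ≤ 1 := by
  have := SimpleGraph.dist_le (SimpleGraph.Walk.cons h SimpleGraph.Walk.nil)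
  simpa using this

end
end ACopAux
namespace ACopAux
noncomputable section
open Classical SimpleGraph

variable {V : Type u}

lemma crPlay_hist_length (n : ℕ) (ci : Fin n → V) (ri : (Fin n → V) → V)
    (cm : List (CRConfig V n) → CRConfig V n → Fin n → V)
    (rm : List (CRConfig V n) → CRConfig V n → V) :
    ∀ t, (crPlay n ci ri cm rm t).1.length = t := by
  intro t
  induction t with
  | zero => rfl
  | succ t ih => simp [crPlay, ih]

lemma crPlay_hist_map (n : ℕ) (ci : Fin n → V) (ri : (Fin n → V) → V)
    (cm : List (CRConfig V n) → CRConfig V n → Fin n → V)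
    (rm : List (CRConfig V n) → CRConfig V n → V) :
    ∀ t, (crPlay n ci ri cm rm t).1.map (fun c => c.2)
      = (List.range t).map (fun j => (crPlay n ci ri cm rm j).2.2) := by
  intro t
  induction t with
  | zero => rfl
  | succ t ih =>
      rw [List.range_succ]
      simp only [crPlay, List.map_append, ih, List.map_cons, List.map_nil]

variable {α : Type u} {β : Type u}

/-- The mode of the team state machine. -/
inductive TMode (α β : Type u) (m : ℕ) : Type u
  | phase1 (c : β)
  | phase2a
  | phase2b (h : List (CRConfig α m)) (cur : CRConfig α m)

/-- The state of the team state machine. -/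
structure TSt (α β : Type u) (m : ℕ) : Type u where
  cops : Fin m → α × β
  prev : Option (α × β)
  mode : TMode α β m

variable {A : SimpleGraph α} {B : SimpleGraph β} {m : ℕ}

/-- Guarded move: move to `y` if adjacent in the box product, otherwise use a default
neighbour in the first coordinate. -/
def mv (hnA : HasNbr A) (B : SimpleGraph β) (x y : α × β) : α × β :=
  if (A.boxProd B).Adj x y then y else (nbr A hnA x.1, x.2)

lemma mv_adj (hnA : HasNbr A) (B : SimpleGraph β) (x y : α × β) :
    (A.boxProd B).Adj x (mv hnA B x y) := by
  unfold mv
  split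
  · assumption
  · exact SimpleGraph.boxProd_adj.2 (Or.inl ⟨nbr_adj A hnA x.1, rfl⟩)

lemma mv_eq (hnA : HasNbr A) (B : SimpleGraph β) {x y : α × β}
    (h : (A.boxProd B).Adj x y) : mv hnA B x y = y := if_pos h

section CoreDef

variable (S : ActiveCopStrategy A m) (hcB : B.Connected) (hnA : HasNbr A) (hnB : HasNbr B)

/-- Target positions for the cops. -/
def ttarget (s : TSt α β m) (v : α × β) (i : Fin m) : α × β :=
  match s.mode, s.prev with
  | .phase1 c, _ => ((s.cops i).1, chaseStep B hcB hnB c v.2)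
  | .phase2a, none => s.cops i
  | .phase2a, some p =>
      if v.1 = p.1 then ((s.cops i).1, v.2)
      else (S.move [] (S.init, v.1) i, (s.cops i).2)
  | .phase2b hh cur, none => s.cops i
  | .phase2b hh cur, some p =>
      if v.1 = p.1 then ((s.cops i).1, v.2)
      else (S.move (hh ++ [cur]) (S.move hh cur, v.1) i, (s.cops i).2)

/-- New mode. -/
def tmodef (s : TSt α β m) (v : α × β) : TMode α β m :=
  match s.mode, s.prev with
  | .phase1 c, _ =>
      if chaseStep B hcB hnB c v.2 = v.2 then .phase2a
      else .phase1 (chaseStep B hcB hnB c v.2)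
  | .phase2a, none => .phase2a
  | .phase2a, some p => if v.1 = p.1 then .phase2a else .phase2b [] (S.init, v.1)
  | .phase2b hh cur, none => .phase2b hh cur
  | .phase2b hh cur, some p =>
      if v.1 = p.1 then .phase2b hh cur
      else .phase2b (hh ++ [cur]) (S.move hh cur, v.1)

/-- One step of the team state machine, processing the robber's new position `v`. -/
def tstep (s : TSt α β m) (v : α × β) : TSt α β m :=
  ⟨fun i => mv hnA B (s.cops i) (ttarget S hcB hnB s v i), some v, tmodef S hcB hnB s v⟩

/-- Initial state. -/
def tinit (b0 : β) : TSt α β m := ⟨fun i => (S.init i, b0), none, .phase1 b0⟩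

/-- Run of the machine on a robber-position prefix. -/
def trun (b0 : β) (l : List (α × β)) : TSt α β m :=
  l.foldl (tstep S hcB hnA hnB) (tinit S b0)

lemma trun_concat (b0 : β) (l : List (α × β)) (v : α × β) :
    trun S hcB hnA hnB b0 (l ++ [v]) = tstep S hcB hnA hnB (trun S hcB hnA hnB b0 l) v := by
  unfold trun
  rw [List.foldl_append]
  rfl

lemma trun_adj (b0 : β) (l : List (α × β)) (v : α × β) (i : Fin m) :
    (A.boxProd B).Adj ((trun S hcB hnA hnB b0 l).cops i)
      ((trun S hcB hnA hnB b0 (l ++ [v])).cops i) := by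
  rw [trun_concat]
  exact mv_adj hnA B _ _

end CoreDef
end
end ACopAux
namespace ACopAux
noncomputable section
open Classical SimpleGraph

variable {α : Type u} {β : Type u}
variable {A : SimpleGraph α} {B : SimpleGraph β} {m : ℕ}
variable (S : ActiveCopStrategy A m) (hcB : B.Connected) (hnA : HasNbr A) (hnB : HasNbr B)

lemma tstep_phase1 (s : TSt α β m) (v : α × β) (c : β) (hm : s.mode = .phase1 c) :
    tstep S hcB hnA hnB s v =
      ⟨fun i => mv hnA B (s.cops i) ((s.cops i).1, chaseStep B hcB hnB c v.2), some v,
        if chaseStep B hcB hnB c v.2 = v.2 then .phase2a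
        else .phase1 (chaseStep B hcB hnB c v.2)⟩ := by
  cases s with
  | mk cops prev mode =>
      cases hm
      rfl

lemma tstep_phase2a (s : TSt α β m) (v p : α × β) (hm : s.mode = .phase2a)
    (hp : s.prev = some p) :
    tstep S hcB hnA hnB s v =
      ⟨fun i => mv hnA B (s.cops i)
          (if v.1 = p.1 then ((s.cops i).1, v.2) else (S.move [] (S.init, v.1) i, (s.cops i).2)),
        some v,
        if v.1 = p.1 then .phase2a else .phase2b [] (S.init, v.1)⟩ := by
  cases s with
  | mk cops prev mode =>
      cases hm
      cases hp
      rfl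

lemma tstep_phase2b (s : TSt α β m) (v p : α × β) (hh : List (CRConfig α m))
    (cur : CRConfig α m) (hm : s.mode = .phase2b hh cur) (hp : s.prev = some p) :
    tstep S hcB hnA hnB s v =
      ⟨fun i => mv hnA B (s.cops i)
          (if v.1 = p.1 then ((s.cops i).1, v.2)
           else (S.move (hh ++ [cur]) (S.move hh cur, v.1) i, (s.cops i).2)),
        some v,
        if v.1 = p.1 then .phase2b hh cur
        else .phase2b (hh ++ [cur]) (S.move hh cur, v.1)⟩ := by
  cases s with
  | mk cops prev mode =>
      cases hm
      cases hp
      rfl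

section Run

variable (b0 : β) (w : ℕ → α × β)

/-- The state sequence along a robber trajectory. -/
def sseq (t : ℕ) : TSt α β m := trun S hcB hnA hnB b0 ((List.range t).map w)

lemma sseq_zero : sseq S hcB hnA hnB b0 w 0 = tinit S b0 := rfl

lemma sseq_succ (t : ℕ) :
    sseq S hcB hnA hnB b0 w (t + 1)
      = tstep S hcB hnA hnB (sseq S hcB hnA hnB b0 w t) (w t) := by
  unfold sseq
  rw [List.range_succ, List.map_append]
  exact trun_concat S hcB hnA hnB b0 _ _

lemma sseq_prev (t : ℕ) : (sseq S hcB hnA hnB b0 w (t + 1)).prev = some (w t) := by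
  rw [sseq_succ]
  rfl

lemma wcases (hw : ∀ t, (A.boxProd B).Adj (w t) (w (t + 1))) (t : ℕ) :
    ((w (t+1)).1 = (w t).1 ∧ B.Adj (w t).2 (w (t+1)).2) ∨
    ((w (t+1)).2 = (w t).2 ∧ A.Adj (w t).1 (w (t+1)).1) := by
  rcases SimpleGraph.boxProd_adj.1 (hw t) with ⟨h1, h2⟩ | ⟨h1, h2⟩
  · exact Or.inr ⟨h2.symm, h1⟩
  · exact Or.inl ⟨h2.symm, h1⟩

lemma wfst (hw : ∀ t, (A.boxProd B).Adj (w t) (w (t + 1))) (t : ℕ) (hQ : (w (t+1)).1 ≠ (w t).1) :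
    (w (t+1)).2 = (w t).2 ∧ A.Adj (w t).1 (w (t+1)).1 := by
  rcases wcases w hw t with ⟨h1, _⟩ | h
  · exact absurd h1 hQ
  · exact h

lemma wsnd (hw : ∀ t, (A.boxProd B).Adj (w t) (w (t + 1))) (t : ℕ) (hQ : (w (t+1)).1 = (w t).1) :
    B.Adj (w t).2 (w (t+1)).2 := by
  rcases wcases w hw t with ⟨_, h2⟩ | ⟨_, h2⟩
  · exact h2
  · exact absurd hQ.symm h2.ne

lemma phase1_cops : ∀ t c, (sseq S hcB hnA hnB b0 w t).mode = .phase1 c →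
    (sseq S hcB hnA hnB b0 w t).cops = fun i => (S.init i, c) := by
  intro t
  induction t with
  | zero =>
      intro c hc
      have hb : b0 = c := by
        have h0 : (sseq S hcB hnA hnB b0 w 0).mode = .phase1 b0 := rfl
        rw [h0] at hc
        cases hc
        rfl
      subst hb
      rfl
  | succ t ih =>
      intro c hc
      rw [sseq_succ] at hc ⊢
      match hmode : (sseq S hcB hnA hnB b0 w t).mode with
      | .phase1 c0 =>
          rw [tstep_phase1 S hcB hnA hnB _ (w t) c0 hmode] at hc ⊢
          dsimp only at hc ⊢
          split at hc
          · exact absurd hc (by simp)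
          · have hcc : chaseStep B hcB hnB c0 (w t).2 = c := by
              cases hc; rfl
            have hcops := ih c0 hmode
            funext i
            rw [hcops]
            have hadj : (A.boxProd B).Adj (S.init i, c0)
                ((S.init i, c0).1, chaseStep B hcB hnB c0 (w t).2) :=
              SimpleGraph.boxProd_adj.2 (Or.inr ⟨chaseStep_adj B hcB hnB c0 (w t).2, rfl⟩)
            rw [mv_eq hnA B hadj, hcc]
      | .phase2a =>
          exfalso
          match t, hmode with
          | 0, hmode => rw [sseq_zero] at hmode; cases hmode
          | (t'+1), hmode =>
              match hprev : (sseq S hcB hnA hnB b0 w (t'+1)).prev with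
              | none => rw [sseq_prev] at hprev; cases hprev
              | some p =>
                  rw [tstep_phase2a S hcB hnA hnB _ _ p hmode hprev] at hc
                  dsimp only at hc
                  split at hc <;> cases hc
      | .phase2b hh cur =>
          exfalso
          match t, hmode with
          | 0, hmode => rw [sseq_zero] at hmode; cases hmode
          | (t'+1), hmode =>
              match hprev : (sseq S hcB hnA hnB b0 w (t'+1)).prev with
              | none => rw [sseq_prev] at hprev; cases hprev
              | some p =>
                  rw [tstep_phase2b S hcB hnA hnB _ _ p hh cur hmode hprev] at hc
                  dsimp only at hc
                  split at hc <;> cases hc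

end Run
end
end ACopAux
namespace ACopAux
noncomputable section
open Classical SimpleGraph

variable {α : Type u} {β : Type u}
variable {A : SimpleGraph α} {B : SimpleGraph β} {m : ℕ}
variable (S : ActiveCopStrategy A m) (hcB : B.Connected) (hnA : HasNbr A) (hnB : HasNbr B)
variable (b0 : β) (w : ℕ → α × β)

lemma exists_nonphase1
    (hw : ∀ t, (A.boxProd B).Adj (w t) (w (t + 1)))
    (hinf : ∀ N, ∃ t, N ≤ t ∧ (w (t + 1)).1 ≠ (w t).1) :
    ∃ T, ∀ c, (sseq S hcB hnA hnB b0 w T).mode ≠ .phase1 c := by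
  by_contra hcon
  push_neg at hcon
  -- at every time the machine is in phase 1
  have hph : ∀ t, ∃ c, (sseq S hcB hnA hnB b0 w t).mode = .phase1 c := hcon
  set ct : ℕ → β := fun t => (hph t).choose with hct
  have hctm : ∀ t, (sseq S hcB hnA hnB b0 w t).mode = .phase1 (ct t) :=
    fun t => (hph t).choose_spec
  have key : ∀ t, ct (t+1) = chaseStep B hcB hnB (ct t) ((w t).2) ∧
      chaseStep B hcB hnB (ct t) ((w t).2) ≠ (w t).2 := by
    intro t
    have h1 := hctm (t+1)
    rw [sseq_succ, tstep_phase1 S hcB hnA hnB _ (w t) (ct t) (hctm t)] at h1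
    dsimp only at h1
    split at h1
    · cases h1
    · constructor
      · injection h1 with h1
        exact h1.symm
      · assumption
  set e : ℕ → ℕ := fun t => B.dist (ct (t+1)) ((w t).2) with he
  have epos : ∀ t, 1 ≤ e t := by
    intro t
    apply hcB.pos_dist_of_ne
    rw [(key t).1]
    exact (key t).2
  have estep : ∀ t, (e (t+1) ≤ e t) ∧ ((w (t+1)).1 ≠ (w t).1 → e (t+1) < e t) := by
    intro t
    have hrec : e (t+1) = B.dist (chaseStep B hcB hnB (ct (t+1)) ((w (t+1)).2)) ((w (t+1)).2) := by
      rw [he]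
      dsimp only
      rw [(key (t+1)).1]
    rcases wcases w hw t with ⟨hfst, hBadj⟩ | ⟨hsnd, _⟩
    · -- snd-move
      constructor
      · by_cases hcu : ct (t+1) = (w (t+1)).2
        · -- already there, steps off: distance stays 1, and e t = 1 as well
          have h1 : e (t+1) ≤ 1 := by
            rw [hrec]
            unfold chaseStep
            rw [dif_pos hcu]
            rw [← hcu]
            exact adj_dist_le_one B (nbr_adj B hnB (ct (t+1))).symm
          have h2 : 1 ≤ e t := epos t
          -- also need e t ≥ 1; e t = dist (ct (t+1)) ((w t).2)
          omega
        · have h3 := chaseStep_dist B hcB hnB hcu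
          have h4 : B.dist (ct (t+1)) ((w (t+1)).2)
              ≤ B.dist (ct (t+1)) ((w t).2) + B.dist ((w t).2) ((w (t+1)).2) :=
            hcB.dist_triangle
          have h5 : B.dist ((w t).2) ((w (t+1)).2) ≤ 1 := adj_dist_le_one B hBadj
          have hb : e t = B.dist (ct (t+1)) ((w t).2) := rfl
          rw [hrec]
          omega
      · intro hQ
        exact absurd hfst hQ
    · -- fst-move : distance strictly decreases
      have hne : ct (t+1) ≠ (w (t+1)).2 := by
        rw [hsnd, (key t).1]
        exact (key t).2
      have h3 := chaseStep_dist B hcB hnB hne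
      have h4 : B.dist (ct (t+1)) ((w (t+1)).2) = e t := by
        rw [he]; dsimp only; rw [hsnd]
      constructor
      · rw [hrec]; omega
      · intro _; rw [hrec]; omega
  have emono : ∀ t t', t ≤ t' → e t' ≤ e t := by
    intro t t' h
    induction t' with
    | zero => cases h; omega
    | succ t'' ih =>
        rcases Nat.lt_or_ge t (t''+1) with hlt | hge
        · have := ih (by omega)
          have := (estep t'').1
          omega
        · have : t = t'' + 1 := by omega
          rw [this]
  have edesc : ∀ k, ∃ t, e t + k ≤ e 0 := by
    intro k
    induction k with
    | zero => exact ⟨0, by omega⟩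
    | succ k ih =>
        obtain ⟨t, ht⟩ := ih
        obtain ⟨t', ht', hP⟩ := hinf t
        have h1 := (estep t').2 hP
        have h2 := emono t t' ht'
        exact ⟨t' + 1, by omega⟩
  obtain ⟨t, ht⟩ := edesc (e 0 + 1)
  have := epos t
  omega

end
end ACopAux
namespace ACopAux
noncomputable section
open Classical SimpleGraph

variable {α : Type u} {β : Type u}
variable {A : SimpleGraph α} {B : SimpleGraph β} {m : ℕ}

lemma seq_of_inf (P : ℕ → Prop) (T0 : ℕ) (hP : ∀ N, ∃ j, N ≤ j ∧ P j) :
    ∃ u : ℕ → ℕ, T0 ≤ u 0 ∧ (∀ k, u k < u (k+1)) ∧ (∀ k, P (u k)) ∧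
      (∀ j, T0 ≤ j → j < u 0 → ¬ P j) ∧ (∀ k j, u k < j → j < u (k+1) → ¬ P j) := by
  classical
  refine ⟨fun k => Nat.rec (Nat.find (hP T0)) (fun _ prev => Nat.find (hP (prev+1))) k,
    (Nat.find_spec (hP T0)).1, fun k => ?_, fun k => ?_,
    fun j h1 h2 hq => ?_, fun k j h1 h2 hq => ?_⟩
  · exact Nat.lt_of_succ_le (Nat.find_spec (hP _)).1
  · cases k with
    | zero => exact (Nat.find_spec (hP T0)).2
    | succ k => exact (Nat.find_spec (hP _)).2
  · exact Nat.find_min (hP T0) h2 ⟨h1, hq⟩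
  · exact Nat.find_min (hP _) h2 ⟨Nat.succ_le_of_lt h1, hq⟩

theorem core_capture (S : ActiveCopStrategy A m)
    (hS : ∀ rs : ActiveRobberStrategy A m, ActiveCapture S rs)
    (hcB : B.Connected) (hnA : HasNbr A) (hnB : HasNbr B) (b0 : β) (w : ℕ → α × β)
    (hw : ∀ t, (A.boxProd B).Adj (w t) (w (t + 1)))
    (hinf : ∀ N, ∃ t, N ≤ t ∧ (w (t + 1)).1 ≠ (w t).1) :
    ∃ t i, (sseq S hcB hnA hnB b0 w t).cops i = w t
      ∨ (sseq S hcB hnA hnB b0 w (t + 1)).cops i = w t := by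
  classical
  set s : ℕ → TSt α β m := sseq S hcB hnA hnB b0 w with hsdef
  have hstep : ∀ t, s (t+1) = tstep S hcB hnA hnB (s t) (w t) :=
    fun t => sseq_succ S hcB hnA hnB b0 w t
  have hsprev : ∀ t, (s (t+1)).prev = some (w t) :=
    fun t => sseq_prev S hcB hnA hnB b0 w t
  have hph1 : ∀ t c, (s t).mode = .phase1 c → (s t).cops = fun i => (S.init i, c) :=
    fun t c hc => phase1_cops S hcB hnA hnB b0 w t c hc
  -- the sync time
  have hex : ∃ t, ∀ c, (s t).mode ≠ TMode.phase1 c :=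
    exists_nonphase1 S hcB hnA hnB b0 w hw hinf
  obtain ⟨T, hT, hTmin⟩ : ∃ T, (∀ c, (s T).mode ≠ TMode.phase1 c) ∧
      (∀ t, t < T → ∃ c, (s t).mode = TMode.phase1 c) := by
    refine ⟨Nat.find hex, Nat.find_spec hex, fun t ht => ?_⟩
    have := Nat.find_min hex ht
    push_neg at this
    exact this
  have hT1 : 1 ≤ T := by
    rcases Nat.eq_zero_or_pos T with h0 | h; swap
    · exact h
    exfalso
    apply hT b0
    rw [h0]
    rfl
  obtain ⟨T', rfl⟩ : ∃ T', T = T' + 1 := ⟨T - 1, by omega⟩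
  obtain ⟨c0, hc0⟩ := hTmin T' (Nat.lt_succ_self T')
  have hchase : chaseStep B hcB hnB c0 (w T').2 = (w T').2 := by
    by_contra hne
    apply hT (chaseStep B hcB hnB c0 (w T').2)
    rw [hstep T', tstep_phase1 S hcB hnA hnB _ (w T') c0 hc0]
    dsimp only
    rw [if_neg hne]
  have hmodeT : (s (T' + 1)).mode = TMode.phase2a := by
    rw [hstep T', tstep_phase1 S hcB hnA hnB _ (w T') c0 hc0]
    dsimp only
    rw [if_pos hchase]
  have hcopsT : (s (T' + 1)).cops = fun i => (S.init i, (w T').2) := by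
    rw [hstep T', tstep_phase1 S hcB hnA hnB _ (w T') c0 hc0]
    dsimp only
    funext i
    rw [hph1 T' c0 hc0]
    have hadj : (A.boxProd B).Adj (S.init i, c0)
        ((S.init i, c0).1, chaseStep B hcB hnB c0 (w T').2) :=
      SimpleGraph.boxProd_adj.2 (Or.inr ⟨chaseStep_adj B hcB hnB c0 (w T').2, rfl⟩)
    rw [mv_eq hnA B hadj, hchase]
  -- the sequence of fst-moves of the robber
  obtain ⟨u, hu0, hult, huQ, humin0N, huminN⟩ :=
    seq_of_inf (fun j => (w (j+1)).1 ≠ (w j).1) T' hinf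
  have humin0 : ∀ j, T' ≤ j → j < u 0 → (w (j+1)).1 = (w j).1 :=
    fun j a b => not_not.mp (humin0N j a b)
  have humin : ∀ k j, u k < j → j < u (k+1) → (w (j+1)).1 = (w j).1 :=
    fun k j a b => not_not.mp (huminN k j a b)
  have hQsnd : ∀ k, (w (u k + 1)).2 = (w (u k)).2 ∧ A.Adj (w (u k)).1 (w (u k + 1)).1 :=
    fun k => wfst w hw (u k) (huQ k)
  have hrep : ∀ j, (w (j+1)).1 = (w j).1 → B.Adj (w j).2 (w (j+1)).2 :=
    fun j hj => wsnd w hw j hj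
  -- phase 2a window
  have window2a : ∀ t, T' ≤ t → t ≤ u 0 → (s (t+1)).mode = TMode.phase2a ∧
      (s (t+1)).cops = fun i => (S.init i, (w t).2) := by
    intro t h1
    induction t, h1 using Nat.le_induction with
    | base => exact fun _ => ⟨hmodeT, hcopsT⟩
    | succ n hn ih =>
        intro hle
        obtain ⟨hm, hcps⟩ := ih (by omega)
        have hfst : (w (n+1)).1 = (w n).1 := humin0 n hn (by omega)
        have hBadj : B.Adj (w n).2 (w (n+1)).2 := hrep n hfst
        rw [hstep (n+1), tstep_phase2a S hcB hnA hnB _ (w (n+1)) (w n) hm (hsprev n)]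
        constructor
        · dsimp only
          rw [if_pos hfst]
        · dsimp only
          funext i
          rw [if_pos hfst, hcps]
          have hadj : (A.boxProd B).Adj (S.init i, (w n).2)
              ((S.init i, (w n).2).1, (w (n+1)).2) :=
            SimpleGraph.boxProd_adj.2 (Or.inr ⟨hBadj, rfl⟩)
          rw [mv_eq hnA B hadj]
  -- the simulated robber on A
  set ρ : ℕ → α := fun k => (w (u k + 1)).1 with hρ
  have hρadj : ∀ k, A.Adj (ρ k) (ρ (k+1)) := by
    intro k
    have hconst : ∀ j, u k + 1 ≤ j → j ≤ u (k+1) → (w j).1 = (w (u k + 1)).1 := by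
      intro j h1 h2
      induction j, h1 using Nat.le_induction with
      | base => rfl
      | succ n hn ih =>
          rw [humin k n (by omega) (by omega)]
          exact ih (by omega)
    have h1 : (w (u (k+1))).1 = ρ k := hconst (u (k+1)) (hult k) le_rfl
    have h2 := (hQsnd (k+1)).2
    rw [h1] at h2
    exact h2
  set simRS : ActiveRobberStrategy A m :=
    ⟨fun _ => ρ 0,
     fun hist conf => if _ : A.Adj conf.2 (ρ (hist.length + 1)) then ρ (hist.length + 1)
        else nbr A hnA conf.2,
     by
        intro hh cc
        split
        · assumption
        · exact nbr_adj A hnA _⟩ with hsim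
  set simPlay : ℕ → List (CRConfig α m) × CRConfig α m :=
    fun k => crPlay m S.init simRS.init S.move simRS.move k with hsplay
  have hplay : ∀ k, simPlay (k+1) = ((simPlay k).1 ++ [(simPlay k).2],
      (S.move (simPlay k).1 (simPlay k).2,
        simRS.move (simPlay k).1 (S.move (simPlay k).1 (simPlay k).2, (simPlay k).2.2))) :=
    fun k => rfl
  have hlen : ∀ k, (simPlay k).1.length = k :=
    fun k => crPlay_hist_length m S.init simRS.init S.move simRS.move k
  have hsimr : ∀ k, (simPlay k).2.2 = ρ k := by
    intro k
    induction k with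
    | zero => rfl
    | succ k ih =>
        rw [hplay k]
        show simRS.move (simPlay k).1 (_, (simPlay k).2.2) = ρ (k+1)
        rw [hsim]
        dsimp only
        rw [hlen k, ih]
        rw [dif_pos (hρadj k)]
  -- phase 2b windows
  have window2b : ∀ k t, u k + 1 ≤ t → t ≤ u (k+1) →
      (s (t+1)).mode = TMode.phase2b (simPlay k).1 (simPlay k).2 ∧
      (s (t+1)).cops = fun i => (S.move (simPlay k).1 (simPlay k).2 i, (w t).2) := by
    intro k
    induction k with
    | zero =>
        intro t h1
        induction t, h1 using Nat.le_induction with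
        | base =>
            intro _
            obtain ⟨hm, hcps⟩ := window2a (u 0) hu0 le_rfl
            have hQ0 : ¬ (w (u 0 + 1)).1 = (w (u 0)).1 := huQ 0
            rw [hstep (u 0 + 1),
              tstep_phase2a S hcB hnA hnB _ (w (u 0 + 1)) (w (u 0)) hm (hsprev (u 0))]
            constructor
            · dsimp only
              rw [if_neg hQ0]
              rfl
            · dsimp only
              funext i
              rw [if_neg hQ0, hcps]
              have hadj : (A.boxProd B).Adj (S.init i, (w (u 0)).2)
                  (S.move [] (S.init, (w (u 0 + 1)).1) i, ((S.init i, (w (u 0)).2) : α × β).2) :=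
                SimpleGraph.boxProd_adj.2
                  (Or.inl ⟨S.move_adj [] (S.init, (w (u 0 + 1)).1) i, rfl⟩)
              rw [mv_eq hnA B hadj]
              show (S.move (simPlay 0).1 (simPlay 0).2 i, (w (u 0)).2)
                = (S.move (simPlay 0).1 (simPlay 0).2 i, (w (u 0 + 1)).2)
              rw [(hQsnd 0).1]
        | succ n hn ih =>
            intro hle
            obtain ⟨hm, hcps⟩ := ih (by omega)
            have hfst : (w (n+1)).1 = (w n).1 := humin 0 n (by omega) (by omega)
            have hBadj : B.Adj (w n).2 (w (n+1)).2 := hrep n hfst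
            rw [hstep (n+1),
              tstep_phase2b S hcB hnA hnB _ (w (n+1)) (w n) _ _ hm (hsprev n)]
            constructor
            · dsimp only
              rw [if_pos hfst]
            · dsimp only
              funext i
              rw [if_pos hfst, hcps]
              have hadj : (A.boxProd B).Adj (S.move (simPlay 0).1 (simPlay 0).2 i, (w n).2)
                  ((S.move (simPlay 0).1 (simPlay 0).2 i, (w n).2).1, (w (n+1)).2) :=
                SimpleGraph.boxProd_adj.2 (Or.inr ⟨hBadj, rfl⟩)
              rw [mv_eq hnA B hadj]
    | succ k ihk =>
        intro t h1
        induction t, h1 using Nat.le_induction with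
        | base =>
            intro _
            obtain ⟨hm, hcps⟩ := ihk (u (k+1)) (hult k) le_rfl
            have hQ1 : ¬ (w (u (k+1) + 1)).1 = (w (u (k+1))).1 := huQ (k+1)
            rw [hstep (u (k+1) + 1),
              tstep_phase2b S hcB hnA hnB _ (w (u (k+1) + 1)) (w (u (k+1))) _ _ hm
                (hsprev (u (k+1)))]
            have hrmove : simRS.move (simPlay k).1
                (S.move (simPlay k).1 (simPlay k).2, (simPlay k).2.2) = (w (u (k+1) + 1)).1 := by
              rw [hsim]
              dsimp only
              rw [hlen k, hsimr k]
              rw [dif_pos (hρadj k)]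
            have hpl : simPlay (k+1) = ((simPlay k).1 ++ [(simPlay k).2],
                (S.move (simPlay k).1 (simPlay k).2, (w (u (k+1) + 1)).1)) := by
              rw [hplay k, hrmove]
            constructor
            · dsimp only
              rw [if_neg hQ1, hpl]
            · dsimp only
              funext i
              rw [if_neg hQ1, hcps]
              have hadj : (A.boxProd B).Adj
                  (S.move (simPlay k).1 (simPlay k).2 i, (w (u (k+1))).2)
                  (S.move ((simPlay k).1 ++ [(simPlay k).2])
                      (S.move (simPlay k).1 (simPlay k).2, (w (u (k+1) + 1)).1) i,
                    ((S.move (simPlay k).1 (simPlay k).2 i, (w (u (k+1))).2) : α × β).2) :=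
                SimpleGraph.boxProd_adj.2 (Or.inl
                  ⟨S.move_adj ((simPlay k).1 ++ [(simPlay k).2])
                    (S.move (simPlay k).1 (simPlay k).2, (w (u (k+1) + 1)).1) i, rfl⟩)
              rw [mv_eq hnA B hadj]
              have h4 : S.move ((simPlay k).1 ++ [(simPlay k).2])
                  (S.move (simPlay k).1 (simPlay k).2, (w (u (k+1) + 1)).1) i
                  = S.move (simPlay (k+1)).1 (simPlay (k+1)).2 i := by
                rw [hpl]
              refine Prod.ext ?_ ?_
              · exact h4
              · exact ((hQsnd (k+1)).1).symm
        | succ n hn ih =>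
            intro hle
            obtain ⟨hm, hcps⟩ := ih (by omega)
            have hfst : (w (n+1)).1 = (w n).1 := humin (k+1) n (by omega) (by omega)
            have hBadj : B.Adj (w n).2 (w (n+1)).2 := hrep n hfst
            rw [hstep (n+1),
              tstep_phase2b S hcB hnA hnB _ (w (n+1)) (w n) _ _ hm (hsprev n)]
            constructor
            · dsimp only
              rw [if_pos hfst]
            · dsimp only
              funext i
              rw [if_pos hfst, hcps]
              have hadj : (A.boxProd B).Adj
                  (S.move (simPlay (k+1)).1 (simPlay (k+1)).2 i, (w n).2)
                  ((S.move (simPlay (k+1)).1 (simPlay (k+1)).2 i, (w n).2).1, (w (n+1)).2) :=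
                SimpleGraph.boxProd_adj.2 (Or.inr ⟨hBadj, rfl⟩)
              rw [mv_eq hnA B hadj]
  -- extract the capture
  obtain ⟨k, hk⟩ := hS simRS
  rcases hk with ⟨i, hi⟩ | ⟨i, hi⟩
  · -- cop i is on the robber in the simulated play after round k
    cases k with
    | zero =>
        refine ⟨u 0 + 1, i, Or.inl ?_⟩
        obtain ⟨-, hcps⟩ := window2a (u 0) hu0 le_rfl
        rw [hcps]
        have h1 : S.init i = ρ 0 := by
          have h3 : (simPlay 0).2.1 i = (simPlay 0).2.2 := hi
          rw [hsimr 0] at h3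
          exact h3
        have h2 : (w (u 0)).2 = (w (u 0 + 1)).2 := ((hQsnd 0).1).symm
        show (S.init i, (w (u 0)).2) = w (u 0 + 1)
        rw [h1, h2]
    | succ k =>
        refine ⟨u (k+1) + 1, i, Or.inl ?_⟩
        obtain ⟨-, hcps⟩ := window2b k (u (k+1)) (hult k) le_rfl
        rw [hcps]
        have h1 : S.move (simPlay k).1 (simPlay k).2 i = ρ (k+1) := by
          have h2 : (simPlay (k+1)).2.1 i = (simPlay (k+1)).2.2 := hi
          rw [hsimr (k+1)] at h2
          rw [hplay k] at h2
          exact h2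
        have h2 : (w (u (k+1))).2 = (w (u (k+1) + 1)).2 := ((hQsnd (k+1)).1).symm
        show (S.move (simPlay k).1 (simPlay k).2 i, (w (u (k+1))).2) = w (u (k+1) + 1)
        rw [h1, h2]
  · -- cop i would move onto the robber
    refine ⟨u k + 1, i, Or.inr ?_⟩
    obtain ⟨-, hcps⟩ := window2b k (u k + 1) le_rfl (hult k)
    rw [hcps]
    have h1 : S.move (simPlay k).1 (simPlay k).2 i = ρ k := by
      rw [hsimr k] at hi
      exact hi
    show (S.move (simPlay k).1 (simPlay k).2 i, (w (u k + 1)).2) = w (u k + 1)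
    rw [h1]

end
end ACopAux
namespace ACopAux
noncomputable section
open Classical SimpleGraph

variable {α : Type u} {β : Type u}

theorem core_exists {A : SimpleGraph α} {B : SimpleGraph β} {m : ℕ}
    (S : ActiveCopStrategy A m)
    (hS : ∀ rs : ActiveRobberStrategy A m, ActiveCapture S rs)
    (hcB : B.Connected) (hnA : HasNbr A) (hnB : HasNbr B) (b0 : β) :
    ∃ pos : List (α × β) → Fin m → α × β,
      (∀ l v i, (A.boxProd B).Adj (pos l i) (pos (l ++ [v]) i)) ∧
      ∀ w : ℕ → α × β, (∀ t, (A.boxProd B).Adj (w t) (w (t + 1))) →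
        (∀ N, ∃ t, N ≤ t ∧ (w (t + 1)).1 ≠ (w t).1) →
        ∃ t i, pos ((List.range t).map w) i = w t
          ∨ pos ((List.range (t + 1)).map w) i = w t :=
  ⟨fun l => (trun S hcB hnA hnB b0 l).cops,
    fun l v i => trun_adj S hcB hnA hnB b0 l v i,
    fun w hw hinf => core_capture S hS hcB hnA hnB b0 w hw hinf⟩

lemma swap_boxProd_adj {G : SimpleGraph α} {H : SimpleGraph β} {x y : α × β} :
    (G.boxProd H).Adj x y ↔ (H.boxProd G).Adj x.swap y.swap := by
  simp only [SimpleGraph.boxProd_adj, Prod.fst_swap, Prod.snd_swap]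
  tauto

theorem core_exists_snd {G : SimpleGraph α} {H : SimpleGraph β} {m : ℕ}
    (S : ActiveCopStrategy H m)
    (hS : ∀ rs : ActiveRobberStrategy H m, ActiveCapture S rs)
    (hcG : G.Connected) (hnG : HasNbr G) (hnH : HasNbr H) (a0 : α) :
    ∃ pos : List (α × β) → Fin m → α × β,
      (∀ l v i, (G.boxProd H).Adj (pos l i) (pos (l ++ [v]) i)) ∧
      ∀ w : ℕ → α × β, (∀ t, (G.boxProd H).Adj (w t) (w (t + 1))) →
        (∀ N, ∃ t, N ≤ t ∧ (w (t + 1)).2 ≠ (w t).2) →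
        ∃ t i, pos ((List.range t).map w) i = w t
          ∨ pos ((List.range (t + 1)).map w) i = w t := by
  obtain ⟨pos', hadj', hcap'⟩ := core_exists (B := G) S hS hcG hnH hnG a0
  refine ⟨fun l i => (pos' (l.map Prod.swap) i).swap, ?_, ?_⟩
  · intro l v i
    rw [swap_boxProd_adj, Prod.swap_swap, Prod.swap_swap]
    have h := hadj' (l.map Prod.swap) v.swap i
    simp only [List.map_append, List.map_cons, List.map_nil]
    exact h
  · intro w hw hinf
    set w' : ℕ → β × α := fun t => (w t).swap with hw'def
    have hw2 : ∀ t, (H.boxProd G).Adj (w' t) (w' (t + 1)) := by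
      intro t
      exact swap_boxProd_adj.1 (hw t)
    have hinf2 : ∀ N, ∃ t, N ≤ t ∧ (w' (t + 1)).1 ≠ (w' t).1 := hinf
    obtain ⟨t, i, hcap⟩ := hcap' w' hw2 hinf2
    have hmap : ∀ n : ℕ, (List.range n).map w' = ((List.range n).map w).map Prod.swap := by
      intro n
      rw [List.map_map]
      rfl
    refine ⟨t, i, ?_⟩
    rcases hcap with hcap | hcap
    · left
      show (pos' (List.map Prod.swap (List.map w (List.range t))) i).swap = w t
      rw [← hmap t, hcap]
      exact Prod.swap_swap _
    · right
      show (pos' (List.map Prod.swap (List.map w (List.range (t+1)))) i).swap = w t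
      rw [← hmap (t+1), hcap]
      exact Prod.swap_swap _

end
end ACopAux
namespace ACopAux
noncomputable section
open Classical SimpleGraph

variable {α : Type u} {β : Type u}

theorem combined_win {G : SimpleGraph α} {H : SimpleGraph β} {m₁ m₂ : ℕ}
    (hnG : HasNbr G)
    (posA : List (α × β) → Fin m₁ → α × β) (posB : List (α × β) → Fin m₂ → α × β)
    (hadjA : ∀ l v i, (G.boxProd H).Adj (posA l i) (posA (l ++ [v]) i))
    (hadjB : ∀ l v i, (G.boxProd H).Adj (posB l i) (posB (l ++ [v]) i))
    (hcapA : ∀ w : ℕ → α × β, (∀ t, (G.boxProd H).Adj (w t) (w (t + 1))) →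
        (∀ N, ∃ t, N ≤ t ∧ (w (t + 1)).1 ≠ (w t).1) →
        ∃ t i, posA ((List.range t).map w) i = w t ∨ posA ((List.range (t + 1)).map w) i = w t)
    (hcapB : ∀ w : ℕ → α × β, (∀ t, (G.boxProd H).Adj (w t) (w (t + 1))) →
        (∀ N, ∃ t, N ≤ t ∧ (w (t + 1)).2 ≠ (w t).2) →
        ∃ t i, posB ((List.range t).map w) i = w t ∨ posB ((List.range (t + 1)).map w) i = w t) :
    ActiveCopsWin (G.boxProd H) (m₁ + m₂) := by
  classical
  set target : List (α × β) → Fin (m₁ + m₂) → α × β :=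
    fun l i => Fin.addCases (fun i1 => posA l i1) (fun i2 => posB l i2) i with htarget
  have htadj : ∀ l v i, (G.boxProd H).Adj (target l i) (target (l ++ [v]) i) := by
    intro l v i
    refine Fin.addCases
      (motive := fun j => (G.boxProd H).Adj (target l j) (target (l ++ [v]) j))
      (fun i1 => ?_) (fun i2 => ?_) i
    · simp only [htarget, Fin.addCases_left]
      exact hadjA l v i1
    · simp only [htarget, Fin.addCases_right]
      exact hadjB l v i2
  set cs : ActiveCopStrategy (G.boxProd H) (m₁ + m₂) :=
    ⟨fun i => target [] i,
     fun h c i => mv hnG H (c.1 i) (target (h.map (fun x => x.2) ++ [c.2]) i),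
     fun h c i => mv_adj hnG H _ _⟩ with hcs
  refine ⟨cs, fun rs => ?_⟩
  show ∃ t : ℕ,
    (∃ i, (crPlay (m₁+m₂) cs.init rs.init cs.move rs.move t).2.1 i
        = (crPlay (m₁+m₂) cs.init rs.init cs.move rs.move t).2.2) ∨
    (∃ i, cs.move (crPlay (m₁+m₂) cs.init rs.init cs.move rs.move t).1
            (crPlay (m₁+m₂) cs.init rs.init cs.move rs.move t).2 i
        = (crPlay (m₁+m₂) cs.init rs.init cs.move rs.move t).2.2)
  set P : ℕ → List (CRConfig (α × β) (m₁ + m₂)) × CRConfig (α × β) (m₁ + m₂) :=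
    fun t => crPlay (m₁ + m₂) cs.init rs.init cs.move rs.move t with hP
  set w : ℕ → α × β := fun t => (P t).2.2 with hwdef
  have hwadj : ∀ t, (G.boxProd H).Adj (w t) (w (t + 1)) := by
    intro t
    have h := rs.move_adj (P t).1 (cs.move (P t).1 (P t).2, (P t).2.2)
    exact h
  have hist : ∀ t, (P t).1.map (fun c => c.2) = (List.range t).map w := by
    intro t
    have h := crPlay_hist_map (m₁ + m₂) cs.init rs.init cs.move rs.move t
    exact h
  have hcons : ∀ t i, (P t).2.1 i = target ((List.range t).map w) i := by
    intro t
    induction t with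
    | zero => intro i; rfl
    | succ t ih =>
        intro i
        have h1 : (P (t+1)).2.1 i
            = mv hnG H ((P t).2.1 i)
                (target ((P t).1.map (fun x => x.2) ++ [(P t).2.2]) i) := rfl
        have h2 : ((List.range t).map w ++ [(P t).2.2]) = (List.range (t+1)).map w := by
          rw [List.range_succ, List.map_append]
          rfl
        have h3 := htadj ((List.range t).map w) ((P t).2.2) i
        rw [h2] at h3
        rw [h1, hist t, ih i, h2]
        exact mv_eq hnG H h3
  have hmove : ∀ t i, cs.move (P t).1 (P t).2 i = target ((List.range (t+1)).map w) i := by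
    intro t i
    have h1 : cs.move (P t).1 (P t).2 i
        = mv hnG H ((P t).2.1 i)
            (target ((P t).1.map (fun x => x.2) ++ [(P t).2.2]) i) := rfl
    have h2 : ((List.range t).map w ++ [(P t).2.2]) = (List.range (t+1)).map w := by
      rw [List.range_succ, List.map_append]
      rfl
    have h3 := htadj ((List.range t).map w) ((P t).2.2) i
    rw [h2] at h3
    rw [h1, hist t, hcons t i, h2]
    exact mv_eq hnG H h3
  have hcases : (∀ N, ∃ t, N ≤ t ∧ (w (t + 1)).1 ≠ (w t).1) ∨
      (∀ N, ∃ t, N ≤ t ∧ (w (t + 1)).2 ≠ (w t).2) := by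
    by_cases hfst : ∀ N, ∃ t, N ≤ t ∧ (w (t + 1)).1 ≠ (w t).1
    · exact Or.inl hfst
    · right
      push_neg at hfst
      obtain ⟨N, hN⟩ := hfst
      intro N'
      refine ⟨max N N', le_max_right _ _, ?_⟩
      have h1 : (w (max N N' + 1)).1 = (w (max N N')).1 := hN _ (le_max_left _ _)
      have h2 := wsnd w hwadj (max N N') h1
      exact h2.ne'
  rcases hcases with hc | hc
  · obtain ⟨t, i0, hcap⟩ := hcapA w hwadj hc
    rcases hcap with hcap | hcap
    · refine ⟨t, Or.inl ⟨Fin.castAdd m₂ i0, ?_⟩⟩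
      rw [hcons t]
      simp only [htarget, Fin.addCases_left]
      exact hcap
    · refine ⟨t, Or.inr ⟨Fin.castAdd m₂ i0, ?_⟩⟩
      rw [hmove t]
      simp only [htarget, Fin.addCases_left]
      exact hcap
  · obtain ⟨t, i0, hcap⟩ := hcapB w hwadj hc
    rcases hcap with hcap | hcap
    · refine ⟨t, Or.inl ⟨Fin.natAdd m₁ i0, ?_⟩⟩
      rw [hcons t]
      simp only [htarget, Fin.addCases_right]
      exact hcap
    · refine ⟨t, Or.inr ⟨Fin.natAdd m₁ i0, ?_⟩⟩
      rw [hmove t]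
      simp only [htarget, Fin.addCases_right]
      exact hcap

end
end ACopAux
namespace ACopAux
noncomputable section
open Classical SimpleGraph

variable {α : Type u} {β : Type u}

/-- Transporting a winning cop strategy along an isomorphism of graphs. -/
theorem win_map {G : SimpleGraph α} {G' : SimpleGraph β} (φ : α ≃ β)
    (hφ : ∀ a b, G.Adj a b ↔ G'.Adj (φ a) (φ b)) {n : ℕ}
    (hwin : ActiveCopsWin G n) : ActiveCopsWin G' n := by
  classical
  obtain ⟨cs, hcs⟩ := hwin
  set F : CRConfig α n → CRConfig β n := fun c => (fun i => φ (c.1 i), φ c.2) with hF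
  set Fi : CRConfig β n → CRConfig α n := fun c => (fun i => φ.symm (c.1 i), φ.symm c.2) with hFi
  have hFiF : ∀ c, Fi (F c) = c := by
    intro c
    refine Prod.ext ?_ ?_
    · funext i
      exact φ.symm_apply_apply _
    · exact φ.symm_apply_apply _
  have hlFiF : ∀ l : List (CRConfig α n), (l.map F).map Fi = l := by
    intro l
    rw [List.map_map]
    have hcomp : Fi ∘ F = id := funext hFiF
    rw [hcomp, List.map_id]
  set cs' : ActiveCopStrategy G' n :=
    ⟨fun i => φ (cs.init i),
     fun h c i => φ (cs.move (h.map Fi) (Fi c) i),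
     by
      intro h c i
      have h1 := cs.move_adj (h.map Fi) (Fi c) i
      have h2 := (hφ _ _).1 h1
      simpa [hFi] using h2⟩ with hcs'
  refine ⟨cs', fun rs' => ?_⟩
  set rs : ActiveRobberStrategy G n :=
    ⟨fun ci => φ.symm (rs'.init (fun i => φ (ci i))),
     fun h c => φ.symm (rs'.move (h.map F) (F c)),
     by
      intro h c
      have h1 := rs'.move_adj (h.map F) (F c)
      rw [hφ]
      simpa using h1⟩ with hrs
  set play : ℕ → List (CRConfig α n) × CRConfig α n :=
    fun t => crPlay n cs.init rs.init cs.move rs.move t with hplay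
  set play' : ℕ → List (CRConfig β n) × CRConfig β n :=
    fun t => crPlay n cs'.init rs'.init cs'.move rs'.move t with hplay'
  have hmv : ∀ t, cs'.move ((play t).1.map F) (F (play t).2)
      = fun i => φ (cs.move (play t).1 (play t).2 i) := by
    intro t
    funext i
    show φ (cs.move (((play t).1.map F).map Fi) (Fi (F (play t).2)) i) = _
    rw [hlFiF, hFiF]
  have corr : ∀ t, play' t = ((play t).1.map F, F (play t).2) := by
    intro t
    induction t with
    | zero =>
        refine Prod.ext rfl (Prod.ext rfl ?_)
        show rs'.init (fun i => φ (cs.init i)) = φ (rs.init cs.init)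
        have : rs.init cs.init = φ.symm (rs'.init (fun i => φ (cs.init i))) := rfl
        rw [this, φ.apply_symm_apply]
    | succ t ih =>
        have hstep' : play' (t+1) = ((play' t).1 ++ [(play' t).2],
            (cs'.move (play' t).1 (play' t).2,
              rs'.move (play' t).1 (cs'.move (play' t).1 (play' t).2, (play' t).2.2))) := rfl
        have hstep : play (t+1) = ((play t).1 ++ [(play t).2],
            (cs.move (play t).1 (play t).2,
              rs.move (play t).1 (cs.move (play t).1 (play t).2, (play t).2.2))) := rfl
        rw [hstep', hstep, ih]
        refine Prod.ext ?_ (Prod.ext ?_ ?_)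
        · show (play t).1.map F ++ [F (play t).2] = ((play t).1 ++ [(play t).2]).map F
          rw [List.map_append]
          rfl
        · show cs'.move ((play t).1.map F) (F (play t).2)
            = (F (cs.move (play t).1 (play t).2,
                rs.move (play t).1 (cs.move (play t).1 (play t).2, (play t).2.2))).1
          rw [hmv t]
        · show rs'.move ((play t).1.map F)
              (cs'.move ((play t).1.map F) (F (play t).2), (F (play t).2).2)
            = (F (cs.move (play t).1 (play t).2,
                rs.move (play t).1 (cs.move (play t).1 (play t).2, (play t).2.2))).2
          rw [hmv t]
          show rs'.move ((play t).1.map F)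
              ((fun i => φ (cs.move (play t).1 (play t).2 i)), φ ((play t).2.2))
            = φ (rs.move (play t).1 (cs.move (play t).1 (play t).2, (play t).2.2))
          have h3 : rs.move (play t).1 (cs.move (play t).1 (play t).2, (play t).2.2)
              = φ.symm (rs'.move ((play t).1.map F)
                  (F (cs.move (play t).1 (play t).2, (play t).2.2))) := rfl
          rw [h3, φ.apply_symm_apply]
  obtain ⟨t, hcap⟩ := hcs rs
  refine ⟨t, ?_⟩
  rcases hcap with ⟨i, hi⟩ | ⟨i, hi⟩
  · left
    refine ⟨i, ?_⟩
    show (play' t).2.1 i = (play' t).2.2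
    rw [corr t]
    show φ ((play t).2.1 i) = φ ((play t).2.2)
    rw [hi]
  · right
    refine ⟨i, ?_⟩
    show cs'.move (play' t).1 (play' t).2 i = (play' t).2.2
    rw [corr t]
    show cs'.move ((play t).1.map F) (F (play t).2) i = φ ((play t).2.2)
    rw [hmv t]
    show φ (cs.move (play t).1 (play t).2 i) = φ ((play t).2.2)
    rw [hi]

/-- With one cop per vertex, the cops win immediately. -/
theorem allcover_win (G : SimpleGraph α) [Fintype α] (hn : HasNbr G) :
    ActiveCopsWin G (Fintype.card α) := by
  classical
  set eqv := Fintype.equivFin α with heqv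
  refine ⟨⟨fun i => eqv.symm i, fun _ c i => nbr G hn (c.1 i),
    fun _ c i => nbr_adj G hn _⟩, fun rs => ?_⟩
  refine ⟨0, Or.inl ⟨eqv (rs.init (fun i => eqv.symm i)), ?_⟩⟩
  show eqv.symm (eqv (rs.init (fun i => eqv.symm i))) = rs.init (fun i => eqv.symm i)
  exact eqv.symm_apply_apply _

/-- If the graph admits no robber strategy at all, zero cops win. -/
theorem win_zero (G : SimpleGraph α) (h : IsEmpty (ActiveRobberStrategy G 0)) :
    ActiveCopsWin G 0 :=
  ⟨⟨fun i => i.elim0, fun _ _ i => i.elim0, fun _ _ i => i.elim0⟩,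
    fun rs => (h.false rs).elim⟩

end
end ACopAux

/-- If `acop(G₂)` cops can win the fully active game on `G₂` regardless of
their initial positions, then `acop(G₁ □ G₂) ≤ acop(G₁) + acop(G₂)`. -/
theorem acop_boxProd_le {V₁ : Type u} {V₂ : Type u} [Fintype V₁] [Fintype V₂]
    (G₁ : SimpleGraph V₁) (G₂ : SimpleGraph V₂)
    (hconn₁ : G₁.Connected) (hconn₂ : G₂.Connected)
    (h : ∀ init : Fin (acop G₂) → V₂, ActiveCopsWinFrom G₂ (acop G₂) init) :
    acop (G₁.boxProd G₂) ≤ acop G₁ + acop G₂ := by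
  classical
  open ACopAux in
  have hne1 : Nonempty V₁ := hconn₁.nonempty
  have hne2 : Nonempty V₂ := hconn₂.nonempty
  by_cases hnt1 : Nontrivial V₁
  · by_cases hnt2 : Nontrivial V₂
    · -- main case : both factors have at least two vertices
      have hn1 : ACopAux.HasNbr G₁ := ACopAux.hasNbr_of_connected_nontrivial G₁ hconn₁ hnt1
      have hn2 : ACopAux.HasNbr G₂ := ACopAux.hasNbr_of_connected_nontrivial G₂ hconn₂ hnt2
      have hmem1 : ActiveCopsWin G₁ (acop G₁) := by
        have hset : {n | ActiveCopsWin G₁ n}.Nonempty :=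
          ⟨Fintype.card V₁, ACopAux.allcover_win G₁ hn1⟩
        exact Nat.sInf_mem hset
      obtain ⟨S₁, hS₁⟩ := hmem1
      obtain ⟨S₂, -, hS₂⟩ := h (fun _ => Classical.arbitrary V₂)
      obtain ⟨posA, hadjA, hcapA⟩ :=
        ACopAux.core_exists S₁ hS₁ hconn₂ hn1 hn2 (Classical.arbitrary V₂)
      obtain ⟨posB, hadjB, hcapB⟩ :=
        ACopAux.core_exists_snd S₂ hS₂ hconn₁ hn1 hn2 (Classical.arbitrary V₁)
      exact Nat.sInf_le (ACopAux.combined_win hn1 posA posB hadjA hadjB hcapA hcapB)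
    · -- `V₂` is a single vertex
      haveI hss : Subsingleton V₂ := not_nontrivial_iff_subsingleton.1 hnt2
      have hn1 : ACopAux.HasNbr G₁ := ACopAux.hasNbr_of_connected_nontrivial G₁ hconn₁ hnt1
      have hmem1 : ActiveCopsWin G₁ (acop G₁) := by
        have hset : {n | ActiveCopsWin G₁ n}.Nonempty :=
          ⟨Fintype.card V₁, ACopAux.allcover_win G₁ hn1⟩
        exact Nat.sInf_mem hset
      set d : V₂ := Classical.arbitrary V₂ with hd
      set φ : V₁ ≃ V₁ × V₂ :=
        ⟨fun a => (a, d), fun p => p.1, fun a => rfl,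
         fun p => Prod.ext rfl (Subsingleton.elim _ _)⟩ with hφdef
      have hφ : ∀ a b, G₁.Adj a b ↔ (G₁.boxProd G₂).Adj (φ a) (φ b) := by
        intro a b
        rw [SimpleGraph.boxProd_adj]
        constructor
        · intro hab
          exact Or.inl ⟨hab, rfl⟩
        · rintro (⟨h1, -⟩ | ⟨h1, -⟩)
          · exact h1
          · exact absurd (Subsingleton.elim _ _) h1.ne
      have hwin : ActiveCopsWin (G₁.boxProd G₂) (acop G₁) := ACopAux.win_map φ hφ hmem1
      exact le_trans (Nat.sInf_le hwin) (Nat.le_add_right _ _)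
  · by_cases hnt2 : Nontrivial V₂
    · -- `V₁` is a single vertex
      haveI hss : Subsingleton V₁ := not_nontrivial_iff_subsingleton.1 hnt1
      have hwin2 : ActiveCopsWin G₂ (acop G₂) := by
        obtain ⟨S₂, -, hS₂⟩ := h (fun _ => Classical.arbitrary V₂)
        exact ⟨S₂, hS₂⟩
      set d : V₁ := Classical.arbitrary V₁ with hd
      set φ : V₂ ≃ V₁ × V₂ :=
        ⟨fun b => (d, b), fun p => p.2, fun b => rfl,
         fun p => Prod.ext (Subsingleton.elim _ _) rfl⟩ with hφdef
      have hφ : ∀ a b, G₂.Adj a b ↔ (G₁.boxProd G₂).Adj (φ a) (φ b) := by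
        intro a b
        rw [SimpleGraph.boxProd_adj]
        constructor
        · intro hab
          exact Or.inr ⟨hab, rfl⟩
        · rintro (⟨h1, -⟩ | ⟨h1, -⟩)
          · exact absurd (Subsingleton.elim _ _) h1.ne
          · exact h1
      have hwin : ActiveCopsWin (G₁.boxProd G₂) (acop G₂) := ACopAux.win_map φ hφ hwin2
      exact le_trans (Nat.sInf_le hwin) (Nat.le_add_left _ _)
    · -- both factors are single vertices : no robber strategy exists
      haveI hss1 : Subsingleton V₁ := not_nontrivial_iff_subsingleton.1 hnt1
      haveI hss2 : Subsingleton V₂ := not_nontrivial_iff_subsingleton.1 hnt2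
      have hwin0 : ActiveCopsWin (G₁.boxProd G₂) 0 := by
        refine ACopAux.win_zero _ ⟨fun rs => ?_⟩
        have hadj := rs.move_adj [] (fun i => i.elim0, rs.init (fun i => i.elim0))
        rcases SimpleGraph.boxProd_adj.1 hadj with ⟨h1, -⟩ | ⟨h1, -⟩
        · exact absurd (Subsingleton.elim _ _) h1.ne
        · exact absurd (Subsingleton.elim _ _) h1.ne
      exact le_trans (Nat.sInf_le hwin0) (Nat.zero_le _)
end

section
/- If G is a non-bipartite finite connected graph and H is any finite connected graph, then acop(H □ G) ≤ acop(H) + acop(G). -/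
open SimpleGraph

universe u v

variable {V : Type u}

/-! ### Auxiliary development for the box product bound -/

namespace AcopAux

open SimpleGraph
open scoped Classical

noncomputable section

/-- A walk of length zero has equal endpoints. -/
theorem walk_len_zero {V : Type u} {G : SimpleGraph V} {x y : V} (w : G.Walk x y)
    (h : w.length = 0) : x = y := by
  cases w with
  | nil => rfl
  | cons _ _ => simp at h

/-- In a connected graph with an edge, every vertex has a neighbour. -/
theorem exists_nbr {V : Type u} {G : SimpleGraph V} (hc : G.Connected)
    {x y : V} (hxy : G.Adj x y) (v : V) : ∃ w, G.Adj v w := by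
  obtain ⟨p⟩ := hc v x
  cases p with
  | nil => exact ⟨y, hxy⟩
  | cons h _ => exact ⟨_, h⟩

/-- Discrete intermediate value property for step-1 counters. -/
theorem nat_ivt {f : ℕ → ℕ} (h0 : f 0 = 0) (hstep : ∀ t, f (t + 1) ≤ f t + 1)
    {k : ℕ} : ∀ {t : ℕ}, k ≤ f t → ∃ s, s ≤ t ∧ f s = k := by
  intro t
  induction t with
  | zero => intro h; exact ⟨0, le_refl 0, by omega⟩
  | succ t ih =>
    intro h
    by_cases h' : k ≤ f t
    · obtain ⟨s, hs, hfs⟩ := ih h'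
      exact ⟨s, hs.trans (Nat.le_succ t), hfs⟩
    · have := hstep t
      exact ⟨t + 1, le_refl _, by omega⟩

/-- `Nat.find` with a canonical (classical) decidability instance, so that
occurrences are syntactically stable under rewriting. -/
def nfind {P : ℕ → Prop} (h : ∃ n, P n) : ℕ :=
  @Nat.find P (fun n => Classical.propDecidable (P n)) h

theorem nfind_spec {P : ℕ → Prop} (h : ∃ n, P n) : P (nfind h) :=
  @Nat.find_spec P (fun n => Classical.propDecidable (P n)) h

theorem nfind_min' {P : ℕ → Prop} (h : ∃ n, P n) {n : ℕ} (hn : P n) : nfind h ≤ n :=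
  @Nat.find_min' P (fun n => Classical.propDecidable (P n)) h n hn

theorem nfind_min {P : ℕ → Prop} (h : ∃ n, P n) {n : ℕ} (hlt : n < nfind h) : ¬ P n :=
  @Nat.find_min P (fun n => Classical.propDecidable (P n)) h n hlt

theorem find_eq_of_agree {P Q : ℕ → Prop} (hP : ∃ n, P n) (hQ : ∃ n, Q n) (t : ℕ)
    (hiff : ∀ n ≤ t, (P n ↔ Q n)) (hPb : ∃ n, n ≤ t ∧ P n) :
    nfind hP = nfind hQ ∧ nfind hP ≤ t := by
  obtain ⟨n, hn, hPn⟩ := hPb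
  have h1 : nfind hP ≤ n := nfind_min' hP hPn
  have h2 : nfind hQ ≤ n := nfind_min' hQ ((hiff n hn).1 hPn)
  have h3 : Q (nfind hP) := (hiff _ (h1.trans hn)).1 (nfind_spec hP)
  have h4 : P (nfind hQ) := (hiff _ (h2.trans hn)).2 (nfind_spec hQ)
  exact ⟨le_antisymm (nfind_min' hP h4) (nfind_min' hQ h3), h1.trans hn⟩

/-- Data describing one "factor" of the box product from the point of view of
one team of cops: `F₁` is the factor the team plays the simulated game on,
`F₂` is the other factor (used for the trailing phase). -/
structure SideData (V W₁ W₂ : Type u) where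
  F₁ : SimpleGraph W₁
  F₂ : SimpleGraph W₂
  P : SimpleGraph V
  pk : W₁ → W₂ → V
  p1 : V → W₁
  p2 : V → W₂
  p1_pk : ∀ x y, p1 (pk x y) = x
  p2_pk : ∀ x y, p2 (pk x y) = y
  pk_eta : ∀ v, pk (p1 v) (p2 v) = v
  adj_iff : ∀ v v', P.Adj v v' ↔
    (F₁.Adj (p1 v) (p1 v') ∧ p2 v = p2 v') ∨ (p1 v = p1 v' ∧ F₂.Adj (p2 v) (p2 v'))
  conn1 : F₁.Connected
  m : ℕ
  cs : ActiveCopStrategy F₁ m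
  w0 : W₂
  wk : ∀ tgt : W₂, F₂.Walk w0 tgt

namespace SideData

variable {V W₁ W₂ : Type u} (S : SideData V W₁ W₂) (u : ℕ → V)

/-- The robber's move from time `t` to `t+1` moves in the first factor. -/
def type1 (t : ℕ) : Prop := S.p1 (u (t + 1)) ≠ S.p1 (u t)

/-- Number of first-factor robber moves among the first `t` moves. -/
def c1 : ℕ → ℕ
  | 0 => 0
  | t + 1 => c1 t + (if S.type1 u t then 1 else 0)

/-- Number of second-factor robber moves among the first `t` moves. -/
def c2 : ℕ → ℕ
  | 0 => 0
  | t + 1 => c2 t + (if S.type1 u t then 0 else 1)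

theorem c1_add_c2 (t : ℕ) : S.c1 u t + S.c2 u t = t := by
  induction t with
  | zero => rfl
  | succ t ih => by_cases h : S.type1 u t <;> simp [c1, c2, h] <;> omega

theorem c1_le_succ (t : ℕ) : S.c1 u t ≤ S.c1 u (t + 1) := by
  simp [c1]
theorem c1_succ_le (t : ℕ) : S.c1 u (t + 1) ≤ S.c1 u t + 1 := by
  by_cases h : S.type1 u t <;> simp [c1, h]
theorem c1_mono : Monotone (S.c1 u) := monotone_nat_of_le_succ (S.c1_le_succ u)
theorem c2_le_succ (t : ℕ) : S.c2 u t ≤ S.c2 u (t + 1) := by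
  simp [c2]
theorem c2_succ_le (t : ℕ) : S.c2 u (t + 1) ≤ S.c2 u t + 1 := by
  by_cases h : S.type1 u t <;> simp [c2, h]
theorem c2_mono : Monotone (S.c2 u) := monotone_nat_of_le_succ (S.c2_le_succ u)

theorem c1_succ_of_type1 {t : ℕ} (h : S.type1 u t) : S.c1 u (t + 1) = S.c1 u t + 1 := by
  simp [c1, h]
theorem c1_succ_of_not {t : ℕ} (h : ¬ S.type1 u t) : S.c1 u (t + 1) = S.c1 u t := by
  simp [c1, h]
theorem c2_succ_of_type1 {t : ℕ} (h : S.type1 u t) : S.c2 u (t + 1) = S.c2 u t := by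
  simp [c2, h]
theorem c2_succ_of_not {t : ℕ} (h : ¬ S.type1 u t) : S.c2 u (t + 1) = S.c2 u t + 1 := by
  simp [c2, h]

theorem exists_c1_eq {k t : ℕ} (h : k ≤ S.c1 u t) : ∃ s, s ≤ t ∧ S.c1 u s = k :=
  nat_ivt rfl (S.c1_succ_le u) h
theorem exists_c2_eq {k t : ℕ} (h : k ≤ S.c2 u t) : ∃ s, s ≤ t ∧ S.c2 u s = k :=
  nat_ivt rfl (S.c2_succ_le u) h

theorem step1 (hu : ∀ t, S.P.Adj (u t) (u (t + 1))) {t : ℕ} (h : S.type1 u t) :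
    S.F₁.Adj (S.p1 (u t)) (S.p1 (u (t + 1))) ∧ S.p2 (u (t + 1)) = S.p2 (u t) := by
  rcases (S.adj_iff _ _).1 (hu t) with ⟨h1, h2⟩ | ⟨h1, h2⟩
  · exact ⟨h1, h2.symm⟩
  · exact absurd h1.symm h

theorem step2 (hu : ∀ t, S.P.Adj (u t) (u (t + 1))) {t : ℕ} (h : ¬ S.type1 u t) :
    S.p1 (u (t + 1)) = S.p1 (u t) ∧ S.F₂.Adj (S.p2 (u t)) (S.p2 (u (t + 1))) := by
  have hp1 : S.p1 (u (t + 1)) = S.p1 (u t) := by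
    by_contra hne; exact h hne
  rcases (S.adj_iff _ _).1 (hu t) with ⟨h1, h2⟩ | ⟨h1, h2⟩
  · rw [hp1] at h1
    exact absurd h1 (S.F₁.loopless.irrefl _)
  · exact ⟨hp1, h2⟩

theorem p1_const (hu : ∀ t, S.P.Adj (u t) (u (t + 1))) {s t : ℕ} (hst : s ≤ t)
    (hc : S.c1 u s = S.c1 u t) : S.p1 (u s) = S.p1 (u t) := by
  induction t with
  | zero => have : s = 0 := by omega
            rw [this]
  | succ t ih =>
    rcases Nat.lt_or_ge s (t + 1) with hlt | hge
    · have hst' : s ≤ t := by omega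
      have h1 : S.c1 u s ≤ S.c1 u t := S.c1_mono u hst'
      have h2 : S.c1 u t ≤ S.c1 u (t + 1) := S.c1_le_succ u t
      have hceq : S.c1 u s = S.c1 u t := by omega
      have hnt : ¬ S.type1 u t := by
        intro hh
        have := S.c1_succ_of_type1 u hh
        omega
      rw [ih hst' hceq]
      exact ((S.step2 u hu hnt).1).symm
    · have : s = t + 1 := by omega
      rw [this]

theorem p2_const (hu : ∀ t, S.P.Adj (u t) (u (t + 1))) {s t : ℕ} (hst : s ≤ t)
    (hc : S.c2 u s = S.c2 u t) : S.p2 (u s) = S.p2 (u t) := by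
  induction t with
  | zero => have : s = 0 := by omega
            rw [this]
  | succ t ih =>
    rcases Nat.lt_or_ge s (t + 1) with hlt | hge
    · have hst' : s ≤ t := by omega
      have h1 : S.c2 u s ≤ S.c2 u t := S.c2_mono u hst'
      have h2 : S.c2 u t ≤ S.c2 u (t + 1) := S.c2_le_succ u t
      have hceq : S.c2 u s = S.c2 u t := by omega
      have hnt : S.type1 u t := by
        by_contra hh
        have := S.c2_succ_of_not u hh
        omega
      rw [ih hst' hceq]
      exact (S.step1 u hu hnt).2.symm
    · have : s = t + 1 := by omega
      rw [this]

/-- Length of the chosen trailing walk towards the robber's initial position. -/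
def R : ℕ := (S.wk (S.p2 (u 0))).length

/-- The trailing walk in the second factor, extended by the robber's
second-factor moves. -/
def trail2 (k : ℕ) : W₂ :=
  if k ≤ S.R u then (S.wk (S.p2 (u 0))).getVert k
  else if h : ∃ s, S.c2 u s = k - S.R u then S.p2 (u (nfind h)) else S.w0

theorem trail2_zero : S.trail2 u 0 = S.w0 := by
  simp [trail2]

theorem trail2_R : S.trail2 u (S.R u) = S.p2 (u 0) := by
  have : S.trail2 u (S.R u) = (S.wk (S.p2 (u 0))).getVert (S.R u) := by
    simp [trail2]
  rw [this, R, SimpleGraph.Walk.getVert_length]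

theorem w0_eq_of_R_zero (h : S.R u = 0) : S.w0 = S.p2 (u 0) :=
  walk_len_zero _ h

/-- If exactly `R` first-factor moves have happened by time `t`, the trail
position at index `t` is the robber's current second coordinate. -/
theorem trail2_cur (hu : ∀ t, S.P.Adj (u t) (u (t + 1))) {t : ℕ}
    (h : S.c1 u t = S.R u) : S.trail2 u t = S.p2 (u t) := by
  have hsum := S.c1_add_c2 u t
  rcases Nat.eq_zero_or_pos (S.c2 u t) with h2 | h2
  · have ht : t = S.R u := by omega
    have hcur : S.p2 (u 0) = S.p2 (u t) :=
      S.p2_const u hu (Nat.zero_le t) (by rw [h2]; rfl)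
    rw [ht] at hcur ⊢
    rw [S.trail2_R u, hcur]
  · have hgt : S.R u < t := by omega
    have hex : ∃ s, S.c2 u s = t - S.R u := ⟨t, by omega⟩
    have : S.trail2 u t = S.p2 (u (nfind hex)) := by
      rw [trail2, if_neg (by omega), dif_pos hex]
    rw [this]
    have hf1 : S.c2 u (nfind hex) = t - S.R u := nfind_spec hex
    have hf2 : nfind hex ≤ t := nfind_min' hex (by omega)
    exact S.p2_const u hu hf2 (by omega)

/-- Consecutive trail positions are adjacent in the second factor. -/
theorem trail2_adj (hu : ∀ t, S.P.Adj (u t) (u (t + 1))) {k t₀ : ℕ}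
    (hk : k + 1 ≤ S.R u + S.c2 u t₀) :
    S.F₂.Adj (S.trail2 u k) (S.trail2 u (k + 1)) := by
  rcases le_or_gt (k + 1) (S.R u) with hle | hgt
  · have hkle : k ≤ S.R u := by omega
    have h1 : S.trail2 u k = (S.wk (S.p2 (u 0))).getVert k := by
      rw [trail2, if_pos hkle]
    have h2 : S.trail2 u (k + 1) = (S.wk (S.p2 (u 0))).getVert (k + 1) := by
      rw [trail2, if_pos hle]
    rw [h1, h2]
    refine (S.wk (S.p2 (u 0))).adj_getVert_succ ?_
    have hRlen : S.R u = (S.wk (S.p2 (u 0))).length := rfl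
    omega
  · -- k + 1 = R + M with M ≥ 1
    have hM : 1 ≤ k + 1 - S.R u := by omega
    have hMle : k + 1 - S.R u ≤ S.c2 u t₀ := by omega
    obtain ⟨s₁w, hs₁w, hcs₁w⟩ := S.exists_c2_eq u hMle
    have hex : ∃ s, S.c2 u s = k + 1 - S.R u := ⟨s₁w, hcs₁w⟩
    have h2 : S.trail2 u (k + 1) = S.p2 (u (nfind hex)) := by
      rw [trail2, if_neg (by omega), dif_pos hex]
    have hspec : S.c2 u (nfind hex) = k + 1 - S.R u := nfind_spec hex
    have hpos : 0 < nfind hex := by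
      rcases Nat.eq_zero_or_pos (nfind hex) with h0 | h0
      · exfalso
        rw [h0] at hspec
        have : S.c2 u 0 = 0 := rfl
        omega
      · exact h0
    obtain ⟨s, hs1⟩ : ∃ s, nfind hex = s + 1 := ⟨nfind hex - 1, by omega⟩
    rw [hs1] at h2 hspec
    have hmin : ¬ (S.c2 u s = k + 1 - S.R u) := nfind_min hex (by omega)
    have hstep := S.c2_succ_le u s
    have hmono := S.c2_le_succ u s
    have hcs : S.c2 u s = k - S.R u := by omega
    have hnt : ¬ S.type1 u s := by
      intro hh
      have := S.c2_succ_of_type1 u hh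
      omega
    have hadj := (S.step2 u hu hnt).2
    -- identify trail2 k with p2 (u s)
    rcases le_or_gt k (S.R u) with hkle | hkgt
    · have hkR : k = S.R u := by omega
      have h1 : S.trail2 u k = S.p2 (u 0) := by rw [hkR]; exact S.trail2_R u
      have : S.p2 (u 0) = S.p2 (u s) :=
        S.p2_const u hu (Nat.zero_le s) (by show (0:ℕ) = S.c2 u s; omega)
      rw [h1, h2, this]
      exact hadj
    · have hex' : ∃ s', S.c2 u s' = k - S.R u := ⟨s, hcs⟩
      have h1 : S.trail2 u k = S.p2 (u (nfind hex')) := by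
        rw [trail2, if_neg (by omega), dif_pos hex']
      have hsp' : S.c2 u (nfind hex') = k - S.R u := nfind_spec hex'
      have hle' : nfind hex' ≤ s := nfind_min' hex' hcs
      have : S.p2 (u (nfind hex')) = S.p2 (u s) :=
        S.p2_const u hu hle' (by omega)
      rw [h1, h2, this]
      exact hadj

/-- The simulated robber's position in the first factor. -/
def rho1 (k : ℕ) : W₁ :=
  if h : ∃ s, S.c1 u s = S.R u + k then S.p1 (u (nfind h)) else S.p1 (u 0)

/-- The simulated play of the team's cop strategy against the simulated robber. -/
def simSt : ℕ → List (CRConfig W₁ S.m) × CRConfig W₁ S.m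
  | 0 => ([], (S.cs.init, S.rho1 u 0))
  | k + 1 =>
    let p := simSt k
    (p.1 ++ [p.2], (S.cs.move p.1 p.2, S.rho1 u (k + 1)))

/-- Simulated cop positions after `k` rounds of cop moves. -/
def simC (k : ℕ) : Fin S.m → W₁ := (S.simSt u k).2.1

theorem simSt_len (k : ℕ) : (S.simSt u k).1.length = k := by
  induction k with
  | zero => rfl
  | succ k ih => simp [simSt, ih]

theorem simSt_snd (k : ℕ) : (S.simSt u k).2.2 = S.rho1 u k := by
  cases k <;> rfl

theorem simC_zero : S.simC u 0 = S.cs.init := rfl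

theorem simC_succ (k : ℕ) :
    S.simC u (k + 1) = S.cs.move (S.simSt u k).1 (S.simSt u k).2 := rfl

theorem simC_adj (k : ℕ) (i : Fin S.m) :
    S.F₁.Adj (S.simC u k i) (S.simC u (k + 1) i) :=
  S.cs.move_adj (S.simSt u k).1 (S.simSt u k).2 i

/-- The intended position of team cop `i` at time `t`. -/
def teamPos : ℕ → Fin S.m → V
  | 0, i => S.pk (S.cs.init i) S.w0
  | t + 1, i =>
    if S.c1 u t < S.R u then S.pk (S.cs.init i) (S.trail2 u (t + 1))
    else S.pk (S.simC u (S.c1 u t - S.R u + 1) i) (S.p2 (u t))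

theorem pk_adj1 {x x' : W₁} (y : W₂) (h : S.F₁.Adj x x') :
    S.P.Adj (S.pk x y) (S.pk x' y) :=
  (S.adj_iff _ _).2 (Or.inl ⟨by rw [S.p1_pk, S.p1_pk]; exact h, by rw [S.p2_pk, S.p2_pk]⟩)

theorem pk_adj2 (x : W₁) {y y' : W₂} (h : S.F₂.Adj y y') :
    S.P.Adj (S.pk x y) (S.pk x y') :=
  (S.adj_iff _ _).2 (Or.inr ⟨by rw [S.p1_pk, S.p1_pk], by rw [S.p2_pk, S.p2_pk]; exact h⟩)

theorem teamPos_zero (i : Fin S.m) : S.teamPos u 0 i = S.pk (S.cs.init i) S.w0 := rfl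

theorem teamPos_succ (t : ℕ) (i : Fin S.m) :
    S.teamPos u (t + 1) i =
      if S.c1 u t < S.R u then S.pk (S.cs.init i) (S.trail2 u (t + 1))
      else S.pk (S.simC u (S.c1 u t - S.R u + 1) i) (S.p2 (u t)) := rfl

/-- The team's intended positions always move along an edge of the product. -/
theorem teamPos_adj (hu : ∀ t, S.P.Adj (u t) (u (t + 1))) (t : ℕ) (i : Fin S.m) :
    S.P.Adj (S.teamPos u t i) (S.teamPos u (t + 1) i) := by
  have hinit_adj : S.F₁.Adj (S.cs.init i) (S.simC u 1 i) := by
    have := S.simC_adj u 0 i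
    rwa [S.simC_zero u] at this
  cases t with
  | zero =>
    rw [S.teamPos_zero u, S.teamPos_succ u]
    have hc10 : S.c1 u 0 = 0 := rfl
    rcases Nat.lt_or_ge 0 (S.R u) with hR | hR
    · rw [if_pos (by omega), ← S.trail2_zero u]
      refine S.pk_adj2 _ (S.trail2_adj u hu (t₀ := 0) ?_)
      have : S.c2 u 0 = 0 := rfl
      omega
    · have hR0 : S.R u = 0 := by omega
      rw [if_neg (by omega), S.w0_eq_of_R_zero u hR0]
      have : S.c1 u 0 - S.R u + 1 = 1 := by omega
      rw [this]
      exact S.pk_adj1 _ hinit_adj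
  | succ t =>
    rw [S.teamPos_succ u t, S.teamPos_succ u (t + 1)]
    rcases Nat.lt_or_ge (S.c1 u (t + 1)) (S.R u) with hpost | hpost
    · have hpre : S.c1 u t < S.R u := lt_of_le_of_lt (S.c1_le_succ u t) hpost
      rw [if_pos hpre, if_pos hpost]
      refine S.pk_adj2 _ (S.trail2_adj u hu (t₀ := t + 1) ?_)
      have := S.c1_add_c2 u (t + 1)
      omega
    · have hnot2 : ¬ (S.c1 u (t + 1) < S.R u) := by omega
      rw [if_neg hnot2]
      rcases Nat.lt_or_ge (S.c1 u t) (S.R u) with hpre | hpre2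
      · -- boundary step: establishment happens at time t+1
        have hR : S.c1 u (t + 1) = S.R u := by
          have := S.c1_succ_le u t; omega
        have h1 : S.c1 u (t + 1) - S.R u + 1 = 1 := by omega
        rw [if_pos hpre, h1, S.trail2_cur u hu hR]
        have htype : S.type1 u t := by
          by_contra hh
          have := S.c1_succ_of_not u hh; omega
        exact S.pk_adj1 _ hinit_adj
      · have hnot1 : ¬ (S.c1 u t < S.R u) := by omega
        rw [if_neg hnot1]
        by_cases htype : S.type1 u t
        · have hc : S.c1 u (t + 1) = S.c1 u t + 1 := S.c1_succ_of_type1 u htype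
          have h1 : S.c1 u (t + 1) - S.R u + 1 = (S.c1 u t - S.R u + 1) + 1 := by omega
          have hp2 : S.p2 (u (t + 1)) = S.p2 (u t) := (S.step1 u hu htype).2
          rw [h1, hp2]
          exact S.pk_adj1 _ (S.simC_adj u _ i)
        · have hc : S.c1 u (t + 1) = S.c1 u t := S.c1_succ_of_not u htype
          rw [hc]
          exact S.pk_adj2 _ (S.step2 u hu htype).2

section Congr
variable {u' : ℕ → V} {t : ℕ}

theorem c1_congr (hag : ∀ k, k ≤ t → u k = u' k) :
    ∀ s, s ≤ t → S.c1 u s = S.c1 u' s := by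
  intro s
  induction s with
  | zero => intro _; rfl
  | succ s ih =>
    intro hs
    have h1 := ih (by omega)
    have ht : S.type1 u s ↔ S.type1 u' s := by
      unfold type1
      rw [hag s (by omega), hag (s + 1) hs]
    by_cases h : S.type1 u s
    · rw [S.c1_succ_of_type1 u h, S.c1_succ_of_type1 u' (ht.1 h), h1]
    · rw [S.c1_succ_of_not u h, S.c1_succ_of_not u' (fun hh => h (ht.2 hh)), h1]

theorem c2_congr (hag : ∀ k, k ≤ t → u k = u' k) :
    ∀ s, s ≤ t → S.c2 u s = S.c2 u' s := by
  intro s hs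
  have h1 := S.c1_congr u hag s hs
  have h2 := S.c1_add_c2 u s
  have h3 := S.c1_add_c2 u' s
  omega

theorem R_congr (hag : ∀ k, k ≤ t → u k = u' k) : S.R u = S.R u' := by
  unfold R
  rw [hag 0 (Nat.zero_le t)]

theorem trail2_congr (hag : ∀ k, k ≤ t → u k = u' k) (hpre : S.c1 u t < S.R u) :
    S.trail2 u (t + 1) = S.trail2 u' (t + 1) := by
  have h0 : u 0 = u' 0 := hag 0 (Nat.zero_le t)
  have hR : S.R u = S.R u' := S.R_congr u hag
  by_cases hc : t + 1 ≤ S.R u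
  · rw [trail2, if_pos hc, trail2, if_pos (hR ▸ hc)]
    rw [h0]
  · have hc' : ¬ (t + 1 ≤ S.R u') := by omega
    have hwit : t + 1 - S.R u ≤ S.c2 u t := by
      have := S.c1_add_c2 u t
      omega
    obtain ⟨sw, hswle, hsw⟩ := S.exists_c2_eq u hwit
    have hexu : ∃ s, S.c2 u s = t + 1 - S.R u := ⟨sw, hsw⟩
    have hexu' : ∃ s, S.c2 u' s = t + 1 - S.R u' := by
      refine ⟨sw, ?_⟩
      rw [← S.c2_congr u hag sw hswle, ← hR]
      exact hsw
    have hiff : ∀ n, n ≤ t → (S.c2 u n = t + 1 - S.R u ↔ S.c2 u' n = t + 1 - S.R u') := by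
      intro n hn
      rw [S.c2_congr u hag n hn, hR]
    obtain ⟨hfe, hfle⟩ := find_eq_of_agree hexu hexu' t hiff ⟨sw, hswle, hsw⟩
    rw [trail2, if_neg hc, dif_pos hexu, trail2, if_neg hc', dif_pos hexu', ← hfe,
      hag _ hfle]

theorem rho1_congr (hag : ∀ k, k ≤ t → u k = u' k) {j : ℕ}
    (hin : S.R u + j ≤ S.c1 u t) : S.rho1 u j = S.rho1 u' j := by
  have hR : S.R u = S.R u' := S.R_congr u hag
  obtain ⟨sw, hswle, hsw⟩ := S.exists_c1_eq u hin
  have hexu : ∃ s, S.c1 u s = S.R u + j := ⟨sw, hsw⟩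
  have hexu' : ∃ s, S.c1 u' s = S.R u' + j := by
    refine ⟨sw, ?_⟩
    rw [← S.c1_congr u hag sw hswle, ← hR]
    exact hsw
  have hiff : ∀ n, n ≤ t → (S.c1 u n = S.R u + j ↔ S.c1 u' n = S.R u' + j) := by
    intro n hn
    rw [S.c1_congr u hag n hn, hR]
  obtain ⟨hfe, hfle⟩ := find_eq_of_agree hexu hexu' t hiff ⟨sw, hswle, hsw⟩
  rw [rho1, dif_pos hexu, rho1, dif_pos hexu', ← hfe, hag _ hfle]

theorem simC_congr {K : ℕ} (hyp : ∀ j, j < K → S.rho1 u j = S.rho1 u' j) :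
    (S.simSt u K).1 = (S.simSt u' K).1 ∧ (S.simSt u K).2.1 = (S.simSt u' K).2.1 := by
  induction K with
  | zero => exact ⟨rfl, rfl⟩
  | succ K ih =>
    obtain ⟨ih1, ih2⟩ := ih (fun j hj => hyp j (by omega))
    have h2 : (S.simSt u K).2 = (S.simSt u' K).2 := by
      refine Prod.ext_iff.mpr ⟨ih2, ?_⟩
      rw [S.simSt_snd u, S.simSt_snd u', hyp K (by omega)]
    constructor
    · show (S.simSt u K).1 ++ [(S.simSt u K).2] = (S.simSt u' K).1 ++ [(S.simSt u' K).2]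
      rw [ih1, h2]
    · show S.cs.move (S.simSt u K).1 (S.simSt u K).2 = S.cs.move (S.simSt u' K).1 (S.simSt u' K).2
      rw [ih1, h2]

theorem teamPos_congr (hag : ∀ k, k ≤ t → u k = u' k) (i : Fin S.m) :
    S.teamPos u (t + 1) i = S.teamPos u' (t + 1) i := by
  have hR : S.R u = S.R u' := S.R_congr u hag
  have hc1 : S.c1 u t = S.c1 u' t := S.c1_congr u hag t le_rfl
  by_cases hpre : S.c1 u t < S.R u
  · rw [S.teamPos_succ u, if_pos hpre, S.teamPos_succ u', if_pos (by omega),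
      S.trail2_congr u hag hpre]
  · rw [S.teamPos_succ u, if_neg hpre, S.teamPos_succ u', if_neg (by omega)]
    have hsim : S.simC u (S.c1 u t - S.R u + 1) i = S.simC u' (S.c1 u t - S.R u + 1) i := by
      have := (S.simC_congr u (u' := u') (K := S.c1 u t - S.R u + 1)
        (fun j hj => S.rho1_congr u hag (j := j) (by omega))).2
      rw [simC, simC, this]
    have harg : S.c1 u' t - S.R u' + 1 = S.c1 u t - S.R u + 1 := by omega
    rw [harg, ← hsim, hag t le_rfl]

end Congr

/-- Core lemma: if the robber makes unboundedly many first-factor moves, the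
team following `teamPos` captures him. -/
theorem capture (hu : ∀ t, S.P.Adj (u t) (u (t + 1)))
    (hwin : ∀ rs : ActiveRobberStrategy S.F₁ S.m, ActiveCapture S.cs rs)
    (hunb : ∀ M : ℕ, ∃ t, M ≤ S.c1 u t) :
    ∃ t, (∃ i, S.teamPos u t i = u t) ∨ (∃ i, S.teamPos u (t + 1) i = u t) := by
  have hex : ∀ j : ℕ, ∃ s, S.c1 u s = S.R u + j := by
    intro j
    obtain ⟨t, ht⟩ := hunb (S.R u + j)
    obtain ⟨s, _, hs⟩ := S.exists_c1_eq u ht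
    exact ⟨s, hs⟩
  have hσspec : ∀ j, S.c1 u (nfind (hex j)) = S.R u + j := fun j => nfind_spec (hex j)
  have hσmin : ∀ j s, s < nfind (hex j) → S.c1 u s ≠ S.R u + j :=
    fun j s hs => nfind_min (hex j) hs
  have hσmono : ∀ j, nfind (hex j) < nfind (hex (j + 1)) := by
    intro j
    by_contra h
    push_neg at h
    have h2 := S.c1_mono u h
    rw [hσspec, hσspec] at h2
    omega
  have hσsucc : ∀ j, ∃ s, nfind (hex (j + 1)) = s + 1 ∧ S.c1 u s = S.R u + j ∧
      S.type1 u s := by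
    intro j
    have hpos : 0 < nfind (hex (j + 1)) := lt_of_le_of_lt (Nat.zero_le _) (hσmono j)
    obtain ⟨s, hs⟩ : ∃ s, nfind (hex (j + 1)) = s + 1 := ⟨nfind (hex (j + 1)) - 1, by omega⟩
    have h1 : S.c1 u (s + 1) = S.R u + (j + 1) := by rw [← hs]; exact hσspec (j + 1)
    have h2 : S.c1 u s ≠ S.R u + (j + 1) := hσmin (j + 1) s (by omega)
    have h3 := S.c1_succ_le u s
    have h4 := S.c1_le_succ u s
    have hcs : S.c1 u s = S.R u + j := by omega
    have htype : S.type1 u s := by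
      by_contra hh
      have := S.c1_succ_of_not u hh
      omega
    exact ⟨s, hs, hcs, htype⟩
  have hrho : ∀ j, S.rho1 u j = S.p1 (u (nfind (hex j))) := by
    intro j
    rw [rho1, dif_pos (hex j)]
  have hrho_adj : ∀ j, S.F₁.Adj (S.rho1 u j) (S.rho1 u (j + 1)) := by
    intro j
    obtain ⟨s, hs, hcs, htype⟩ := hσsucc j
    have hle : nfind (hex j) ≤ s := by
      have := hσmono j
      omega
    have h1 : S.p1 (u (nfind (hex j))) = S.p1 (u s) :=
      S.p1_const u hu hle (by rw [hσspec j, hcs])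
    rw [hrho j, hrho (j + 1), hs, h1]
    exact (S.step1 u hu htype).1
  have hnb : ∀ x : W₁, ∃ y, S.F₁.Adj x y := by
    obtain ⟨s, hs, hcs, htype⟩ := hσsucc 0
    exact fun v => exists_nbr S.conn1 (S.step1 u hu htype).1 v
  -- the induced robber strategy on the first factor
  let rs : ActiveRobberStrategy S.F₁ S.m :=
    { init := fun _ => S.rho1 u 0
      move := fun h c =>
        if hA : S.F₁.Adj c.2 (S.rho1 u (h.length + 1)) then S.rho1 u (h.length + 1)
        else Classical.choose (hnb c.2)
      move_adj := by
        intro h c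
        split
        · assumption
        · exact Classical.choose_spec (hnb c.2) }
  have hsim : ∀ k, crPlay S.m S.cs.init rs.init S.cs.move rs.move k = S.simSt u k := by
    intro k
    induction k with
    | zero => rfl
    | succ k ih =>
      have e : crPlay S.m S.cs.init rs.init S.cs.move rs.move (k + 1) =
          ((crPlay S.m S.cs.init rs.init S.cs.move rs.move k).1 ++
            [(crPlay S.m S.cs.init rs.init S.cs.move rs.move k).2],
           (S.cs.move (crPlay S.m S.cs.init rs.init S.cs.move rs.move k).1
              (crPlay S.m S.cs.init rs.init S.cs.move rs.move k).2,
            rs.move (crPlay S.m S.cs.init rs.init S.cs.move rs.move k).1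
              (S.cs.move (crPlay S.m S.cs.init rs.init S.cs.move rs.move k).1
                (crPlay S.m S.cs.init rs.init S.cs.move rs.move k).2,
               (crPlay S.m S.cs.init rs.init S.cs.move rs.move k).2.2))) := rfl
      rw [e, ih]
      have hmv : rs.move (S.simSt u k).1
          (S.cs.move (S.simSt u k).1 (S.simSt u k).2, (S.simSt u k).2.2) =
          S.rho1 u (k + 1) := by
        show (if hA : S.F₁.Adj (S.simSt u k).2.2 (S.rho1 u ((S.simSt u k).1.length + 1))
          then S.rho1 u ((S.simSt u k).1.length + 1)
          else Classical.choose (hnb (S.simSt u k).2.2)) = S.rho1 u (k + 1)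
        rw [S.simSt_len u k, S.simSt_snd u k, dif_pos (hrho_adj k)]
      rw [hmv]
      rfl
  have hcap := hwin rs
  obtain ⟨k, hk⟩ := hcap
  rw [hsim k] at hk
  rcases hk with ⟨i, hi⟩ | ⟨i, hi⟩
  · -- the simulated robber runs into a cop
    refine ⟨nfind (hex k), Or.inl ⟨i, ?_⟩⟩
    have hI1 : S.teamPos u (nfind (hex k)) i =
        S.pk (S.simC u k i) (S.p2 (u (nfind (hex k)))) := by
      cases k with
      | zero =>
        rcases Nat.eq_zero_or_pos (nfind (hex 0)) with h0 | h0
        · have hR0 : S.R u = 0 := by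
            have := hσspec 0
            rw [h0] at this
            have hz : S.c1 u 0 = 0 := rfl
            omega
          rw [h0, S.teamPos_zero u, S.simC_zero u, S.w0_eq_of_R_zero u hR0]
        · obtain ⟨s, hs⟩ : ∃ s, nfind (hex 0) = s + 1 := ⟨nfind (hex 0) - 1, by omega⟩
          have hlt : S.c1 u s < S.R u := by
            have hne : S.c1 u s ≠ S.R u + 0 := hσmin 0 s (by omega)
            have hmono : S.c1 u s ≤ S.c1 u (s + 1) := S.c1_le_succ u s
            have := hσspec 0
            rw [hs] at this
            omega
          rw [hs, S.teamPos_succ u, if_pos hlt, S.simC_zero u]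
          have hcur : S.c1 u (s + 1) = S.R u := by
            have := hσspec 0
            rw [hs] at this
            omega
          rw [S.trail2_cur u hu hcur]
      | succ j =>
        obtain ⟨s, hs, hcs, htype⟩ := hσsucc j
        rw [hs, S.teamPos_succ u, if_neg (by omega)]
        have harg : S.c1 u s - S.R u + 1 = j + 1 := by omega
        rw [harg, (S.step1 u hu htype).2]
    rw [hI1]
    have hiv : S.simC u k i = S.p1 (u (nfind (hex k))) := by
      have : S.simC u k i = (S.simSt u k).2.2 := hi
      rw [this, S.simSt_snd u k, hrho k]
    rw [hiv, S.pk_eta]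
  · -- a simulated cop move lands on the simulated robber
    refine ⟨nfind (hex k), Or.inr ⟨i, ?_⟩⟩
    have hge : ¬ (S.c1 u (nfind (hex k)) < S.R u) := by
      have := hσspec k
      omega
    rw [S.teamPos_succ u, if_neg hge]
    have harg : S.c1 u (nfind (hex k)) - S.R u + 1 = k + 1 := by
      have := hσspec k
      omega
    rw [harg]
    have hiv : S.simC u (k + 1) i = S.p1 (u (nfind (hex k))) := by
      rw [S.simC_succ u k]
      show S.cs.move (S.simSt u k).1 (S.simSt u k).2 i = _
      rw [hi, S.simSt_snd u k, hrho k]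
    rw [hiv, S.pk_eta]

end SideData

/-- Combined positions of the two teams. -/
def combPos {V WA1 WA2 WB1 WB2 : Type u} (SA : SideData V WA1 WA2)
    (SB : SideData V WB1 WB2) (u : ℕ → V) (t : ℕ) : Fin (SA.m + SB.m) → V :=
  Fin.addCases (fun i => SA.teamPos u t i) (fun j => SB.teamPos u t j)

theorem combPos_left {V WA1 WA2 WB1 WB2 : Type u} (SA : SideData V WA1 WA2)
    (SB : SideData V WB1 WB2) (u : ℕ → V) (t : ℕ) (i : Fin SA.m) :
    combPos SA SB u t (Fin.castAdd SB.m i) = SA.teamPos u t i := by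
  simp [combPos]

theorem combPos_right {V WA1 WA2 WB1 WB2 : Type u} (SA : SideData V WA1 WA2)
    (SB : SideData V WB1 WB2) (u : ℕ → V) (t : ℕ) (j : Fin SB.m) :
    combPos SA SB u t (Fin.natAdd SA.m j) = SB.teamPos u t j := by
  simp [combPos]

theorem combPos_congr {V WA1 WA2 WB1 WB2 : Type u} (SA : SideData V WA1 WA2)
    (SB : SideData V WB1 WB2) {u u' : ℕ → V} {t : ℕ}
    (hag : ∀ k, k ≤ t → u k = u' k) (i : Fin (SA.m + SB.m)) :
    combPos SA SB u (t + 1) i = combPos SA SB u' (t + 1) i := by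
  refine Fin.addCases (motive := fun i =>
    combPos SA SB u (t + 1) i = combPos SA SB u' (t + 1) i) ?_ ?_ i
  · intro i
    rw [combPos_left, combPos_left]
    exact SA.teamPos_congr u hag i
  · intro j
    rw [combPos_right, combPos_right]
    exact SB.teamPos_congr u hag j

theorem combPos_adj {V WA1 WA2 WB1 WB2 : Type u} (SA : SideData V WA1 WA2)
    (SB : SideData V WB1 WB2) (hP : SA.P = SB.P) (u : ℕ → V)
    (hu : ∀ t, SA.P.Adj (u t) (u (t + 1))) (t : ℕ) (i : Fin (SA.m + SB.m)) :
    SA.P.Adj (combPos SA SB u t i) (combPos SA SB u (t + 1) i) := by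
  refine Fin.addCases (motive := fun i =>
    SA.P.Adj (combPos SA SB u t i) (combPos SA SB u (t + 1) i)) ?_ ?_ i
  · intro i
    rw [combPos_left, combPos_left]
    exact SA.teamPos_adj u hu t i
  · intro j
    rw [combPos_right, combPos_right, hP]
    exact SB.teamPos_adj u (by rw [← hP]; exact hu) t j

/-- Any finite connected-ish graph admits a winning active cop strategy for
some number of cops. -/
theorem winnable_nonempty {V : Type u} [Fintype V] [Nonempty V] (X : SimpleGraph V) :
    ∃ n, ActiveCopsWin X n := by
  by_cases hX : ∀ v : V, ∃ w, X.Adj v w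
  · refine ⟨Fintype.card V,
      ⟨{ init := fun i => (Fintype.equivFin V).symm i
         move := fun _ c i => Classical.choose (hX (c.1 i))
         move_adj := fun _ c i => Classical.choose_spec (hX (c.1 i)) }, ?_⟩⟩
    intro rs
    refine ⟨0, Or.inl ⟨Fintype.equivFin V (rs.init fun i => (Fintype.equivFin V).symm i), ?_⟩⟩
    exact (Fintype.equivFin V).symm_apply_apply _
  · push_neg at hX
    obtain ⟨v, hv⟩ := hX
    refine ⟨0,
      ⟨{ init := Fin.elim0
         move := fun _ _ i => Fin.elim0 i
         move_adj := fun _ _ i => Fin.elim0 i }, ?_⟩⟩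
    intro rs
    exact absurd (rs.move_adj [] (Fin.elim0, v)) (hv _)

end
end AcopAux
/-- If `G` is a non-bipartite finite connected graph and `H` is any finite
connected graph, then `acop(H □ G) ≤ acop(H) + acop(G)`. -/
theorem acop_boxProd_le_of_not_bipartite {V₁ : Type u} {V₂ : Type u}
    [Fintype V₁] [Fintype V₂] (H : SimpleGraph V₁) (G : SimpleGraph V₂)
    (hconnH : H.Connected) (hconnG : G.Connected)
    (hnb : ¬ G.Colorable 2) :
    acop (H.boxProd G) ≤ acop H + acop G := by
  classical
  haveI hne1 : Nonempty V₁ := hconnH.nonempty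
  haveI hne2 : Nonempty V₂ := hconnG.nonempty
  have hGedge : ∃ x y : V₂, G.Adj x y := by
    by_contra h
    push_neg at h
    exact hnb ⟨⟨fun _ => 0, fun {x y} hxy => absurd hxy (h x y)⟩⟩
  obtain ⟨x₂, y₂, hx₂⟩ := hGedge
  have hGnb : ∀ g : V₂, ∃ g', G.Adj g g' := fun g => AcopAux.exists_nbr hconnG hx₂ g
  set a := acop H with ha
  set b := acop G with hb
  obtain ⟨csH, hcsH⟩ : ActiveCopsWin H a :=
    Nat.sInf_mem (AcopAux.winnable_nonempty H)
  obtain ⟨csG, hcsG⟩ : ActiveCopsWin G b :=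
    Nat.sInf_mem (AcopAux.winnable_nonempty G)
  let SA : AcopAux.SideData (V₁ × V₂) V₁ V₂ :=
    { F₁ := H, F₂ := G, P := H.boxProd G
      pk := fun x y => (x, y), p1 := Prod.fst, p2 := Prod.snd
      p1_pk := fun _ _ => rfl, p2_pk := fun _ _ => rfl, pk_eta := fun _ => rfl
      adj_iff := by
        intro v v'
        rw [SimpleGraph.boxProd_adj]
        tauto
      conn1 := hconnH, m := a, cs := csH
      w0 := Classical.arbitrary V₂
      wk := fun tgt => (hconnG (Classical.arbitrary V₂) tgt).some }
  let SB : AcopAux.SideData (V₁ × V₂) V₂ V₁ :=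
    { F₁ := G, F₂ := H, P := H.boxProd G
      pk := fun x y => (y, x), p1 := Prod.snd, p2 := Prod.fst
      p1_pk := fun _ _ => rfl, p2_pk := fun _ _ => rfl, pk_eta := fun _ => rfl
      adj_iff := by
        intro v v'
        rw [SimpleGraph.boxProd_adj]
        tauto
      conn1 := hconnG, m := b, cs := csG
      w0 := Classical.arbitrary V₁
      wk := fun tgt => (hconnH (Classical.arbitrary V₁) tgt).some }
  let comb : (ℕ → V₁ × V₂) → ℕ → Fin (a + b) → V₁ × V₂ :=
    fun u t => AcopAux.combPos SA SB u t
  let dflt : V₁ × V₂ → V₁ × V₂ := fun v => (v.1, Classical.choose (hGnb v.2))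
  have hdflt : ∀ v, (H.boxProd G).Adj v (dflt v) := fun v =>
    SimpleGraph.boxProd_adj.2 (Or.inr ⟨Classical.choose_spec (hGnb v.2), rfl⟩)
  let cs : ActiveCopStrategy (H.boxProd G) (a + b) :=
    { init := fun i => comb (fun _ => (Classical.arbitrary V₁, Classical.arbitrary V₂)) 0 i
      move := fun hist c i =>
        if hA : (H.boxProd G).Adj (c.1 i)
            (comb (fun k => (hist.map Prod.snd).getD k c.2) (hist.length + 1) i) then
          comb (fun k => (hist.map Prod.snd).getD k c.2) (hist.length + 1) i
        else dflt (c.1 i)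
      move_adj := by
        intro hist c i
        split
        · assumption
        · exact hdflt _ }
  have hwin : ActiveCopsWin (H.boxProd G) (a + b) := by
    refine ⟨cs, ?_⟩
    intro rs
    set play := fun t => crPlay (a + b) cs.init rs.init cs.move rs.move t with hplay
    let ρ : ℕ → V₁ × V₂ := fun t => (play t).2.2
    have hρadj : ∀ t, (H.boxProd G).Adj (ρ t) (ρ (t + 1)) := by
      intro t
      exact rs.move_adj (play t).1 (cs.move (play t).1 (play t).2, (play t).2.2)
    have hlen : ∀ t, (play t).1.length = t := by
      intro t
      induction t with
      | zero => rfl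
      | succ t ih =>
        have e : (play (t + 1)).1 = (play t).1 ++ [(play t).2] := rfl
        rw [e, List.length_append, ih]
        rfl
    have hmap : ∀ t, (play t).1.map Prod.snd = (List.range t).map ρ := by
      intro t
      induction t with
      | zero => rfl
      | succ t ih =>
        have e : (play (t + 1)).1 = (play t).1 ++ [(play t).2] := rfl
        rw [e, List.map_append, ih, List.range_succ, List.map_append]
        rfl
    have hgetD : ∀ t k, k ≤ t → ((play t).1.map Prod.snd).getD k ((play t).2.2) = ρ k := by
      intro t k hk
      rw [hmap t]
      rcases lt_or_eq_of_le hk with hlt | heq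
      · rw [List.getD_eq_getElem?_getD, List.getElem?_map, List.getElem?_range hlt]
        rfl
      · subst heq
        have hl : (List.map ρ (List.range k)).length ≤ k := by simp
        rw [List.getD_eq_default _ _ hl]
    have hpos : ∀ t i, (play t).2.1 i = comb ρ t i := by
      intro t
      induction t with
      | zero => intro i; rfl
      | succ t ih =>
        intro i
        have e : (play (t + 1)).2.1 i = cs.move (play t).1 (play t).2 i := rfl
        rw [e]
        show (if hA : (H.boxProd G).Adj ((play t).2.1 i)
            (comb (fun k => ((play t).1.map Prod.snd).getD k (play t).2.2)
              ((play t).1.length + 1) i) then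
            comb (fun k => ((play t).1.map Prod.snd).getD k (play t).2.2)
              ((play t).1.length + 1) i
          else dflt ((play t).2.1 i)) = comb ρ (t + 1) i
        have hcombeq : comb (fun k => ((play t).1.map Prod.snd).getD k (play t).2.2)
            ((play t).1.length + 1) i = comb ρ (t + 1) i := by
          rw [hlen t]
          exact AcopAux.combPos_congr SA SB (fun k hk => hgetD t k hk) i
        rw [hcombeq, ih i]
        have hadj : (H.boxProd G).Adj (comb ρ t i) (comb ρ (t + 1) i) :=
          AcopAux.combPos_adj SA SB rfl ρ hρadj t i
        rw [dif_pos hadj]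
    have hmove : ∀ t i, cs.move (play t).1 (play t).2 i = comb ρ (t + 1) i :=
      fun t i => hpos (t + 1) i
    have hsum : ∀ t, SA.c1 ρ t + SB.c1 ρ t = t := by
      intro t
      induction t with
      | zero => rfl
      | succ t ih =>
        rcases SimpleGraph.boxProd_adj.1 (hρadj t) with ⟨hfadj, hseq⟩ | ⟨hsadj, hfeq⟩
        · have h1 : SA.type1 ρ t := hfadj.ne'
          have h2 : ¬ SB.type1 ρ t := by
            show ¬ (ρ (t + 1)).2 ≠ (ρ t).2
            simp [hseq]
          rw [SA.c1_succ_of_type1 ρ h1, SB.c1_succ_of_not ρ h2]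
          omega
        · have h1 : ¬ SA.type1 ρ t := by
            show ¬ (ρ (t + 1)).1 ≠ (ρ t).1
            simp [hfeq]
          have h2 : SB.type1 ρ t := hsadj.ne'
          rw [SA.c1_succ_of_not ρ h1, SB.c1_succ_of_type1 ρ h2]
          omega
    show ∃ t, (∃ i, (play t).2.1 i = (play t).2.2) ∨
        (∃ i, cs.move (play t).1 (play t).2 i = (play t).2.2)
    by_cases hHinf : ∀ M : ℕ, ∃ t, M ≤ SA.c1 ρ t
    · obtain ⟨t, hcap⟩ := SA.capture ρ hρadj hcsH hHinf
      rcases hcap with ⟨i, hi⟩ | ⟨i, hi⟩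
      · refine ⟨t, Or.inl ⟨Fin.castAdd SB.m i, ?_⟩⟩
        rw [hpos t]
        show AcopAux.combPos SA SB ρ t (Fin.castAdd SB.m i) = (play t).2.2
        rw [AcopAux.combPos_left]
        exact hi
      · refine ⟨t, Or.inr ⟨Fin.castAdd SB.m i, ?_⟩⟩
        rw [hmove t]
        show AcopAux.combPos SA SB ρ (t + 1) (Fin.castAdd SB.m i) = (play t).2.2
        rw [AcopAux.combPos_left]
        exact hi
    · push_neg at hHinf
      obtain ⟨M, hM⟩ := hHinf
      have hGinf : ∀ M' : ℕ, ∃ t, M' ≤ SB.c1 ρ t := by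
        intro M'
        refine ⟨M' + M, ?_⟩
        have h1 := hsum (M' + M)
        have h2 := hM (M' + M)
        omega
      obtain ⟨t, hcap⟩ := SB.capture ρ hρadj hcsG hGinf
      rcases hcap with ⟨i, hi⟩ | ⟨i, hi⟩
      · refine ⟨t, Or.inl ⟨Fin.natAdd SA.m i, ?_⟩⟩
        rw [hpos t]
        show AcopAux.combPos SA SB ρ t (Fin.natAdd SA.m i) = (play t).2.2
        rw [AcopAux.combPos_right]
        exact hi
      · refine ⟨t, Or.inr ⟨Fin.natAdd SA.m i, ?_⟩⟩
        rw [hmove t]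
        show AcopAux.combPos SA SB ρ (t + 1) (Fin.natAdd SA.m i) = (play t).2.2
        rw [AcopAux.combPos_right]
        exact hi
  exact Nat.sInf_le hwin
end

section
/- Let T_1 and T_2 be trees each with at least two vertices, and consider the fully active game with one cop on the Cartesian product T_1 □ T_2. If the cop and robber begin at odd distance from each other (cop placing first, robber second, cop moving first), then the cop can capture the robber. -/
open SimpleGraph

universe u v

variable {V : Type u}

namespace CRAux

variable {V : Type u} {T : SimpleGraph V}

/-- In a connected acyclic graph, every path realizes the distance. -/
theorem path_length_eq_dist (hc : T.Connected) (ha : T.IsAcyclic) {u v : V}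
    (p : T.Walk u v) (hp : p.IsPath) : p.length = T.dist u v := by
  classical
  obtain ⟨w, hw⟩ := hc.exists_walk_length_eq_dist u v
  have h1 : (⟨p, hp⟩ : T.Path u v) = ⟨w.bypass, w.bypass_isPath⟩ := ha.path_unique _ _
  have h2 : p.length = w.bypass.length := by
    have := congrArg (fun q : T.Path u v => q.1.length) h1
    simpa using this
  have h3 : w.bypass.length ≤ T.dist u v := hw ▸ w.length_bypass_le
  have h4 : T.dist u v ≤ p.length := T.dist_le p
  omega

/-- In a tree, adjacent vertices have distinct distances to any vertex. -/
theorem adj_dist_ne (hc : T.Connected) (ha : T.IsAcyclic) {u v : V}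
    (huv : T.Adj u v) (w : V) : T.dist u w ≠ T.dist v w := by
  classical
  intro heq
  obtain ⟨w0, hw0⟩ := hc.exists_walk_length_eq_dist v w
  set q := w0.bypass with hq
  have hqp : q.IsPath := w0.bypass_isPath
  have hql : q.length = T.dist v w := path_length_eq_dist hc ha q hqp
  by_cases hu : u ∈ q.support
  · -- then dist v u + dist u w ≤ dist v w, but dist v u = 1 gives contradiction
    have h1 : T.dist v u ≤ (q.takeUntil u hu).length := T.dist_le _
    have h2 : T.dist u w ≤ (q.dropUntil u hu).length := T.dist_le _
    have h3 : (q.takeUntil u hu).length + (q.dropUntil u hu).length = q.length := by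
      rw [← SimpleGraph.Walk.length_append, q.take_spec hu]
    have h4 : 0 < T.dist v u := hc.pos_dist_of_ne huv.ne'
    omega
  · have hcons : (SimpleGraph.Walk.cons huv q).IsPath := hqp.cons hu
    have := path_length_eq_dist hc ha _ hcons
    simp only [SimpleGraph.Walk.length_cons] at this
    omega

/-- Bipartite-type fact: moving along an edge changes distance by exactly one. -/
theorem adj_dist_cases (hc : T.Connected) (ha : T.IsAcyclic) {u v : V}
    (huv : T.Adj u v) (w : V) :
    T.dist u w = T.dist v w + 1 ∨ T.dist v w = T.dist u w + 1 := by
  have h1 : T.dist u w ≤ T.dist v w + 1 := by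
    calc T.dist u w ≤ T.dist u v + T.dist v w := hc.dist_triangle
    _ = T.dist v w + 1 := by rw [dist_eq_one_iff_adj.2 huv]; omega
  have h2 : T.dist v w ≤ T.dist u w + 1 := by
    calc T.dist v w ≤ T.dist v u + T.dist u w := hc.dist_triangle
    _ = T.dist u w + 1 := by rw [dist_eq_one_iff_adj.2 huv.symm]; omega
  have := adj_dist_ne hc ha huv w
  omega

/-- A step toward: from `c` with `dist c r > 0` there is a neighbor strictly closer to `r`. -/
theorem exists_step (hc : T.Connected) {c r : V} (h : 0 < T.dist c r) :
    ∃ c', T.Adj c c' ∧ T.dist c' r + 1 = T.dist c r := by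
  obtain ⟨w, hw⟩ := hc.exists_walk_length_eq_dist c r
  cases w with
  | nil => rw [SimpleGraph.dist_self] at h; omega
  | cons hadj w' =>
    rename_i c'
    refine ⟨c', hadj, ?_⟩
    have h1 : T.dist c' r ≤ w'.length := T.dist_le _
    have h2 : T.dist c r ≤ T.dist c c' + T.dist c' r := hc.dist_triangle
    have h3 : T.dist c c' = 1 := dist_eq_one_iff_adj.2 hadj
    simp only [SimpleGraph.Walk.length_cons] at hw
    omega

/-- Betweenness via distances. -/
def Btw (T : SimpleGraph V) (x y z : V) : Prop := T.dist x z = T.dist x y + T.dist y z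

/-- Collinearity: two points between `v` and `r` are mutually comparable. -/
theorem collinear (hc : T.Connected) (ha : T.IsAcyclic) {v x y r : V}
    (hx : Btw T v x r) (hy : Btw T v y r) (hxy : T.dist v x ≤ T.dist v y) :
    T.dist v y = T.dist v x + T.dist x y := by
  classical
  -- build the geodesic from v to r through x
  obtain ⟨w1, hw1⟩ := hc.exists_walk_length_eq_dist v x
  obtain ⟨w2, hw2⟩ := hc.exists_walk_length_eq_dist x r
  set p := w1.append w2 with hp
  have hplen : p.length = T.dist v r := by
    rw [hp, SimpleGraph.Walk.length_append, hw1, hw2, hx]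
  have hpath : p.IsPath := p.isPath_of_length_eq_dist hplen
  have hxmem : x ∈ p.support := by
    rw [hp, SimpleGraph.Walk.mem_support_append_iff]
    left; exact w1.end_mem_support
  -- y is also on p
  obtain ⟨u1, hu1⟩ := hc.exists_walk_length_eq_dist v y
  obtain ⟨u2, hu2⟩ := hc.exists_walk_length_eq_dist y r
  set q := u1.append u2 with hq0
  have hqlen : q.length = T.dist v r := by
    rw [hq0, SimpleGraph.Walk.length_append, hu1, hu2, hy]
  have hqpath : q.IsPath := q.isPath_of_length_eq_dist hqlen
  have hpq : p = q := by
    have : (⟨p, hpath⟩ : T.Path v r) = ⟨q, hqpath⟩ := ha.path_unique _ _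
    exact congrArg Subtype.val this
  have hymem : y ∈ p.support := by
    rw [hpq, hq0, SimpleGraph.Walk.mem_support_append_iff]
    left; exact u1.end_mem_support
  -- split p at x : prefix has length dist v x
  have htake : (p.takeUntil x hxmem).length = T.dist v x :=
    path_length_eq_dist hc ha _ (hpath.takeUntil hxmem)
  have hdroppath : (p.dropUntil x hxmem).IsPath := hpath.dropUntil hxmem
  have hdrop : (p.dropUntil x hxmem).length = T.dist x r :=
    path_length_eq_dist hc ha _ hdroppath
  -- y in prefix or suffix
  have hsplit := p.take_spec hxmem
  have hymem' : y ∈ (p.takeUntil x hxmem).support ∨ y ∈ (p.dropUntil x hxmem).support := by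
    have : y ∈ ((p.takeUntil x hxmem).append (p.dropUntil x hxmem)).support := by
      rw [hsplit]; exact hymem
    exact (SimpleGraph.Walk.mem_support_append_iff _ _).1 this
  rcases hymem' with hyt | hyd
  · -- y on the prefix: dist v y + dist y x = dist v x, with dist v x ≤ dist v y forces y = x
    set t := p.takeUntil x hxmem with ht
    have h1 : T.dist v y ≤ (t.takeUntil y hyt).length := T.dist_le _
    have h2 : T.dist y x ≤ (t.dropUntil y hyt).length := T.dist_le _
    have h3 : (t.takeUntil y hyt).length + (t.dropUntil y hyt).length = t.length := by
      rw [← SimpleGraph.Walk.length_append, t.take_spec hyt]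
    have h4 : T.dist v x ≤ T.dist v y + T.dist y x := hc.dist_triangle
    have h5 : T.dist y x = T.dist x y := T.dist_comm
    have h6 : T.dist x y ≤ T.dist x v + T.dist v y := hc.dist_triangle
    -- dist v y + dist y x = dist v x and dist v x ≤ dist v y gives dist x y = dist v y - dist v x... 
    have h7 : T.dist y x = 0 := by omega
    have h8 : y = x := by
      have := (hc.dist_eq_zero_iff (u := y) (v := x)).1 h7
      exact this
    subst h8
    simp [T.dist_self]
  · -- y on the suffix: dist x y + dist y r = dist x r
    set d := p.dropUntil x hxmem with hd
    have h1 : T.dist x y ≤ (d.takeUntil y hyd).length := T.dist_le _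
    have h2 : T.dist y r ≤ (d.dropUntil y hyd).length := T.dist_le _
    have h3 : (d.takeUntil y hyd).length + (d.dropUntil y hyd).length = d.length := by
      rw [← SimpleGraph.Walk.length_append, d.take_spec hyd]
    have h4 : T.dist x r ≤ T.dist x y + T.dist y r := hc.dist_triangle
    have h5 : T.dist v y ≤ T.dist v x + T.dist x y := hc.dist_triangle
    have h6 : T.dist v r ≤ T.dist v y + T.dist y r := hc.dist_triangle
    -- from hx, hy: dist v r = dist v x + dist x r = dist v y + dist y r
    rw [Btw] at hx hy
    omega

section Potential

variable [Fintype V]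

open scoped Classical in
/-- Number of vertices "behind the robber": `v` such that `r` lies between `c` and `v`. -/
noncomputable def aCard (T : SimpleGraph V) (c r : V) : ℕ :=
  (Finset.univ.filter (fun v => Btw T c r v)).card

open scoped Classical in
/-- Number of vertices in the robber's branch: `v` such that `c` is NOT between `v` and `r`. -/
noncomputable def bCard (T : SimpleGraph V) (c r : V) : ℕ :=
  (Finset.univ.filter (fun v => ¬ Btw T v c r)).card

open scoped Classical in
/-- The potential of a cop/robber pair in one tree coordinate. -/
noncomputable def phi (T : SimpleGraph V) (α : ℕ) (c r : V) : ℕ :=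
  if c = r then 2 * Fintype.card V
  else α * T.dist c r + bCard T c r + aCard T c r

theorem aCard_le_of_imp {T : SimpleGraph V} {c r c' r' : V}
    (h : ∀ v, Btw T c' r' v → Btw T c r v) : aCard T c' r' ≤ aCard T c r := by
  classical
  apply Finset.card_le_card
  intro v hv
  simp only [Finset.mem_filter, Finset.mem_univ, true_and] at hv ⊢
  exact h v hv

theorem bCard_le_of_imp {T : SimpleGraph V} {c r c' r' : V}
    (h : ∀ v, Btw T v c r → Btw T v c' r') : bCard T c' r' ≤ bCard T c r := by
  classical
  apply Finset.card_le_card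
  intro v hv
  simp only [Finset.mem_filter, Finset.mem_univ, true_and] at hv ⊢
  exact fun hb => hv (h v hb)

theorem aCard_lt_of_imp {T : SimpleGraph V} {c r c' r' : V} {x : V}
    (h : ∀ v, Btw T c' r' v → Btw T c r v) (hx1 : Btw T c r x) (hx2 : ¬ Btw T c' r' x) :
    aCard T c' r' + 1 ≤ aCard T c r := by
  classical
  have hsub : (Finset.univ.filter (fun v => Btw T c' r' v))
      ⊆ (Finset.univ.filter (fun v => Btw T c r v)).erase x := by
    intro v hv
    simp only [Finset.mem_filter, Finset.mem_univ, true_and] at hv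
    refine Finset.mem_erase.2 ⟨?_, ?_⟩
    · rintro rfl; exact hx2 hv
    · simp only [Finset.mem_filter, Finset.mem_univ, true_and]; exact h v hv
  have h1 := Finset.card_le_card hsub
  have h2 : ((Finset.univ.filter (fun v => Btw T c r v)).erase x).card
      = (Finset.univ.filter (fun v => Btw T c r v)).card - 1 := by
    apply Finset.card_erase_of_mem
    simp only [Finset.mem_filter, Finset.mem_univ, true_and]; exact hx1
  have h3 : 0 < (Finset.univ.filter (fun v => Btw T c r v)).card := by
    apply Finset.card_pos.2
    exact ⟨x, by simp only [Finset.mem_filter, Finset.mem_univ, true_and]; exact hx1⟩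
  unfold aCard
  omega

theorem bCard_lt_of_imp {T : SimpleGraph V} {c r c' r' : V} {x : V}
    (h : ∀ v, Btw T v c r → Btw T v c' r') (hx1 : ¬ Btw T x c r) (hx2 : Btw T x c' r') :
    bCard T c' r' + 1 ≤ bCard T c r := by
  classical
  have hsub : (Finset.univ.filter (fun v => ¬ Btw T v c' r'))
      ⊆ (Finset.univ.filter (fun v => ¬ Btw T v c r)).erase x := by
    intro v hv
    simp only [Finset.mem_filter, Finset.mem_univ, true_and] at hv
    refine Finset.mem_erase.2 ⟨?_, ?_⟩
    · rintro rfl; exact hv hx2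
    · simp only [Finset.mem_filter, Finset.mem_univ, true_and]
      exact fun hb => hv (h v hb)
  have h1 := Finset.card_le_card hsub
  have h2 : ((Finset.univ.filter (fun v => ¬ Btw T v c r)).erase x).card
      = (Finset.univ.filter (fun v => ¬ Btw T v c r)).card - 1 := by
    apply Finset.card_erase_of_mem
    simp only [Finset.mem_filter, Finset.mem_univ, true_and]; exact hx1
  have h3 : 0 < (Finset.univ.filter (fun v => ¬ Btw T v c r)).card := by
    apply Finset.card_pos.2
    exact ⟨x, by simp only [Finset.mem_filter, Finset.mem_univ, true_and]; exact hx1⟩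
  unfold bCard
  omega

theorem aCard_le_card_sub_one {T : SimpleGraph V} {c r : V} {x : V}
    (hx : ¬ Btw T c r x) : aCard T c r ≤ Fintype.card V - 1 := by
  classical
  have hsub : (Finset.univ.filter (fun v => Btw T c r v)) ⊆ Finset.univ.erase x := by
    intro v hv
    simp only [Finset.mem_filter, Finset.mem_univ, true_and] at hv
    exact Finset.mem_erase.2 ⟨by rintro rfl; exact hx hv, Finset.mem_univ v⟩
  have := Finset.card_le_card hsub
  have h2 : (Finset.univ.erase x).card = Fintype.card V - 1 := by
    rw [Finset.card_erase_of_mem (Finset.mem_univ x), Finset.card_univ]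
  unfold aCard
  omega

theorem bCard_le_card_sub_one {T : SimpleGraph V} {c r : V} {x : V}
    (hx : Btw T x c r) : bCard T c r ≤ Fintype.card V - 1 := by
  classical
  have hsub : (Finset.univ.filter (fun v => ¬ Btw T v c r)) ⊆ Finset.univ.erase x := by
    intro v hv
    simp only [Finset.mem_filter, Finset.mem_univ, true_and] at hv
    exact Finset.mem_erase.2 ⟨by rintro rfl; exact hv hx, Finset.mem_univ v⟩
  have := Finset.card_le_card hsub
  have h2 : (Finset.univ.erase x).card = Fintype.card V - 1 := by
    rw [Finset.card_erase_of_mem (Finset.mem_univ x), Finset.card_univ]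
  unfold bCard
  omega

theorem one_le_aCard {T : SimpleGraph V} {c r : V} {x : V} (hx : Btw T c r x) :
    1 ≤ aCard T c r := by
  classical
  apply Finset.card_pos.2
  exact ⟨x, by simp only [Finset.mem_filter, Finset.mem_univ, true_and]; exact hx⟩

theorem one_le_bCard {T : SimpleGraph V} {c r : V} {x : V} (hx : ¬ Btw T x c r) :
    1 ≤ bCard T c r := by
  classical
  apply Finset.card_pos.2
  exact ⟨x, by simp only [Finset.mem_filter, Finset.mem_univ, true_and]; exact hx⟩

/-- The cop's move: stepping toward the robber at distance ≥ 2 decreases the potential a lot. -/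
theorem phi_copMove (hc : T.Connected) (ha : T.IsAcyclic) {c r c' : V}
    (hd : 2 ≤ T.dist c r) (hadj : T.Adj c c') (hstep : T.dist c' r + 1 = T.dist c r) :
    phi T α c' r + (α + 1) ≤ phi T α c r := by
  have dc : ∀ x y : V, T.dist x y = T.dist y x := fun x y => T.dist_comm
  have hcc' : T.dist c c' = 1 := dist_eq_one_iff_adj.2 hadj
  have hcr : c ≠ r := by rintro rfl; rw [T.dist_self] at hd; omega
  have hc'r : c' ≠ r := by rintro rfl; rw [T.dist_self] at hstep; omega
  have aLe : aCard T c' r ≤ aCard T c r := by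
    apply aCard_le_of_imp
    intro v hv
    rw [Btw] at hv ⊢
    rcases adj_dist_cases hc ha hadj v with h1 | h2
    · omega
    · exfalso
      have q1 := dc v c; have q2 := dc v c'; have q3 := dc v r
      have q4 := dc r c'; have q5 := dc r c; have q6 := dc c' r
      have e1 : T.dist v c' = T.dist v c + T.dist c c' := by omega
      have e2 : T.dist v c' = T.dist v r + T.dist r c' := by omega
      have hBtw1 : Btw T v c c' := e1
      have hBtw2 : Btw T v r c' := e2
      have hle : T.dist v r ≤ T.dist v c := by omega
      have hcol := collinear hc ha hBtw2 hBtw1 hle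
      omega
  have bLt : bCard T c' r + 1 ≤ bCard T c r := by
    apply bCard_lt_of_imp (x := c')
    · intro v hv
      rw [Btw] at hv ⊢
      have t1 : T.dist v r ≤ T.dist v c' + T.dist c' r := hc.dist_triangle
      have t2 : T.dist v c' ≤ T.dist v c + T.dist c c' := hc.dist_triangle
      omega
    · rw [Btw]
      have := dc c' c
      omega
    · rw [Btw, T.dist_self]; omega
  rw [phi, if_neg hc'r, phi, if_neg hcr]
  have hmul : α * T.dist c r = α * T.dist c' r + α := by
    rw [← hstep, Nat.mul_add, Nat.mul_one]
  set A := α * T.dist c' r with hA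
  omega

/-- The robber's move: moving to an adjacent vertex increases the potential by less than `α`. -/
theorem phi_robMove (hc : T.Connected) (ha : T.IsAcyclic) (hn : Fintype.card V ≤ α)
    {c r r' : V} (hadj : T.Adj r r') :
    phi T α c r' + 1 ≤ phi T α c r + α := by
  have dc : ∀ x y : V, T.dist x y = T.dist y x := fun x y => T.dist_comm
  have hn0 : 0 < Fintype.card V := Fintype.card_pos_iff.2 ⟨c⟩
  have hrr' : T.dist r r' = 1 := dist_eq_one_iff_adj.2 hadj
  by_cases hcr : c = r
  · subst hcr
    have hr' : c ≠ r' := hadj.ne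
    have hd' : T.dist c r' = 1 := hrr'
    have b1 : bCard T c r' ≤ Fintype.card V - 1 := by
      apply bCard_le_card_sub_one (x := c)
      rw [Btw, T.dist_self]; omega
    have a1 : aCard T c r' ≤ Fintype.card V - 1 := by
      apply aCard_le_card_sub_one (x := c)
      rw [Btw, T.dist_self]
      have := dc c r'
      omega
    rw [phi, if_neg hr', phi, if_pos rfl, hd', Nat.mul_one]
    omega
  · have hd : 0 < T.dist c r := hc.pos_dist_of_ne hcr
    by_cases hr'c : r' = c
    · rw [hr'c]
      have a1 : 1 ≤ aCard T c r := by
        apply one_le_aCard (x := r); rw [Btw, T.dist_self]; omega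
      have b1 : 1 ≤ bCard T c r := by
        apply one_le_bCard (x := r)
        rw [Btw, T.dist_self]
        have := dc r c
        omega
      rw [phi, if_pos rfl, phi, if_neg hcr]
      have hmul : α ≤ α * T.dist c r := by
        calc α = α * 1 := by ring
        _ ≤ α * T.dist c r := Nat.mul_le_mul_left α hd
      set A := α * T.dist c r with hA
      omega
    · have hr'c' : c ≠ r' := fun h => hr'c h.symm
      have hd' : 0 < T.dist c r' := hc.pos_dist_of_ne hr'c'
      rcases adj_dist_cases hc ha hadj c with h1 | h2
      · -- dist r c = dist r' c + 1 : robber moved toward the cop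
        have key : T.dist c r = T.dist c r' + 1 := by
          have := dc c r; have := dc c r'; omega
        have bLe : bCard T c r' ≤ bCard T c r := by
          apply bCard_le_of_imp
          intro v hv
          rw [Btw] at hv ⊢
          have t1 : T.dist v r ≤ T.dist v r' + T.dist r' r := hc.dist_triangle
          have t2 : T.dist v r' ≤ T.dist v c + T.dist c r' := hc.dist_triangle
          have := dc r' r
          omega
        have aLe : aCard T c r' ≤ Fintype.card V - 1 := by
          apply aCard_le_card_sub_one (x := c)
          rw [Btw, T.dist_self]
          have := dc c r'
          omega
        have aGe : 1 ≤ aCard T c r := by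
          apply one_le_aCard (x := r); rw [Btw, T.dist_self]; omega
        rw [phi, if_neg hr'c', phi, if_neg hcr]
        have hmul : α * T.dist c r = α * T.dist c r' + α := by
          rw [key, Nat.mul_add, Nat.mul_one]
        set A := α * T.dist c r' with hA
        omega
      · -- dist r' c = dist r c + 1 : robber moved away from the cop
        have key : T.dist c r' = T.dist c r + 1 := by
          have := dc c r; have := dc c r'; omega
        have aDec : aCard T c r' + 1 ≤ aCard T c r := by
          apply aCard_lt_of_imp (x := r)
          · intro v hv
            rw [Btw] at hv ⊢
            have t1 : T.dist c v ≤ T.dist c r + T.dist r v := hc.dist_triangle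
            have t2 : T.dist r v ≤ T.dist r r' + T.dist r' v := hc.dist_triangle
            omega
          · rw [Btw, T.dist_self]; omega
          · rw [Btw]
            have := dc r' r
            omega
        have bLe : bCard T c r' ≤ bCard T c r := by
          apply bCard_le_of_imp
          intro v hv
          rw [Btw] at hv ⊢
          have q1 := dc v r; have q2 := dc v r'; have q3 := dc r' r
          rcases adj_dist_cases hc ha hadj v with h3 | h4
          · -- dist r v = dist r' v + 1
            have e2 : T.dist v r = T.dist v r' + T.dist r' r := by omega
            have hBtw2 : Btw T v r' r := e2
            have hBtw1 : Btw T v c r := hv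
            have hle : T.dist v c ≤ T.dist v r' := by omega
            exact collinear hc ha hBtw1 hBtw2 hle
          · omega
        rw [phi, if_neg hr'c', phi, if_neg hcr]
        have hmul : α * T.dist c r' = α * T.dist c r + α := by
          rw [key, Nat.mul_add, Nat.mul_one]
        set A := α * T.dist c r with hA
        omega

/-- Lower bound on the potential when cop and robber are apart. -/
theorem phi_lower (hc : T.Connected) {c r : V} (h : c ≠ r) : α ≤ phi T α c r := by
  have hd : 0 < T.dist c r := hc.pos_dist_of_ne h
  rw [phi, if_neg h]
  have h2 : α * 1 ≤ α * T.dist c r := Nat.mul_le_mul_left α hd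
  set A := α * T.dist c r with hA
  omega

end Potential

section Game

variable {V₁ : Type u} {V₂ : Type u} [Fintype V₁] [Fintype V₂]
  {T₁ : SimpleGraph V₁} {T₂ : SimpleGraph V₂}

/-- Sum of coordinatewise distances in the box product. -/
noncomputable def Dd (T₁ : SimpleGraph V₁) (T₂ : SimpleGraph V₂) (x y : V₁ × V₂) : ℕ :=
  T₁.dist x.1 y.1 + T₂.dist x.2 y.2

/-- The global potential. -/
noncomputable def Phi (T₁ : SimpleGraph V₁) (T₂ : SimpleGraph V₂) (α : ℕ) (c r : V₁ × V₂) : ℕ :=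
  phi T₁ α c.1 r.1 + phi T₂ α c.2 r.2

omit [Fintype V₁] [Fintype V₂] in
theorem Dd_parity (hc₁ : T₁.Connected) (hc₂ : T₂.Connected)
    (ha₁ : T₁.IsAcyclic) (ha₂ : T₂.IsAcyclic) {x y : V₁ × V₂}
    (w : (T₁.boxProd T₂).Walk x y) : Dd T₁ T₂ x y % 2 = w.length % 2 := by
  induction w with
  | nil => simp [Dd, SimpleGraph.dist_self]
  | @cons a b c hadj p ih =>
    rw [SimpleGraph.Walk.length_cons]
    rcases (SimpleGraph.boxProd_adj.1 hadj) with ⟨h1, h2⟩ | ⟨h1, h2⟩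
    · rcases adj_dist_cases hc₁ ha₁ h1 c.1 with h3 | h3 <;>
      · unfold Dd at ih ⊢
        rw [h2] at *
        omega
    · rcases adj_dist_cases hc₂ ha₂ h1 c.2 with h3 | h3 <;>
      · unfold Dd at ih ⊢
        rw [h2] at *
        omega

omit [Fintype V₁] [Fintype V₂] in
theorem Dd_odd_of_odd_dist (hc₁ : T₁.Connected) (hc₂ : T₂.Connected)
    (ha₁ : T₁.IsAcyclic) (ha₂ : T₂.IsAcyclic) {x y : V₁ × V₂}
    (h : Odd ((T₁.boxProd T₂).dist x y)) : Odd (Dd T₁ T₂ x y) := by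
  obtain ⟨w, hw⟩ := (hc₁.boxProd hc₂).exists_walk_length_eq_dist x y
  have := Dd_parity hc₁ hc₂ ha₁ ha₂ w
  rw [hw] at this
  rw [Nat.odd_iff] at h ⊢
  omega

omit [Fintype V₁] [Fintype V₂] in
theorem boxAdj_Dd_eq_one (hc₁ : T₁.Connected) (hc₂ : T₂.Connected) {x y : V₁ × V₂}
    (h : (T₁.boxProd T₂).Adj x y) : Dd T₁ T₂ x y = 1 := by
  rcases SimpleGraph.boxProd_adj.1 h with ⟨h1, h2⟩ | ⟨h1, h2⟩
  · unfold Dd; rw [h2, SimpleGraph.dist_self, dist_eq_one_iff_adj.2 h1]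
  · unfold Dd; rw [h2, SimpleGraph.dist_self, dist_eq_one_iff_adj.2 h1]

omit [Fintype V₁] [Fintype V₂] in
theorem Dd_eq_one_boxAdj (hc₁ : T₁.Connected) (hc₂ : T₂.Connected) {x y : V₁ × V₂}
    (h : Dd T₁ T₂ x y = 1) : (T₁.boxProd T₂).Adj x y := by
  unfold Dd at h
  rcases Nat.le_one_iff_eq_zero_or_eq_one.1 (by omega : T₁.dist x.1 y.1 ≤ 1) with h1 | h1
  · have h2 : T₂.dist x.2 y.2 = 1 := by omega
    have := (hc₁.dist_eq_zero_iff).1 h1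
    exact SimpleGraph.boxProd_adj.2 (Or.inr ⟨dist_eq_one_iff_adj.1 h2, this⟩)
  · have h2 : T₂.dist x.2 y.2 = 0 := by omega
    have := (hc₂.dist_eq_zero_iff).1 h2
    exact SimpleGraph.boxProd_adj.2 (Or.inl ⟨dist_eq_one_iff_adj.1 h1, this⟩)

omit [Fintype V₁] [Fintype V₂] in
/-- A step toward the robber in one tree. -/
noncomputable def stepToward {V : Type u} (T : SimpleGraph V) (hc : T.Connected) (c r : V) : V :=
  if h : 0 < T.dist c r then (exists_step hc h).choose else c

omit [Fintype V₁] [Fintype V₂] in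
theorem stepToward_spec {V : Type u} {T : SimpleGraph V} (hc : T.Connected) {c r : V}
    (h : 0 < T.dist c r) :
    T.Adj c (stepToward T hc c r) ∧ T.dist (stepToward T hc c r) r + 1 = T.dist c r := by
  rw [stepToward, dif_pos h]
  exact ⟨(exists_step hc h).choose_spec.1, (exists_step hc h).choose_spec.2⟩

/-- Some neighbor of a vertex in a nontrivial connected graph. -/
noncomputable def someNbr {V : Type u} (T : SimpleGraph V) (hc : T.Connected) [Nontrivial V]
    (v : V) : V :=
  stepToward T hc v (exists_ne v).choose

omit [Fintype V₁] [Fintype V₂] in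
theorem someNbr_adj {V : Type u} {T : SimpleGraph V} (hc : T.Connected) [Nontrivial V]
    (v : V) : T.Adj v (someNbr T hc v) := by
  have hne : (exists_ne v).choose ≠ v := (exists_ne v).choose_spec
  have : 0 < T.dist v (exists_ne v).choose := hc.pos_dist_of_ne (Ne.symm hne)
  exact (stepToward_spec hc this).1

variable [Nontrivial V₁]

open scoped Classical in
/-- The cop's strategy as a function of the current positions. -/
noncomputable def copMoveFun (T₁ : SimpleGraph V₁) (T₂ : SimpleGraph V₂)
    (hc₁ : T₁.Connected) (hc₂ : T₂.Connected) (c r : V₁ × V₂) : V₁ × V₂ :=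
  if (T₁.boxProd T₂).Adj c r then r
  else if 2 ≤ T₁.dist c.1 r.1 then (stepToward T₁ hc₁ c.1 r.1, c.2)
  else if 2 ≤ T₂.dist c.2 r.2 then (c.1, stepToward T₂ hc₂ c.2 r.2)
  else (someNbr T₁ hc₁ c.1, c.2)

omit [Fintype V₁] [Fintype V₂] in
theorem copMoveFun_adj (hc₁ : T₁.Connected) (hc₂ : T₂.Connected) (c r : V₁ × V₂) :
    (T₁.boxProd T₂).Adj c (copMoveFun T₁ T₂ hc₁ hc₂ c r) := by
  rw [copMoveFun]
  split_ifs with h1 h2 h3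
  · exact h1
  · exact SimpleGraph.boxProd_adj.2 (Or.inl ⟨(stepToward_spec hc₁ (by omega)).1, rfl⟩)
  · exact SimpleGraph.boxProd_adj.2 (Or.inr ⟨(stepToward_spec hc₂ (by omega)).1, rfl⟩)
  · exact SimpleGraph.boxProd_adj.2 (Or.inl ⟨someNbr_adj hc₁ c.1, rfl⟩)

omit [Fintype V₁] [Fintype V₂] in
theorem copMoveFun_capture (hc₁ : T₁.Connected) (hc₂ : T₂.Connected) {c r : V₁ × V₂}
    (h : Dd T₁ T₂ c r = 1) : copMoveFun T₁ T₂ hc₁ hc₂ c r = r := by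
  rw [copMoveFun, if_pos (Dd_eq_one_boxAdj hc₁ hc₂ h)]

/-- The key round analysis for the cop's move at odd distance at least 3. -/
theorem copMoveFun_round {α : ℕ} (hc₁ : T₁.Connected) (hc₂ : T₂.Connected)
    (ha₁ : T₁.IsAcyclic) (ha₂ : T₂.IsAcyclic) {c r : V₁ × V₂}
    (hD : 3 ≤ Dd T₁ T₂ c r) :
    Dd T₁ T₂ (copMoveFun T₁ T₂ hc₁ hc₂ c r) r + 1 = Dd T₁ T₂ c r ∧
    Phi T₁ T₂ α (copMoveFun T₁ T₂ hc₁ hc₂ c r) r + (α + 1) ≤ Phi T₁ T₂ α c r := by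
  classical
  have hnadj : ¬ (T₁.boxProd T₂).Adj c r := by
    intro h
    have := boxAdj_Dd_eq_one hc₁ hc₂ h
    omega
  rw [copMoveFun, if_neg hnadj]
  by_cases h2 : 2 ≤ T₁.dist c.1 r.1
  · rw [if_pos h2]
    obtain ⟨hadj, hstep⟩ := stepToward_spec hc₁ (show 0 < T₁.dist c.1 r.1 by omega)
    have e1 : (stepToward T₁ hc₁ c.1 r.1, c.2).1 = stepToward T₁ hc₁ c.1 r.1 := rfl
    have e2 : (stepToward T₁ hc₁ c.1 r.1, c.2).2 = c.2 := rfl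
    constructor
    · unfold Dd; rw [e1, e2]; omega
    · unfold Phi
      rw [e1, e2]
      have := phi_copMove (α := α) hc₁ ha₁ h2 hadj hstep
      omega
  · rw [if_neg h2]
    have h3 : 2 ≤ T₂.dist c.2 r.2 := by unfold Dd at hD; omega
    rw [if_pos h3]
    obtain ⟨hadj, hstep⟩ := stepToward_spec hc₂ (show 0 < T₂.dist c.2 r.2 by omega)
    have e1 : (c.1, stepToward T₂ hc₂ c.2 r.2).1 = c.1 := rfl
    have e2 : (c.1, stepToward T₂ hc₂ c.2 r.2).2 = stepToward T₂ hc₂ c.2 r.2 := rfl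
    constructor
    · unfold Dd; rw [e1, e2]; omega
    · unfold Phi
      rw [e1, e2]
      have := phi_copMove (α := α) hc₂ ha₂ h3 hadj hstep
      omega

/-- The robber's move analysis. -/
theorem robMove_round {α : ℕ} (hc₁ : T₁.Connected) (hc₂ : T₂.Connected)
    (ha₁ : T₁.IsAcyclic) (ha₂ : T₂.IsAcyclic)
    (hn₁ : Fintype.card V₁ ≤ α) (hn₂ : Fintype.card V₂ ≤ α)
    {c r r' : V₁ × V₂} (hadj : (T₁.boxProd T₂).Adj r r') :
    (Dd T₁ T₂ c r' = Dd T₁ T₂ c r + 1 ∨ Dd T₁ T₂ c r = Dd T₁ T₂ c r' + 1) ∧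
    Phi T₁ T₂ α c r' + 1 ≤ Phi T₁ T₂ α c r + α := by
  rcases SimpleGraph.boxProd_adj.1 hadj with ⟨h1, h2⟩ | ⟨h1, h2⟩
  · constructor
    · have := adj_dist_cases hc₁ ha₁ h1 c.1
      unfold Dd
      rw [h2]
      have d1 : T₁.dist r.1 c.1 = T₁.dist c.1 r.1 := T₁.dist_comm
      have d2 : T₁.dist r'.1 c.1 = T₁.dist c.1 r'.1 := T₁.dist_comm
      omega
    · unfold Phi
      rw [h2]
      have := phi_robMove (α := α) hc₁ ha₁ hn₁ (c := c.1) h1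
      omega
  · constructor
    · have := adj_dist_cases hc₂ ha₂ h1 c.2
      unfold Dd
      rw [h2]
      have d1 : T₂.dist r.2 c.2 = T₂.dist c.2 r.2 := T₂.dist_comm
      have d2 : T₂.dist r'.2 c.2 = T₂.dist c.2 r'.2 := T₂.dist_comm
      omega
    · unfold Phi
      rw [h2]
      have := phi_robMove (α := α) hc₂ ha₂ hn₂ (c := c.2) h1
      omega

end Game

end CRAux

/-- Let `T₁` and `T₂` be trees each with at least two vertices, and consider
the fully active game with one cop on `T₁ □ T₂`.  If the cop and the robber
begin at odd distance from each other, then the cop can capture the robber. -/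
theorem active_cop_wins_boxProd_trees_of_odd_dist
    {V₁ : Type u} {V₂ : Type u} [Fintype V₁] [Fintype V₂] [Nontrivial V₁]
    [Nontrivial V₂] (T₁ : SimpleGraph V₁) (T₂ : SimpleGraph V₂)
    (hconn₁ : T₁.Connected) (hconn₂ : T₂.Connected)
    (hac₁ : T₁.IsAcyclic) (hac₂ : T₂.IsAcyclic)
    (c₀ : V₁ × V₂) (r₀ : V₁ × V₂)
    (hodd : Odd ((T₁.boxProd T₂).dist c₀ r₀)) :
    ∃ cs : ActiveCopStrategy (T₁.boxProd T₂) 1, cs.init = (fun _ => c₀) ∧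
      ∀ rs : ActiveRobberStrategy (T₁.boxProd T₂) 1,
        rs.init (fun _ => c₀) = r₀ → ActiveCapture cs rs := by
  classical
  set α := max (Fintype.card V₁) (Fintype.card V₂) with hα
  let F : (V₁ × V₂) → (V₁ × V₂) → (V₁ × V₂) := CRAux.copMoveFun T₁ T₂ hconn₁ hconn₂
  let cs : ActiveCopStrategy (T₁.boxProd T₂) 1 :=
    { init := fun _ => c₀
      move := fun _ cfg _ => F (cfg.1 0) cfg.2
      move_adj := fun h cfg i => by
        have hi : i = 0 := Subsingleton.elim _ _
        rw [hi]
        exact CRAux.copMoveFun_adj hconn₁ hconn₂ _ _ }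
  refine ⟨cs, rfl, ?_⟩
  intro rs hr0
  show crCaptures 1 cs.init rs.init cs.move rs.move
  set play := crPlay 1 cs.init rs.init cs.move rs.move with hplay
  have hC : ∀ t, (play (t+1)).2.1 = cs.move (play t).1 (play t).2 := by
    intro t; rw [hplay]; rfl
  have hR : ∀ t, (play (t+1)).2.2
      = rs.move (play t).1 (cs.move (play t).1 (play t).2, (play t).2.2) := by
    intro t; rw [hplay]; rfl
  have hmove : ∀ t, cs.move (play t).1 (play t).2 0 = F ((play t).2.1 0) ((play t).2.2) := by
    intro t; rfl
  have hC0 : (play 0).2.1 0 = c₀ := by rw [hplay]; rfl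
  have hR0 : (play 0).2.2 = r₀ := by
    rw [hplay]
    show rs.init (fun _ => c₀) = r₀
    exact hr0
  have main : ∀ t, (crCaptures 1 cs.init rs.init cs.move rs.move) ∨
      (Odd (CRAux.Dd T₁ T₂ ((play t).2.1 0) ((play t).2.2)) ∧
        CRAux.Phi T₁ T₂ α ((play t).2.1 0) ((play t).2.2) + 2*t
          ≤ CRAux.Phi T₁ T₂ α c₀ r₀) := by
    intro t
    induction t with
    | zero =>
      right
      rw [hC0, hR0]
      refine ⟨CRAux.Dd_odd_of_odd_dist hconn₁ hconn₂ hac₁ hac₂ hodd, by omega⟩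
    | succ t ih =>
      rcases ih with hcap | ⟨hoddD, hbound⟩
      · left; exact hcap
      · have hoddD2 := Nat.odd_iff.1 hoddD
        by_cases hD1 : CRAux.Dd T₁ T₂ ((play t).2.1 0) ((play t).2.2) = 1
        · left
          refine ⟨t, Or.inr ⟨0, ?_⟩⟩
          rw [← hplay, hmove]
          exact CRAux.copMoveFun_capture hconn₁ hconn₂ hD1
        · have hD3 : 3 ≤ CRAux.Dd T₁ T₂ ((play t).2.1 0) ((play t).2.2) := by omega
          obtain ⟨hDdec, hPhidec⟩ :=
            CRAux.copMoveFun_round (α := α) hconn₁ hconn₂ hac₁ hac₂ hD3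
          rw [show CRAux.copMoveFun T₁ T₂ hconn₁ hconn₂ = F from rfl] at hDdec hPhidec
          have hC1 : (play (t+1)).2.1 0 = F ((play t).2.1 0) ((play t).2.2) := by
            rw [hC t, hmove]
          have hadj : (T₁.boxProd T₂).Adj ((play t).2.2) ((play (t+1)).2.2) := by
            rw [hR t]
            exact rs.move_adj (play t).1 (cs.move (play t).1 (play t).2, (play t).2.2)
          obtain ⟨hDpm, hPhiinc⟩ :=
            CRAux.robMove_round (α := α) hconn₁ hconn₂ hac₁ hac₂
              (le_max_left _ _) (le_max_right _ _)
              (c := F ((play t).2.1 0) ((play t).2.2)) hadj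
          by_cases hcap2 : (play (t+1)).2.1 0 = (play (t+1)).2.2
          · left; exact ⟨t+1, Or.inl ⟨0, by rw [hplay] at hcap2; exact hcap2⟩⟩
          · right
            rw [hC1]
            constructor
            · rw [Nat.odd_iff]
              omega
            · omega
  rcases main (CRAux.Phi T₁ T₂ α c₀ r₀ + 1) with hcap | ⟨_, hb⟩
  · exact hcap
  · exfalso; omega
end

section
/- For every positive integer n, the fully active cop number of the hypercube Q_n equals ⌈2n/3⌉. -/
open SimpleGraph

universe u v

variable {V : Type u}

/-- The Cartesian (box) product of a family of graphs: two tuples are adjacent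
iff they differ in exactly one coordinate, in which they are adjacent in the
corresponding factor. -/
def piBox {ι : Type v} {W : ι → Type u} (G : ∀ i, SimpleGraph (W i)) :
    SimpleGraph (∀ i, W i) where
  Adj x y := ∃ i, (G i).Adj (x i) (y i) ∧ ∀ j, j ≠ i → x j = y j
  symm := by
    constructor
    rintro x y ⟨i, hadj, heq⟩
    exact ⟨i, hadj.symm, fun j hj => (heq j hj).symm⟩
  loopless := by
    constructor
    rintro x ⟨i, hadj, -⟩
    exact (G i).irrefl hadj
/-- The `n`-dimensional hypercube `Q_n`: vertices are binary strings of length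
`n`, adjacent iff they differ in exactly one coordinate. -/
def hypercube (n : ℕ) : SimpleGraph (Fin n → Bool) :=
  piBox (fun _ : Fin n => completeGraph Bool)

namespace AcopAux
open Finset


variable {n : ℕ}

abbrev Vtx (n : ℕ) := Fin n → Bool

def flip (b : Fin n) (x : Vtx n) : Vtx n := Function.update x b (!x b)

@[simp] lemma flip_self (b : Fin n) (x : Vtx n) : flip b x b = !x b := by
  simp [flip]

lemma flip_ne {b j : Fin n} (h : j ≠ b) (x : Vtx n) : flip b x j = x j := by
  simp [flip, Function.update_of_ne h]

lemma adj_flip (b : Fin n) (x : Vtx n) : (hypercube n).Adj x (flip b x) := by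
  refine ⟨b, ?_, fun j hj => (flip_ne hj x).symm⟩
  simp [completeGraph]

lemma adj_iff_flip {x y : Vtx n} : (hypercube n).Adj x y ↔ ∃ b, y = flip b x := by
  constructor
  · rintro ⟨i, hadj, heq⟩
    refine ⟨i, funext fun j => ?_⟩
    rcases eq_or_ne j i with rfl | hj
    · have : x j ≠ y j := by simpa [completeGraph] using hadj
      have hyj : y j = !x j := by revert this; cases x j <;> cases y j <;> simp
      simp [flip, hyj]
    · rw [flip_ne hj]; exact (heq j hj).symm
  · rintro ⟨b, rfl⟩; exact adj_flip b x

lemma filter_flip_eq (x y : Vtx n) (b : Fin n) (h : x b = y b) :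
    (univ.filter fun i => x i ≠ flip b y i)
      = insert b (univ.filter fun i => x i ≠ y i) := by
  ext i
  rcases eq_or_ne i b with rfl | hib
  · simp [h]
  · simp [flip_ne hib, hib]

lemma filter_flip_eq' (x y : Vtx n) (b : Fin n) (h : x b ≠ y b) :
    (univ.filter fun i => x i ≠ flip b y i)
      = (univ.filter fun i => x i ≠ y i).erase b := by
  ext i
  rcases eq_or_ne i b with rfl | hib
  · simp only [flip_self, mem_filter, mem_univ, true_and, mem_erase]
    revert h; cases x i <;> cases y i <;> simp
  · simp [flip_ne hib, hib]

lemma hammingDist_flip_of_eq {x y : Vtx n} {b : Fin n} (h : x b = y b) :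
    hammingDist x (flip b y) = hammingDist x y + 1 := by
  show (univ.filter fun i => x i ≠ flip b y i).card = _
  rw [filter_flip_eq x y b h, card_insert_of_notMem (by simp [h])]
  rfl

lemma hammingDist_flip_of_ne {x y : Vtx n} {b : Fin n} (h : x b ≠ y b) :
    hammingDist x (flip b y) + 1 = hammingDist x y := by
  show (univ.filter fun i => x i ≠ flip b y i).card + 1 = _
  rw [filter_flip_eq' x y b h]
  have hb : b ∈ univ.filter fun i => x i ≠ y i := by simp [h]
  have h2 := Finset.card_erase_add_one hb
  have hd : hammingDist x y = (univ.filter fun i => x i ≠ y i).card := rfl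
  omega

lemma hammingDist_flip_cases (x y : Vtx n) (b : Fin n) :
    hammingDist x (flip b y) = hammingDist x y + 1 ∨
    hammingDist x (flip b y) + 1 = hammingDist x y := by
  by_cases h : x b = y b
  · exact Or.inl (hammingDist_flip_of_eq h)
  · exact Or.inr (hammingDist_flip_of_ne h)

lemma hammingDist_flip_left_cases (x y : Vtx n) (b : Fin n) :
    hammingDist (flip b x) y = hammingDist x y + 1 ∨
    hammingDist (flip b x) y + 1 = hammingDist x y := by
  rw [hammingDist_comm, hammingDist_comm x y]
  exact hammingDist_flip_cases y x b

lemma hammingDist_flip_self (x : Vtx n) (b : Fin n) :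
    hammingDist x (flip b x) = 1 := by
  have := hammingDist_flip_of_eq (x := x) (y := x) (b := b) rfl
  simpa [hammingDist_self] using this

/-- parity triangle -/
lemma hammingDist_parity_triangle (x y z : Vtx n) :
    (hammingDist x z) % 2 = (hammingDist x y + hammingDist y z) % 2 := by
  have key : ((hammingDist x z : ℕ) : ZMod 2)
      = ((hammingDist x y : ℕ) : ZMod 2) + ((hammingDist y z : ℕ) : ZMod 2) := by
    have e : ∀ (u v : Vtx n), ((hammingDist u v : ℕ) : ZMod 2)
        = ∑ i : Fin n, (if u i ≠ v i then (1 : ZMod 2) else 0) := by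
      intro u v
      show (((univ.filter fun i => u i ≠ v i).card : ℕ) : ZMod 2) = _
      rw [Finset.card_filter]
      push_cast
      rfl
    rw [e, e, e, ← Finset.sum_add_distrib]
    refine Finset.sum_congr rfl fun i _ => ?_
    cases hx : x i <;> cases hy : y i <;> cases hz : z i <;> simp <;> decide
  exact (ZMod.natCast_eq_natCast_iff (hammingDist x z)
    (hammingDist x y + hammingDist y z) 2).mp (by push_cast; rw [key])




def z0 {n : ℕ} : Vtx n := fun _ => false

def pclass (n : ℕ) (e : ℕ) : Finset (Vtx n) :=
  univ.filter fun r => hammingDist r z0 % 2 = e % 2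

lemma flip_flip (b : Fin n) (x : Vtx n) : flip b (flip b x) = x := by
  funext j
  rcases eq_or_ne j b with rfl | hj
  · simp
  · rw [flip_ne hj, flip_ne hj]

lemma mem_pclass_flip {e : ℕ} {r : Vtx n} (b : Fin n) (h : r ∈ pclass n e) :
    flip b r ∈ pclass n (e + 1) := by
  simp only [pclass, mem_filter, mem_univ, true_and] at h ⊢
  rcases hammingDist_flip_left_cases r z0 b with hc | hc <;> omega

lemma card_pclass (hn : 0 < n) (e : ℕ) : (pclass n e).card = 2 ^ (n - 1) := by
  have hbij : ∀ e : ℕ, (pclass n e).card = (pclass n (e+1)).card := by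
    intro e
    refine Finset.card_bij' (fun r _ => flip ⟨0, hn⟩ r) (fun r _ => flip ⟨0, hn⟩ r)
      (fun r hr => mem_pclass_flip _ hr) ?_ (fun r _ => flip_flip _ r) (fun r _ => flip_flip _ r)
    · intro r hr
      have := mem_pclass_flip (e := e+1) ⟨0, hn⟩ hr
      simp only [pclass, mem_filter, mem_univ, true_and] at this ⊢
      omega
  have hcov : (pclass n 0) ∪ (pclass n 1) = univ := by
    ext r; simp only [pclass, mem_union, mem_filter, mem_univ, true_and, iff_true]
    omega
  have hdisj : Disjoint (pclass n 0) (pclass n 1) := by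
    rw [Finset.disjoint_left]
    intro r h0 h1
    simp only [pclass, mem_filter, mem_univ, true_and] at h0 h1
    omega
  have hcard : (pclass n 0).card + (pclass n 1).card = 2 ^ n := by
    rw [← Finset.card_union_of_disjoint hdisj, hcov, card_univ]
    simp [Fintype.card_fun]
  have h01 : (pclass n 0).card = (pclass n 1).card := hbij 0
  have hpow : 2 ^ n = 2 ^ (n - 1) * 2 := by
    rw [← pow_succ]
    congr 1
    omega
  have he : pclass n e = pclass n (e % 2) := by
    simp only [pclass, Nat.mod_mod_of_dvd _ (dvd_refl 2)]
  rcases Nat.mod_two_eq_zero_or_one e with h2 | h2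
  · rw [he, h2]; omega
  · rw [he, h2]; omega

lemma eq_flip_of_dist_le_one {c r : Vtx n} (h1 : hammingDist c r ≤ 1) (h0 : c ≠ r) :
    ∃ b, r = flip b c := by
  have hne : hammingDist c r ≠ 0 := fun h => h0 (hammingDist_eq_zero.mp h)
  have hd : (univ.filter fun i => c i ≠ r i).card = 1 := by
    have : hammingDist c r = (univ.filter fun i => c i ≠ r i).card := rfl
    omega
  obtain ⟨b, hb⟩ := Finset.card_eq_one.mp hd
  refine ⟨b, funext fun j => ?_⟩
  rcases eq_or_ne j b with rfl | hj
  · have : c j ≠ r j := by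
      have : j ∈ univ.filter fun i => c i ≠ r i := by rw [hb]; exact mem_singleton_self _
      simpa using this
    rw [flip_self]
    revert this; cases c j <;> cases r j <;> simp
  · have : j ∉ univ.filter fun i => c i ≠ r i := by rw [hb]; simpa using hj
    simp only [mem_filter, mem_univ, true_and, not_not] at this
    rw [flip_ne hj, this]

/-- robber's initial-placement bad set for one cop, within a parity class -/
lemma card_start_bad (hn : 0 < n) (x : Vtx n) (e : ℕ) :
    ((pclass n e).filter fun r => hammingDist x r ≤ 1).card
      ≤ if (hammingDist x z0 + e) % 2 = 1 then n else 1 := by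
  split_ifs with hpar
  · -- odd: dist = 1: subset of image of flips
    calc ((pclass n e).filter fun r => hammingDist x r ≤ 1).card
        ≤ ((univ : Finset (Fin n)).image fun b => flip b x).card := by
          apply card_le_card
          intro r hr
          simp only [mem_filter] at hr
          obtain ⟨hr1, hr2⟩ := hr
          have hne : x ≠ r := by
            rintro rfl
            simp only [pclass, mem_filter, mem_univ, true_and] at hr1
            omega
          obtain ⟨b, rfl⟩ := eq_flip_of_dist_le_one hr2 hne
          exact mem_image_of_mem _ (mem_univ b)
      _ ≤ (univ : Finset (Fin n)).card := card_image_le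
      _ = n := by simp
  · -- even: dist = 0: singleton
    apply card_le_one.mpr
    intro r1 h1 r2 h2
    simp only [mem_filter, pclass, mem_univ, true_and] at h1 h2
    have e1 : x = r1 := by
      have := hammingDist_parity_triangle x z0 r1
      have hc : hammingDist z0 r1 = hammingDist r1 z0 := hammingDist_comm _ _
      have : hammingDist x r1 = 0 := by omega
      exact hammingDist_eq_zero.mp this
    have e2 : x = r2 := by
      have := hammingDist_parity_triangle x z0 r2
      have hc : hammingDist z0 r2 = hammingDist r2 z0 := hammingDist_comm _ _
      have : hammingDist x r2 = 0 := by omega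
      exact hammingDist_eq_zero.mp this
    rw [← e1, ← e2]

lemma nsq_lt (m : ℕ) (h : 7 ≤ m) : m * m < 2 ^ (m - 1) := by
  induction m with
  | zero => omega
  | succ p ih =>
    rcases Nat.lt_or_ge p 7 with hp | hp
    · interval_cases p <;> simp_all <;> omega
    · have h1 := ih (by omega)
      have h3 : 3 * p ≤ p * p := Nat.mul_le_mul_right p (by omega)
      have h4 : (p+1) * (p+1) ≤ 2 * (p * p) := by nlinarith
      have h5 : 2 ^ (p - 1) * 2 = 2 ^ p := by
        rw [← pow_succ]; congr 1; omega
      have : p + 1 - 1 = p := by omega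
      rw [this]
      calc (p+1)*(p+1) ≤ 2 * (p*p) := h4
        _ < 2 * 2 ^ (p-1) := by omega
        _ = 2 ^ p := by omega

lemma start_arith (hn : 0 < n) (E O : ℕ) (h : E + 2 * O ≤ n - 1) :
    E + n * O < 2 ^ (n - 1) := by
  rcases Nat.lt_or_ge n 8 with hsmall | hlarge
  · interval_cases n <;> omega
  · have hO : 2 * O ≤ n - 1 := by omega
    have hE : E ≤ n - 1 := by omega
    have hnO : n * O ≤ n * ((n-1)/2) := Nat.mul_le_mul_left n (by omega)
    have hbig : n * ((n-1)/2) + (n - 1) < n * n := by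
      have h2 : (n-1)/2 ≤ n - 2 := by omega
      have h3 := Nat.mul_le_mul_left n h2
      have h4 : n * (n-2) + n * 2 = n * n := by
        rw [← Nat.mul_add]
        congr 1
        omega
      omega
    have := nsq_lt n (by omega)
    omega




lemma card_round_bad (x r : Vtx n) (h1 : 1 ≤ hammingDist x r) :
    (univ.filter fun b => hammingDist x (flip b r) ≤ 1).card
      ≤ if hammingDist x r % 2 = 0 then 2 else 1 := by
  have hcard : (univ.filter fun i => x i ≠ r i).card = hammingDist x r := rfl
  by_cases h3 : 3 ≤ hammingDist x r
  · have hemp : (univ.filter fun b => hammingDist x (flip b r) ≤ 1) = ∅ := by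
      ext b
      simp only [mem_filter, mem_univ, true_and, notMem_empty, iff_false, not_le]
      rcases hammingDist_flip_cases x r b with hc | hc <;> omega
    rw [hemp]
    split_ifs <;> simp
  · have hsub : (univ.filter fun b => hammingDist x (flip b r) ≤ 1)
        ⊆ univ.filter fun i => x i ≠ r i := by
      intro b hb
      simp only [mem_filter, mem_univ, true_and] at hb ⊢
      intro heq
      have := hammingDist_flip_of_eq (x := x) (y := r) (b := b) heq
      omega
    have hle := card_le_card hsub
    split_ifs with hp <;> omega

section Strategy

variable {k : ℕ}

def wtp (v : Vtx n) : ℕ := hammingDist v z0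

def capN (p e : ℕ) : ℕ := if (p + e) % 2 = 1 then 2 else 1

lemma capN_add (p : ℕ) : capN p 0 + capN p 1 = 3 := by
  unfold capN
  split_ifs with h1 h2 h2 <;> omega

def epsFor (c : Fin k → Vtx n) : ℕ :=
  if (∑ i, capN (wtp (c i)) 0) ≤ (∑ i, capN (wtp (c i)) 1) then 0 else 1

lemma sum_capN_eps (c : Fin k → Vtx n) (h3k : 3 * k ≤ 2 * n - 1) (hn : 0 < n) :
    (∑ i, capN (wtp (c i)) (epsFor c)) ≤ n - 1 := by
  have hsum : (∑ i, capN (wtp (c i)) 0) + (∑ i, capN (wtp (c i)) 1) = 3 * k := by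
    rw [← Finset.sum_add_distrib]
    have : ∀ i : Fin k, capN (wtp (c i)) 0 + capN (wtp (c i)) 1 = 3 :=
      fun i => capN_add _
    rw [Finset.sum_congr rfl fun i _ => this i]
    simp [Finset.sum_const, mul_comm]
  unfold epsFor
  split_ifs with h <;> omega

def startSet (c : Fin k → Vtx n) : Finset (Vtx n) :=
  (pclass n (epsFor c)).filter fun r => ∀ i, 2 ≤ hammingDist (c i) r

lemma startSet_nonempty (hn : 0 < n) (c : Fin k → Vtx n) (h3k : 3 * k ≤ 2 * n - 1) :
    (startSet c).Nonempty := by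
  by_contra hne
  rw [Finset.not_nonempty_iff_eq_empty] at hne
  set e := epsFor c with he
  -- every element of the parity class is within distance 1 of some cop
  have hcov : pclass n e ⊆ univ.biUnion
      (fun i : Fin k => (pclass n e).filter fun r => hammingDist (c i) r ≤ 1) := by
    intro r hr
    have : r ∉ startSet c := by rw [hne]; exact notMem_empty r
    simp only [startSet, mem_filter, not_and, not_forall, not_le] at this
    obtain ⟨i, hi⟩ := this hr
    simp only [mem_biUnion, mem_filter]
    exact ⟨i, mem_univ i, hr, by omega⟩
  have hchain : (pclass n e).card
      ≤ ∑ i : Fin k, (if (wtp (c i) + e) % 2 = 1 then n else 1) :=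
    le_trans (card_le_card hcov) (le_trans card_biUnion_le
      (Finset.sum_le_sum fun i _ => card_start_bad hn (c i) e))
  have hsum_ite : (∑ i : Fin k, (if (wtp (c i) + e) % 2 = 1 then n else 1))
      = (univ.filter fun i : Fin k => (wtp (c i) + e) % 2 = 1).card * n
        + (univ.filter fun i : Fin k => ¬ (wtp (c i) + e) % 2 = 1).card := by
    rw [Finset.sum_ite]
    simp
  have hcap_ite : (∑ i : Fin k, capN (wtp (c i)) e)
      = (univ.filter fun i : Fin k => (wtp (c i) + e) % 2 = 1).card * 2
        + (univ.filter fun i : Fin k => ¬ (wtp (c i) + e) % 2 = 1).card := by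
    unfold capN
    rw [Finset.sum_ite]
    simp [mul_comm]
  have hkey := Finset.card_filter_add_card_filter_not
      (s := (univ : Finset (Fin k))) (p := fun i => (wtp (c i) + e) % 2 = 1)
  simp only [card_univ, Fintype.card_fin] at hkey
  have hcape := sum_capN_eps c h3k hn
  rw [← he] at hcape
  have harith := start_arith hn
      ((univ.filter fun i : Fin k => ¬ (wtp (c i) + e) % 2 = 1).card)
      ((univ.filter fun i : Fin k => (wtp (c i) + e) % 2 = 1).card) (by omega)
  rw [Nat.mul_comm n _] at harith
  have hpc := card_pclass hn e
  omega

noncomputable def goodSet (c : Fin k → Vtx n) (r : Vtx n) : Finset (Fin n) :=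
  univ.filter fun b => ∀ i, 2 ≤ hammingDist (c i) (flip b r)

lemma goodSet_nonempty (hn : 0 < n) (c' : Fin k → Vtx n) (r : Vtx n) (cap : Fin k → ℕ)
    (hcap : ∀ i, (univ.filter fun b => hammingDist (c' i) (flip b r) ≤ 1).card ≤ cap i)
    (hsum : ∑ i, cap i ≤ n - 1) : (goodSet c' r).Nonempty := by
  have hb : (univ.biUnion fun i : Fin k =>
      univ.filter fun b => hammingDist (c' i) (flip b r) ≤ 1).card ≤ n - 1 :=
    le_trans card_biUnion_le (le_trans (Finset.sum_le_sum fun i _ => hcap i) hsum)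
  have hlt : (univ.biUnion fun i : Fin k =>
      univ.filter fun b => hammingDist (c' i) (flip b r) ≤ 1).card
      < (univ : Finset (Fin n)).card := by
    simp only [card_univ, Fintype.card_fin]
    omega
  have hnonempty : ((univ : Finset (Fin n)) \ (univ.biUnion fun i : Fin k =>
      univ.filter fun b => hammingDist (c' i) (flip b r) ≤ 1)).Nonempty := by
    rw [← Finset.card_pos, Finset.card_sdiff_of_subset (Finset.subset_univ _)]
    omega
  obtain ⟨b, hbmem⟩ := hnonempty
  rw [Finset.mem_sdiff] at hbmem
  have hb2 := hbmem.2
  refine ⟨b, ?_⟩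
  simp only [goodSet, mem_filter, mem_univ, true_and]
  intro i
  by_contra hcon
  exact hb2 (Finset.mem_biUnion.mpr ⟨i, mem_univ i,
    by simp only [mem_filter, mem_univ, true_and]; omega⟩)

noncomputable def robberStrat (hn : 0 < n) (k : ℕ) :
    ActiveRobberStrategy (hypercube n) k where
  init := fun c => if h : (startSet c).Nonempty then h.choose else z0
  move := fun _ cfg =>
    flip (if h : (goodSet cfg.1 cfg.2).Nonempty then h.choose else ⟨0, hn⟩) cfg.2
  move_adj := fun _ c => adj_flip _ _

variable (cs : ActiveCopStrategy (hypercube n) k)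

noncomputable def thePlay (hn : 0 < n) (cs : ActiveCopStrategy (hypercube n) k) :
    ℕ → List (CRConfig (Vtx n) k) × CRConfig (Vtx n) k :=
  crPlay k cs.init (robberStrat hn k).init cs.move (robberStrat hn k).move

theorem invariant (hn : 0 < n) (h3k : 3 * k ≤ 2 * n - 1)
    (cs : ActiveCopStrategy (hypercube n) k) (t : ℕ) :
    (∀ i, 2 ≤ hammingDist ((thePlay hn cs t).2.1 i) ((thePlay hn cs t).2.2)) ∧
    (∀ i, hammingDist ((thePlay hn cs t).2.1 i) ((thePlay hn cs t).2.2) % 2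
        = (wtp (cs.init i) + epsFor cs.init) % 2) := by
  induction t with
  | zero =>
    have hne := startSet_nonempty hn cs.init h3k
    have hr0 : (thePlay hn cs 0).2.2 = hne.choose := by
      show (robberStrat hn k).init cs.init = _
      simp only [robberStrat, dif_pos hne]
    have hc0 : (thePlay hn cs 0).2.1 = cs.init := rfl
    have hspec := hne.choose_spec
    simp only [startSet, mem_filter] at hspec
    have hdist := hspec.2
    have hpar : hammingDist hne.choose z0 % 2 = epsFor cs.init % 2 := by
      have := hspec.1
      simp only [pclass, mem_filter, mem_univ, true_and] at this
      exact this
    constructor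
    · intro i
      rw [hr0, hc0]
      exact hdist i
    · intro i
      rw [hr0, hc0]
      have htri := hammingDist_parity_triangle (cs.init i) z0 hne.choose
      have hcomm : hammingDist z0 hne.choose = hammingDist hne.choose z0 :=
        hammingDist_comm _ _
      unfold wtp
      omega
  | succ t ih =>
    obtain ⟨ih1, ih2⟩ := ih
    set p := thePlay hn cs t with hp
    have hstep : thePlay hn cs (t+1)
        = (p.1 ++ [p.2], (cs.move p.1 p.2,
            (robberStrat hn k).move p.1 (cs.move p.1 p.2, p.2.2))) := rfl
    set c' : Fin k → Vtx n := cs.move p.1 p.2 with hc'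
    -- cop adjacency facts
    have hadj : ∀ i, ∃ a, c' i = flip a (p.2.1 i) := by
      intro i
      exact adj_iff_flip.mp (cs.move_adj p.1 p.2 i)
    have hd1 : ∀ i, 1 ≤ hammingDist (c' i) p.2.2 ∧
        hammingDist (c' i) p.2.2 % 2 = (wtp (cs.init i) + epsFor cs.init + 1) % 2 := by
      intro i
      obtain ⟨a, ha⟩ := hadj i
      rw [ha]
      have hcases := hammingDist_flip_left_cases (p.2.1 i) p.2.2 a
      have h1 := ih1 i
      have h2 := ih2 i
      constructor <;> omega
    -- robber's good move exists
    have hgood : (goodSet c' p.2.2).Nonempty := by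
      refine goodSet_nonempty hn c' p.2.2
        (fun i => capN (wtp (cs.init i)) (epsFor cs.init)) (fun i => ?_)
        (sum_capN_eps cs.init h3k hn)
      have hb := card_round_bad (c' i) p.2.2 (hd1 i).1
      have hpar := (hd1 i).2
      show _ ≤ capN (wtp (cs.init i)) (epsFor cs.init)
      unfold capN
      split_ifs with hcap2 <;> split_ifs at hb with hb2 <;> omega
    have hrmove : (thePlay hn cs (t+1)).2.2
        = flip hgood.choose p.2.2 := by
      rw [hstep]
      show (robberStrat hn k).move p.1 (c', p.2.2) = _
      simp only [robberStrat]
      rw [dif_pos hgood]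
    have hcnew : (thePlay hn cs (t+1)).2.1 = c' := by rw [hstep]
    have hbmem := hgood.choose_spec
    simp only [goodSet, mem_filter, mem_univ, true_and] at hbmem
    constructor
    · intro i
      rw [hrmove, hcnew]
      exact hbmem i
    · intro i
      rw [hrmove, hcnew]
      have hflip := hammingDist_flip_cases (c' i) p.2.2 hgood.choose
      have := (hd1 i).2
      omega

theorem no_capture (hn : 0 < n) (h3k : 3 * k ≤ 2 * n - 1)
    (cs : ActiveCopStrategy (hypercube n) k) :
    ¬ ActiveCapture cs (robberStrat hn k) := by
  rintro ⟨t, hcap | hcap⟩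
  · obtain ⟨i, hi⟩ := hcap
    have h2 := (invariant hn h3k cs t).1 i
    have : hammingDist ((thePlay hn cs t).2.1 i) ((thePlay hn cs t).2.2) = 0 :=
      hammingDist_eq_zero.mpr hi
    rw [show crPlay k cs.init (robberStrat hn k).init cs.move (robberStrat hn k).move t
      = thePlay hn cs t from rfl] at hi
    have : hammingDist ((thePlay hn cs t).2.1 i) ((thePlay hn cs t).2.2) = 0 :=
      hammingDist_eq_zero.mpr hi
    omega
  · obtain ⟨i, hi⟩ := hcap
    rw [show crPlay k cs.init (robberStrat hn k).init cs.move (robberStrat hn k).move t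
      = thePlay hn cs t from rfl] at hi
    have h2 := (invariant hn h3k cs t).1 i
    obtain ⟨a, ha⟩ := adj_iff_flip.mp
      (cs.move_adj (thePlay hn cs t).1 (thePlay hn cs t).2 i)
    rw [ha] at hi
    have : hammingDist ((thePlay hn cs t).2.1 i) ((thePlay hn cs t).2.2) = 1 := by
      rw [← hi]
      exact hammingDist_flip_self _ _
    omega

theorem lower_bound (hn : 0 < n) {m : ℕ} (h : ActiveCopsWin (hypercube n) m) :
    2 * n ≤ 3 * m := by
  by_contra hlt
  push_neg at hlt
  obtain ⟨cs, hcs⟩ := h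
  exact no_capture hn (by omega) cs (hcs (robberStrat hn m))

end Strategy

end AcopAux


namespace AcopUpper
open Finset AcopAux

variable {n : ℕ}

/-! ### Interval partition arithmetic -/

/-- start of cop `i`'s territory; `σ < 2` selects which index-parity class has odd type. -/
def tstart (n k σ i : ℕ) : ℕ := i + min ((i + 1 - σ) / 2) (n - k)

lemma tstart_zero (k σ : ℕ) (hσ : σ < 2) : tstart n k σ 0 = 0 := by
  unfold tstart; omega

lemma tstart_mono (k σ i : ℕ) :
    tstart n k σ i < tstart n k σ (i+1) ∧ tstart n k σ (i+1) ≤ tstart n k σ i + 2 := by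
  unfold tstart; omega

lemma tstart_last (k σ : ℕ) (hσ : σ < 2) (hk : k ≤ n) (hcov : n - k ≤ (k + 1 - σ) / 2) :
    tstart n k σ k = n := by
  unfold tstart; omega

lemma tsize_two (k σ i : ℕ) (hσ : σ < 2)
    (h2 : tstart n k σ (i+1) = tstart n k σ i + 2) : i % 2 = σ := by
  unfold tstart at h2; omega

/-- The territory of cop `i` as a finset of coordinates. -/
def terr (n k σ : ℕ) (i : ℕ) : Finset (Fin n) :=
  univ.filter fun x => tstart n k σ i ≤ x.val ∧ x.val < tstart n k σ (i+1)

lemma terr_card_le (k σ i : ℕ) :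
    (terr n k σ i).card ≤ tstart n k σ (i+1) - tstart n k σ i := by
  have h : (terr n k σ i).card ≤ (Finset.Ico (tstart n k σ i) (tstart n k σ (i+1))).card := by
    apply Finset.card_le_card_of_injOn (fun x => x.val)
    · intro x hx
      rw [Finset.mem_coe, terr, mem_filter] at hx
      simp [Finset.mem_Ico, hx.2.1, hx.2.2]
    · intro x _ y _ h
      exact Fin.val_injective h
  simpa [Nat.card_Ico] using h

lemma tstart_strictMono (k σ : ℕ) : StrictMono (tstart n k σ) := by
  apply strictMono_nat_of_lt_succ
  intro i
  exact (tstart_mono k σ i).1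

/-- every coordinate belongs to exactly one territory -/
lemma terr_owner (k σ : ℕ) (hσ : σ < 2) (hk : k ≤ n)
    (hcov : n - k ≤ (k + 1 - σ) / 2) (x : Fin n) :
    ∃! i, i < k ∧ x ∈ terr n k σ i := by
  have hlast : tstart n k σ k = n := tstart_last k σ hσ hk hcov
  have h0 : tstart n k σ 0 = 0 := tstart_zero k σ hσ
  set i := Nat.findGreatest (fun j => tstart n k σ j ≤ x.val) k with hi
  have hsp : tstart n k σ i ≤ x.val :=
    Nat.findGreatest_spec (P := fun j => tstart n k σ j ≤ x.val) (Nat.zero_le k) (by omega)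
  have hik : i ≤ k := Nat.findGreatest_le k
  have hiklt : i < k := by
    by_contra hcon
    have hik2 : i = k := by omega
    have hxk : tstart n k σ k ≤ x.val := hik2 ▸ hsp
    have := x.isLt
    omega
  have hnext : ¬ tstart n k σ (i+1) ≤ x.val :=
    Nat.findGreatest_is_greatest (P := fun j => tstart n k σ j ≤ x.val) (n := k) (by omega) (by omega)
  refine ⟨i, ⟨hiklt, by simp [terr, hsp]; omega⟩, ?_⟩
  rintro j ⟨hjk, hj⟩
  simp only [terr, mem_filter, mem_univ, true_and] at hj
  by_contra hne
  rcases Nat.lt_or_ge j i with h | h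
  · have : tstart n k σ (j+1) ≤ tstart n k σ i := (tstart_strictMono k σ).monotone (by omega)
    omega
  · have hij : i < j := by omega
    have : tstart n k σ (i+1) ≤ tstart n k σ j := (tstart_strictMono k σ).monotone (by omega)
    omega



/-! ### difference sets and the potential -/

def dset (x r : Vtx n) : Finset (Fin n) := univ.filter fun j => x j ≠ r j

lemma dset_card (x r : Vtx n) : (dset x r).card = hammingDist x r := rfl

lemma dset_eq_empty_iff {x r : Vtx n} : dset x r = ∅ ↔ x = r := by
  constructor
  · intro h
    have : hammingDist x r = 0 := by rw [← dset_card, h]; simp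
    exact hammingDist_eq_zero.mp this
  · rintro rfl; simp [dset]

lemma mem_dset {x r : Vtx n} {j : Fin n} : j ∈ dset x r ↔ x j ≠ r j := by
  simp [dset]

lemma dset_flip_right_not_mem {x r : Vtx n} {b : Fin n} (h : b ∉ dset x r) :
    dset x (AcopAux.flip b r) = insert b (dset x r) := by
  have hb : x b = r b := by simpa [mem_dset] using h
  exact filter_flip_eq x r b hb

lemma dset_flip_right_mem {x r : Vtx n} {b : Fin n} (h : b ∈ dset x r) :
    dset x (AcopAux.flip b r) = (dset x r).erase b := by
  have hb : x b ≠ r b := by simpa [mem_dset] using h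
  exact filter_flip_eq' x r b hb

lemma dset_comm (x r : Vtx n) : dset x r = dset r x := by
  ext j; simp [mem_dset]; tauto

lemma dset_flip_left_mem {x r : Vtx n} {a : Fin n} (h : a ∈ dset x r) :
    dset (AcopAux.flip a x) r = (dset x r).erase a := by
  rw [dset_comm, dset_flip_right_mem (by rwa [← dset_comm]), dset_comm]

lemma dset_flip_left_not_mem {x r : Vtx n} {a : Fin n} (h : a ∉ dset x r) :
    dset (AcopAux.flip a x) r = insert a (dset x r) := by
  rw [dset_comm, dset_flip_right_not_mem (by rwa [← dset_comm]), dset_comm]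

lemma flip_eq_of_dset_singleton {x r : Vtx n} {a : Fin n} (h : dset x r = {a}) :
    AcopAux.flip a x = r := by
  funext j
  rcases eq_or_ne j a with rfl | hj
  · have : x j ≠ r j := by
      have : j ∈ dset x r := by rw [h]; exact mem_singleton_self _
      simpa [mem_dset] using this
    rw [flip_self]
    revert this; cases x j <;> cases r j <;> simp
  · have : j ∉ dset x r := by rw [h]; simpa using hj
    have hxr : x j = r j := by simpa [mem_dset] using this
    rw [flip_ne hj, hxr]

/-- potential of a single cop -/
def phi (th : Finset (Fin n)) (x r : Vtx n) : ℕ :=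
  2 * ((dset x r) \ th).card + (th \ (dset x r)).card

lemma phi_cop_step {th : Finset (Fin n)} {x r : Vtx n} {a : Fin n}
    (ha : a ∈ (dset x r) \ th) :
    phi th (AcopAux.flip a x) r + 2 = phi th x r := by
  obtain ⟨haD, haT⟩ := Finset.mem_sdiff.mp ha
  unfold phi
  rw [dset_flip_left_mem haD]
  have h1 : (dset x r).erase a \ th = ((dset x r) \ th).erase a := by
    ext j
    simp only [mem_sdiff, mem_erase]
    tauto
  have h2 : th \ (dset x r).erase a = th \ (dset x r) := by
    ext j
    simp only [mem_sdiff, mem_erase]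
    constructor
    · rintro ⟨hth, hnd⟩
      refine ⟨hth, fun hd => hnd ⟨?_, hd⟩⟩
      rintro rfl; exact haT hth
    · rintro ⟨hth, hnd⟩
      exact ⟨hth, fun hd => hnd hd.2⟩
  rw [h1, h2]
  have := Finset.card_erase_add_one ha
  omega

lemma sdiff_erase_of_not_mem' {α : Type*} [DecidableEq α] {s t : Finset α} {b : α}
    (hb : b ∉ t) : t \ s.erase b = t \ s := by
  ext j
  simp only [Finset.mem_sdiff, Finset.mem_erase]
  constructor
  · rintro ⟨hjt, hnd⟩
    refine ⟨hjt, fun hd => hnd ⟨?_, hd⟩⟩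
    rintro rfl; exact hb hjt
  · rintro ⟨hjt, hnd⟩
    exact ⟨hjt, fun hd => hnd hd.2⟩

lemma phi_robber_step (th : Finset (Fin n)) (x r : Vtx n) (b : Fin n) :
    phi th x (AcopAux.flip b r) ≤ phi th x r + (if b ∈ th then 1 else 2) := by
  unfold phi
  by_cases hb : b ∈ dset x r
  · rw [dset_flip_right_mem hb]
    by_cases ht : b ∈ th
    · have h1 : (dset x r).erase b \ th = (dset x r) \ th := by
        ext j; simp only [mem_sdiff, mem_erase]
        constructor
        · rintro ⟨⟨_, hj⟩, hnt⟩; exact ⟨hj, hnt⟩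
        · rintro ⟨hj, hnt⟩
          exact ⟨⟨fun h => hnt (h ▸ ht), hj⟩, hnt⟩
      have h2 : th \ (dset x r).erase b ⊆ insert b (th \ (dset x r)) := by
        intro j hj
        simp only [mem_sdiff, mem_erase] at hj
        simp only [mem_insert, mem_sdiff]
        by_cases hjb : j = b
        · exact Or.inl hjb
        · exact Or.inr ⟨hj.1, fun hd => hj.2 ⟨hjb, hd⟩⟩
      have h3 := card_le_card h2
      have h4 := Finset.card_insert_le b (th \ (dset x r))
      rw [h1]
      simp only [if_pos ht]
      omega
    · have h1 : (dset x r).erase b \ th ⊆ (dset x r) \ th := by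
        intro j hj
        simp only [mem_sdiff, mem_erase] at hj ⊢
        exact ⟨hj.1.2, hj.2⟩
      have h2 := sdiff_erase_of_not_mem' (s := dset x r) ht
      have h3 := card_le_card h1
      rw [h2]
      simp only [if_neg ht]
      omega
  · rw [dset_flip_right_not_mem hb]
    by_cases ht : b ∈ th
    · have h1 : insert b (dset x r) \ th = (dset x r) \ th := by
        ext j; simp only [mem_sdiff, mem_insert]
        constructor
        · rintro ⟨hj | hj, hnt⟩
          · exact absurd (hj ▸ ht) hnt
          · exact ⟨hj, hnt⟩
        · rintro ⟨hj, hnt⟩; exact ⟨Or.inr hj, hnt⟩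
      have h2 : th \ insert b (dset x r) ⊆ th \ (dset x r) := by
        intro j hj
        simp only [mem_sdiff, mem_insert] at hj ⊢
        exact ⟨hj.1, fun hd => hj.2 (Or.inr hd)⟩
      have h3 := card_le_card h2
      rw [h1]
      simp only [if_pos ht]
      omega
    · have h1 : insert b (dset x r) \ th ⊆ insert b ((dset x r) \ th) := by
        intro j hj
        simp only [mem_sdiff, mem_insert] at hj ⊢
        rcases hj.1 with hj1 | hj1
        · exact Or.inl hj1
        · exact Or.inr ⟨hj1, hj.2⟩
      have h2 : th \ insert b (dset x r) ⊆ th \ (dset x r) := by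
        intro j hj
        simp only [mem_sdiff, mem_insert] at hj ⊢
        exact ⟨hj.1, fun hd => hj.2 (Or.inr hd)⟩
      have h3 := card_le_card h1
      have h4 := card_le_card h2
      have h5 := Finset.card_insert_le b ((dset x r) \ th)
      simp only [if_neg ht]
      omega

/-- The cop's move: capture if adjacent-with-right-AcopAux.flip possible, otherwise clear junk. -/
noncomputable def copMove (hn : 0 < n) (th : Finset (Fin n)) (x r : Vtx n) : Vtx n :=
  if h1 : ∃ a, dset x r = {a} then AcopAux.flip h1.choose x
  else if h2 : ((dset x r) \ th).Nonempty then AcopAux.flip h2.choose x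
  else AcopAux.flip ⟨0, hn⟩ x

lemma copMove_is_flip (hn : 0 < n) (th : Finset (Fin n)) (x r : Vtx n) :
    ∃ a, copMove hn th x r = AcopAux.flip a x := by
  unfold copMove
  split_ifs <;> exact ⟨_, rfl⟩

lemma copMove_capture (hn : 0 < n) (th : Finset (Fin n)) {x r : Vtx n}
    (h : (dset x r).card = 1) : copMove hn th x r = r := by
  obtain ⟨a, ha⟩ := Finset.card_eq_one.mp h
  have hex : ∃ a, dset x r = {a} := ⟨a, ha⟩
  unfold copMove
  rw [dif_pos hex]
  exact flip_eq_of_dset_singleton hex.choose_spec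

lemma copMove_junk (hn : 0 < n) (th : Finset (Fin n)) {x r : Vtx n}
    (h1 : (dset x r).card ≠ 1) (h2 : ((dset x r) \ th).Nonempty) :
    copMove hn th x r = AcopAux.flip h2.choose x ∧ h2.choose ∈ (dset x r) \ th := by
  have hex : ¬ ∃ a, dset x r = {a} := by
    rintro ⟨a, ha⟩
    exact h1 (by rw [ha]; simp)
  unfold copMove
  rw [dif_neg hex, dif_pos h2]
  exact ⟨rfl, h2.choose_spec⟩


/-! ### the cop strategy and the main capture theorem -/

def kk (n : ℕ) : ℕ := (2 * n + 2) / 3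

noncomputable def copInit (hn : 0 < n) : Fin (kk n) → Vtx n :=
  fun i => if i.val % 2 = 1 then AcopAux.flip ⟨0, hn⟩ z0 else z0

def sigOf (r0 : Vtx n) : ℕ := (hammingDist r0 z0 + 1) % 2

noncomputable def copStrat (hn : 0 < n) : ActiveCopStrategy (hypercube n) (kk n) where
  init := copInit hn
  move := fun h c i =>
    copMove hn (terr n (kk n) (sigOf ((h.headD c).2)) i.val) (c.1 i) c.2
  move_adj := fun h c i => by
    obtain ⟨a, ha⟩ := copMove_is_flip hn
      (terr n (kk n) (sigOf ((h.headD c).2)) i.val) (c.1 i) c.2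
    show (hypercube n).Adj (c.1 i)
      (copMove hn (terr n (kk n) (sigOf ((h.headD c).2)) i.val) (c.1 i) c.2)
    rw [ha]; exact adj_flip _ _

theorem upper_bound' (hn : 0 < n) : ActiveCopsWin (hypercube n) (kk n) := by
  classical
  refine ⟨copStrat hn, fun rs => ?_⟩
  by_contra hnc
  unfold ActiveCapture crCaptures at hnc
  push_neg at hnc
  have hk1 : 1 ≤ kk n := by unfold kk; omega
  have hkn : kk n ≤ n := by unfold kk; omega
  set cs := copStrat hn with hcs
  set r0 := rs.init cs.init with hr0def
  set σ := sigOf r0 with hsig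
  have hσ2 : σ < 2 := by rw [hsig]; unfold sigOf; omega
  have hcov : n - kk n ≤ (kk n + 1 - σ) / 2 := by
    rw [hsig]; unfold kk sigOf; omega
  set Θ : Fin (kk n) → Finset (Fin n) := fun i => terr n (kk n) σ i.val with hΘ
  set play := crPlay (kk n) cs.init rs.init cs.move rs.move with hplay
  -- basic play structure
  have hplay0 : play 0 = ([], (cs.init, r0)) := rfl
  have hstep1 : ∀ t, (play (t+1)).2.1 = cs.move (play t).1 (play t).2 := fun t => rfl
  have hstep2 : ∀ t, (play (t+1)).2.2
      = rs.move (play t).1 (cs.move (play t).1 (play t).2, (play t).2.2) := fun t => rfl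
  have hhiststep : ∀ t, (play (t+1)).1 = (play t).1 ++ [(play t).2] := fun t => rfl
  -- the first configuration heads every nonempty history
  have hhead : ∀ t, ((play t).1).headD (play t).2 = (cs.init, r0) := by
    intro t
    induction t with
    | zero => rw [hplay0]; rfl
    | succ t ih =>
      rw [hhiststep]
      cases hl : (play t).1 with
      | nil =>
        rw [hl] at ih
        simp only [List.nil_append, List.headD_cons]
        simpa using ih
      | cons a l =>
        rw [hl] at ih
        simp only [List.cons_append, List.headD_cons]
        simpa using ih
  -- unfolding the cop move along the play
  have hmove : ∀ t i, cs.move (play t).1 (play t).2 i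
      = copMove hn (Θ i) ((play t).2.1 i) ((play t).2.2) := by
    intro t i
    show copMove hn (terr n (kk n) (sigOf (((play t).1.headD (play t).2).2)) i.val) _ _ = _
    rw [hhead t]
  -- robber moves are flips
  have hrob : ∀ t, ∃ b, (play (t+1)).2.2 = AcopAux.flip b ((play t).2.2) := by
    intro t
    have := rs.move_adj (play t).1 (cs.move (play t).1 (play t).2, (play t).2.2)
    obtain ⟨b, hb⟩ := adj_iff_flip.mp this
    exact ⟨b, by rw [hstep2]; exact hb⟩
  -- no capture ever: distance facts
  have hncap : ∀ t i, ((play t).2.1 i) ≠ ((play t).2.2) ∧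
      (dset ((play t).2.1 i) ((play t).2.2)).card ≠ 1 := by
    intro t i
    obtain ⟨h1, h2⟩ := hnc t
    constructor
    · exact fun h => (h1 i) h
    · intro hcard
      apply h2 i
      rw [hmove t i]
      exact copMove_capture hn (Θ i) hcard
  -- parity invariant
  have hpar : ∀ t i, (dset ((play t).2.1 i) ((play t).2.2)).card % 2
      = (hammingDist (cs.init i) r0) % 2 := by
    intro t
    induction t with
    | zero => intro i; rw [hplay0]; rfl
    | succ t ih =>
      intro i
      obtain ⟨b, hb⟩ := hrob t
      have hcflip : ∃ a, (play (t+1)).2.1 i = AcopAux.flip a ((play t).2.1 i) := by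
        rw [hstep1, hmove t i]
        exact copMove_is_flip hn _ _ _
      obtain ⟨a, ha⟩ := hcflip
      rw [ha, hb]
      have h3 := ih i
      rw [dset_card] at h3 ⊢
      have h1 := hammingDist_flip_left_cases ((play t).2.1 i) ((play t).2.2) a
      have h2 := hammingDist_flip_cases (AcopAux.flip a ((play t).2.1 i)) ((play t).2.2) b
      omega
  -- type parity from initial positions
  have htype : ∀ i : Fin (kk n), (hammingDist (cs.init i) r0) % 2
      = (hammingDist r0 z0 + i.val) % 2 := by
    intro i
    show (hammingDist (copInit hn i) r0) % 2 = _
    unfold copInit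
    by_cases hi : i.val % 2 = 1
    · rw [if_pos hi]
      have := hammingDist_flip_left_cases z0 r0 ⟨0, hn⟩
      have hc : hammingDist z0 r0 = hammingDist r0 z0 := hammingDist_comm _ _
      omega
    · rw [if_neg hi]
      have hc : hammingDist z0 r0 = hammingDist r0 z0 := hammingDist_comm _ _
      omega
  -- junk is always nonempty
  have hjunk : ∀ t i, ((dset ((play t).2.1 i) ((play t).2.2)) \ Θ i).Nonempty := by
    intro t i
    rw [Finset.sdiff_nonempty]
    intro hsub
    have hle : (dset ((play t).2.1 i) ((play t).2.2)).card ≤ (Θ i).card :=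
      card_le_card hsub
    have hts := terr_card_le (n := n) (kk n) σ i.val
    have htm := tstart_mono (n := n) (kk n) σ i.val
    have hcard0 : (dset ((play t).2.1 i) ((play t).2.2)).card ≠ 0 := by
      intro h
      exact (hncap t i).1 (dset_eq_empty_iff.mp (Finset.card_eq_zero.mp h))
    have hcard1 := (hncap t i).2
    have hΘi : (Θ i).card ≤ tstart n (kk n) σ (i.val+1) - tstart n (kk n) σ i.val := hts
    -- so the dset has exactly 2 elements and the territory has size 2
    have hsize2 : tstart n (kk n) σ (i.val+1) = tstart n (kk n) σ i.val + 2 := by omega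
    have hparΘ := tsize_two (n := n) (kk n) σ i.val hσ2 hsize2
    have hp := hpar t i
    have ht2 := htype i
    rw [hsig] at hparΘ
    unfold sigOf at hparΘ
    omega
  -- per-round potential decrease
  set P : ℕ → ℕ := fun t => ∑ i : Fin (kk n),
    phi (Θ i) ((play t).2.1 i) ((play t).2.2) with hP
  have howner : ∀ b : Fin n,
      (univ.filter fun i : Fin (kk n) => b ∈ Θ i).card = 1 := by
    intro b
    obtain ⟨j, ⟨hjk, hjmem⟩, hjun⟩ := terr_owner (n := n) (kk n) σ hσ2 hkn hcov b
    rw [Finset.card_eq_one]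
    refine ⟨⟨j, hjk⟩, ?_⟩
    ext i
    simp only [mem_filter, mem_univ, true_and, mem_singleton]
    constructor
    · intro hi
      have := hjun i.val ⟨i.isLt, hi⟩
      exact Fin.ext this
    · rintro rfl
      exact hjmem
  have hPdec : ∀ t, P (t+1) + 1 ≤ P t := by
    intro t
    obtain ⟨b, hb⟩ := hrob t
    -- cop step
    have hcop : ∀ i : Fin (kk n),
        phi (Θ i) ((play (t+1)).2.1 i) ((play t).2.2) + 2
          = phi (Θ i) ((play t).2.1 i) ((play t).2.2) := by
      intro i
      obtain ⟨heq, hmem⟩ := copMove_junk hn (Θ i) (hncap t i).2 (hjunk t i)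
      rw [hstep1, hmove t i, heq]
      exact phi_cop_step hmem
    have hrobstep : ∀ i : Fin (kk n),
        phi (Θ i) ((play (t+1)).2.1 i) ((play (t+1)).2.2)
          ≤ phi (Θ i) ((play (t+1)).2.1 i) ((play t).2.2)
            + (if b ∈ Θ i then 1 else 2) := by
      intro i
      rw [hb]
      exact phi_robber_step _ _ _ _
    have hsum1 : P (t+1) ≤ (∑ i : Fin (kk n),
        phi (Θ i) ((play (t+1)).2.1 i) ((play t).2.2))
        + (∑ i : Fin (kk n), (if b ∈ Θ i then 1 else 2)) := by
      rw [hP, ← Finset.sum_add_distrib]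
      exact Finset.sum_le_sum fun i _ => hrobstep i
    have hsum2 : (∑ i : Fin (kk n), (if b ∈ Θ i then 1 else 2)) = 2 * kk n - 1 := by
      rw [Finset.sum_ite]
      simp only [Finset.sum_const, smul_eq_mul, mul_one]
      have h1 := howner b
      have h2 := Finset.card_filter_add_card_filter_not
        (s := (univ : Finset (Fin (kk n)))) (p := fun i => b ∈ Θ i)
      simp only [card_univ, Fintype.card_fin] at h2
      omega
    have hsum3 : (∑ i : Fin (kk n),
        phi (Θ i) ((play (t+1)).2.1 i) ((play t).2.2)) + 2 * kk n = P t := by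
      show _ = ∑ i : Fin (kk n), phi (Θ i) ((play t).2.1 i) ((play t).2.2)
      have : ∀ i : Fin (kk n), i ∈ (univ : Finset (Fin (kk n))) →
          phi (Θ i) ((play t).2.1 i) ((play t).2.2)
          = phi (Θ i) ((play (t+1)).2.1 i) ((play t).2.2) + 2 :=
        fun i _ => (hcop i).symm
      rw [Finset.sum_congr rfl this, Finset.sum_add_distrib]
      simp [Finset.sum_const, mul_comm]
    omega
  -- conclude: potential cannot decrease forever
  have hPbound : ∀ t, P t + t ≤ P 0 := by
    intro t
    induction t with
    | zero => omega
    | succ t ih =>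
      have := hPdec t
      omega
  have := hPbound (P 0 + 1)
  omega

end AcopUpper


namespace AcopAuxMain
open AcopAux

theorem upper_bound {n : ℕ} (hn : 0 < n) :
    ActiveCopsWin (hypercube n) ((2 * n + 2) / 3) :=
  AcopUpper.upper_bound' hn

end AcopAuxMain

/-- For every positive integer `n`, the fully active cop number of the
hypercube `Q_n` equals `⌈2n/3⌉`. -/
theorem acop_hypercube (n : ℕ) (hn : 0 < n) :
    acop (hypercube n) = (2 * n + 2) / 3 := by
  have hupper := AcopAuxMain.upper_bound hn
  have hlower : ∀ m ∈ {m | ActiveCopsWin (hypercube n) m}, (2 * n + 2) / 3 ≤ m := by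
    intro m hm
    have := AcopAux.lower_bound hn hm
    omega
  exact le_antisymm (Nat.sInf_le hupper) (le_csInf ⟨_, hupper⟩ hlower)
end
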